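/- arXiv:1901.06686 — 6 statements merged into one kernel-verified Lean document; each statement's English description precedes it below -/
import Mathlib

section
/- Assume (H1). Let (u, v1, v2, h) be a classical solution of the FBP on [0, T] with admissible initial data (u0, h0). Then sup_{0 ≤ x ≤ h(t)} u(t,x) ≤ max{ sup_{[0,h0]} u0, M0 } for every t ∈ [0, T]. -/
open Set Filter Topology

/-- positive part of a real number -/
noncomputable def pp (x : ℝ) : ℝ := max x 0

/-- the constant M from the paper -/
noncomputable def Mconst (χ1 χ2 lam1 lam2 μ1 μ2 : ℝ) : ℝ :=
  min ((1 / lam2) * (pp (χ2 * μ2 * lam2 - χ1 * μ1 * lam1) + χ1 * μ1 * pp (lam1 - lam2)))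
      ((1 / lam1) * (pp (χ2 * μ2 * lam2 - χ1 * μ1 * lam1) + χ2 * μ2 * pp (lam1 - lam2)))

/-- the constant K from the paper -/
noncomputable def Kconst (χ1 χ2 lam1 lam2 μ1 μ2 : ℝ) : ℝ :=
  min ((1 / lam2) * (|χ1 * μ1 * lam1 - χ2 * μ2 * lam2| + χ1 * μ1 * |lam1 - lam2|))
      ((1 / lam1) * (|χ1 * μ1 * lam1 - χ2 * μ2 * lam2| + χ2 * μ2 * |lam1 - lam2|))

/-- infimum of a coefficient function over ℝ × [0,∞) -/
noncomputable def infOn (f : ℝ → ℝ → ℝ) : ℝ := sInf {y | ∃ t x, 0 ≤ x ∧ f t x = y}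

/-- supremum of a coefficient function over ℝ × [0,∞) -/
noncomputable def supOn (f : ℝ → ℝ → ℝ) : ℝ := sSup {y | ∃ t x, 0 ≤ x ∧ f t x = y}

/-- the constant M0 from the paper -/
noncomputable def M0const (χ1 χ2 lam1 lam2 μ1 μ2 : ℝ) (a b : ℝ → ℝ → ℝ) : ℝ :=
  supOn a / (infOn b + χ2 * μ2 - χ1 * μ1 - Mconst χ1 χ2 lam1 lam2 μ1 μ2)

/-- the constant m0 from the paper -/
noncomputable def m0const (χ1 χ2 lam1 lam2 μ1 μ2 : ℝ) (a b : ℝ → ℝ → ℝ) : ℝ :=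
  infOn a * (infOn b - (1 + supOn a / infOn a) * χ1 * μ1 + χ2 * μ2 - Mconst χ1 χ2 lam1 lam2 μ1 μ2) /
    ((infOn b - χ1 * μ1 + χ2 * μ2 - Mconst χ1 χ2 lam1 lam2 μ1 μ2) * (supOn b - χ1 * μ1 + χ2 * μ2))

/-- a bounded C¹ coefficient function on ℝ × [0,∞) with positive infimum -/
structure Coeff (f : ℝ → ℝ → ℝ) : Prop where
  bdd : ∃ C, ∀ t x, 0 ≤ x → |f t x| ≤ C
  smooth : ContDiffOn ℝ 1 (Function.uncurry f) (univ ×ˢ Ici 0)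
  inf_pos : 0 < infOn f

/-- admissible initial data for the free boundary problem -/
structure AdmissibleInit (u0 : ℝ → ℝ) (h0 : ℝ) : Prop where
  h0_pos : 0 < h0
  smooth : ContDiffOn ℝ 2 u0 (Icc 0 h0)
  nonneg : ∀ x ∈ Icc 0 h0, 0 ≤ u0 x
  neumann : deriv u0 0 = 0
  dirichlet : u0 h0 = 0

/-- A classical solution of the free boundary problem (FBP) on the time interval `J`,
with `Jr ⊆ J` the set of times strictly above the initial time (where the parabolic
regularity and the parabolic equation are required). -/
structure IsSol (ν χ1 χ2 lam1 lam2 μ1 μ2 : ℝ) (a b : ℝ → ℝ → ℝ)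
    (J Jr : Set ℝ) (u v1 v2 : ℝ → ℝ → ℝ) (h : ℝ → ℝ) : Prop where
  h_pos : ∀ t ∈ J, 0 < h t
  /-- h is C¹ and satisfies the Stefan condition h'(t) = -ν uₓ(t,h(t)) -/
  h_deriv : ∀ t ∈ J, HasDerivAt h (-(ν * deriv (u t) (h t))) t
  h_deriv_cont : ContinuousOn (deriv h) J
  u_nonneg : ∀ t ∈ J, ∀ x ∈ Icc 0 (h t), 0 ≤ u t x
  v1_nonneg : ∀ t ∈ J, ∀ x ∈ Icc 0 (h t), 0 ≤ v1 t x
  v2_nonneg : ∀ t ∈ J, ∀ x ∈ Icc 0 (h t), 0 ≤ v2 t x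
  u_cont : ContinuousOn (Function.uncurry u) {p : ℝ × ℝ | p.1 ∈ J ∧ p.2 ∈ Icc 0 (h p.1)}
  v1_cont : ContinuousOn (Function.uncurry v1) {p : ℝ × ℝ | p.1 ∈ J ∧ p.2 ∈ Icc 0 (h p.1)}
  v2_cont : ContinuousOn (Function.uncurry v2) {p : ℝ × ℝ | p.1 ∈ J ∧ p.2 ∈ Icc 0 (h p.1)}
  u_diff_x : ∀ t ∈ Jr, ∀ x ∈ Icc 0 (h t),
    DifferentiableAt ℝ (u t) x ∧ DifferentiableAt ℝ (deriv (u t)) x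
  u_diff_t : ∀ t ∈ Jr, ∀ x ∈ Icc 0 (h t), DifferentiableAt ℝ (fun s => u s x) t
  v1_diff_x : ∀ t ∈ J, ∀ x ∈ Icc 0 (h t),
    DifferentiableAt ℝ (v1 t) x ∧ DifferentiableAt ℝ (deriv (v1 t)) x
  v2_diff_x : ∀ t ∈ J, ∀ x ∈ Icc 0 (h t),
    DifferentiableAt ℝ (v2 t) x ∧ DifferentiableAt ℝ (deriv (v2 t)) x
  ux_cont : ContinuousOn (fun p : ℝ × ℝ => deriv (u p.1) p.2)
    {p : ℝ × ℝ | p.1 ∈ Jr ∧ p.2 ∈ Icc 0 (h p.1)}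
  uxx_cont : ContinuousOn (fun p : ℝ × ℝ => deriv (deriv (u p.1)) p.2)
    {p : ℝ × ℝ | p.1 ∈ Jr ∧ p.2 ∈ Icc 0 (h p.1)}
  ut_cont : ContinuousOn (fun p : ℝ × ℝ => deriv (fun s => u s p.2) p.1)
    {p : ℝ × ℝ | p.1 ∈ Jr ∧ p.2 ∈ Icc 0 (h p.1)}
  v1x_cont : ContinuousOn (fun p : ℝ × ℝ => deriv (v1 p.1) p.2)
    {p : ℝ × ℝ | p.1 ∈ J ∧ p.2 ∈ Icc 0 (h p.1)}
  v2x_cont : ContinuousOn (fun p : ℝ × ℝ => deriv (v2 p.1) p.2)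
    {p : ℝ × ℝ | p.1 ∈ J ∧ p.2 ∈ Icc 0 (h p.1)}
  /-- the parabolic equation for u -/
  pde : ∀ t ∈ Jr, ∀ x ∈ Ioo 0 (h t),
    deriv (fun s => u s x) t
      = deriv (deriv (u t)) x
        - χ1 * deriv (fun y => u t y * deriv (v1 t) y) x
        + χ2 * deriv (fun y => u t y * deriv (v2 t) y) x
        + u t x * (a t x - b t x * u t x)
  /-- the elliptic equation for v1 -/
  v1_ode : ∀ t ∈ J, ∀ x ∈ Ioo 0 (h t),
    deriv (deriv (v1 t)) x - lam1 * v1 t x + μ1 * u t x = 0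
  /-- the elliptic equation for v2 -/
  v2_ode : ∀ t ∈ J, ∀ x ∈ Ioo 0 (h t),
    deriv (deriv (v2 t)) x - lam2 * v2 t x + μ2 * u t x = 0
  /-- boundary conditions at x = 0 -/
  bc0 : ∀ t ∈ J, deriv (u t) 0 = 0 ∧ deriv (v1 t) 0 = 0 ∧ deriv (v2 t) 0 = 0
  /-- boundary conditions at x = h(t) -/
  bch : ∀ t ∈ J, u t (h t) = 0 ∧ deriv (v1 t) (h t) = 0 ∧ deriv (v2 t) (h t) = 0



section Helpers

lemma pos_right_of_deriv_pos {g : ℝ → ℝ} {z c : ℝ} (hg : HasDerivAt g c z) (hc : 0 < c)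
    (hgz : g z = 0) : ∀ᶠ x in 𝓝[>] z, 0 < g x := by
  have hs := hasDerivAt_iff_tendsto_slope.1 hg
  have hs' : Tendsto (slope g z) (𝓝[>] z) (𝓝 c) :=
    hs.mono_left (nhdsWithin_mono _ (fun x hx => ne_of_gt hx))
  have hev : ∀ᶠ x in 𝓝[>] z, 0 < slope g z x := hs'.eventually (eventually_gt_nhds hc)
  filter_upwards [hev, self_mem_nhdsWithin] with x hx hxz
  rw [slope_def_field, div_pos_iff] at hx
  rcases hx with ⟨h1, _⟩ | ⟨_, h2⟩
  · linarith
  · have : (0:ℝ) < x - z := sub_pos.2 hxz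
    linarith
lemma neg_left_of_deriv_pos {g : ℝ → ℝ} {z c : ℝ} (hg : HasDerivAt g c z) (hc : 0 < c)
    (hgz : g z = 0) : ∀ᶠ x in 𝓝[<] z, g x < 0 := by
  have hs := hasDerivAt_iff_tendsto_slope.1 hg
  have hs' : Tendsto (slope g z) (𝓝[<] z) (𝓝 c) :=
    hs.mono_left (nhdsWithin_mono _ (fun x hx => ne_of_lt hx))
  have hev : ∀ᶠ x in 𝓝[<] z, 0 < slope g z x := hs'.eventually (eventually_gt_nhds hc)
  filter_upwards [hev, self_mem_nhdsWithin] with x hx hxz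
  rw [slope_def_field, div_pos_iff] at hx
  rcases hx with ⟨h1, h2⟩ | ⟨h1, _⟩
  · have : x - z < 0 := sub_neg.2 hxz
    linarith
  · linarith

/-- second derivative test at a max point, looking right -/
lemma secondDeriv_nonpos_right {f f' : ℝ → ℝ} {z β c : ℝ} (hzβ : z < β)
    (hf : ∀ x ∈ Icc z β, HasDerivAt f (f' x) x) (hf'z : f' z = 0)
    (hmax : ∀ x ∈ Icc z β, f x ≤ f z)
    (h2 : HasDerivAt f' c z) : c ≤ 0 := by
  by_contra hcpos
  push_neg at hcpos
  have hev := pos_right_of_deriv_pos h2 hcpos hf'z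
  rw [eventually_nhdsWithin_iff] at hev
  obtain ⟨ε, hε, hball⟩ := Metric.eventually_nhds_iff_ball.1 hev
  set w := min (z + ε / 2) β with hw
  have hzw : z < w := lt_min (by linarith) hzβ
  have hwβ : w ≤ β := min_le_right _ _
  have hsub : Icc z w ⊆ Icc z β := Icc_subset_Icc le_rfl hwβ
  have hmono : StrictMonoOn f (Icc z w) := by
    apply strictMonoOn_of_deriv_pos (convex_Icc _ _)
    · exact fun x hx => ((hf x (hsub hx)).continuousAt).continuousWithinAt
    · intro x hx
      rw [interior_Icc] at hx
      rw [(hf x (hsub (Ioo_subset_Icc_self hx))).deriv]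
      apply hball x _ hx.1
      rw [Real.ball_eq_Ioo]
      constructor
      · linarith [hx.1]
      · have : x < w := hx.2
        have : w ≤ z + ε / 2 := min_le_left _ _
        linarith
  have := hmono (left_mem_Icc.2 hzw.le) (right_mem_Icc.2 hzw.le) hzw
  have := hmax w (hsub (right_mem_Icc.2 hzw.le))
  linarith

/-- second derivative test at a max point, looking left -/
lemma secondDeriv_nonpos_left {f f' : ℝ → ℝ} {z α c : ℝ} (hαz : α < z)
    (hf : ∀ x ∈ Icc α z, HasDerivAt f (f' x) x) (hf'z : f' z = 0)
    (hmax : ∀ x ∈ Icc α z, f x ≤ f z)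
    (h2 : HasDerivAt f' c z) : c ≤ 0 := by
  by_contra hcpos
  push_neg at hcpos
  have hev := neg_left_of_deriv_pos h2 hcpos hf'z
  rw [eventually_nhdsWithin_iff] at hev
  obtain ⟨ε, hε, hball⟩ := Metric.eventually_nhds_iff_ball.1 hev
  set w := max (z - ε / 2) α with hw
  have hzw : w < z := max_lt (by linarith) hαz
  have hwα : α ≤ w := le_max_right _ _
  have hsub : Icc w z ⊆ Icc α z := Icc_subset_Icc hwα le_rfl
  have hanti : StrictAntiOn f (Icc w z) := by
    apply strictAntiOn_of_deriv_neg (convex_Icc _ _)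
    · exact fun x hx => ((hf x (hsub hx)).continuousAt).continuousWithinAt
    · intro x hx
      rw [interior_Icc] at hx
      rw [(hf x (hsub (Ioo_subset_Icc_self hx))).deriv]
      apply hball x _ hx.2
      rw [Real.ball_eq_Ioo]
      have : z - ε / 2 ≤ w := le_max_left _ _
      constructor
      · linarith [hx.1]
      · linarith [hx.2]
  have := hanti (left_mem_Icc.2 hzw.le) (right_mem_Icc.2 hzw.le) hzw
  have := hmax w (hsub (left_mem_Icc.2 hzw.le))
  linarith

/-- two continuous functions on Icc that agree on Ioo agree on Icc -/
lemma eqOn_Icc_of_eqOn_Ioo {Φ Ψ : ℝ → ℝ} {α β : ℝ} (hαβ : α < β)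
    (hΦ : ContinuousOn Φ (Icc α β)) (hΨ : ContinuousOn Ψ (Icc α β))
    (heq : ∀ x ∈ Ioo α β, Φ x = Ψ x) : ∀ x ∈ Icc α β, Φ x = Ψ x := by
  intro x hx
  have hxcl : x ∈ closure (Ioo α β) := by rwa [closure_Ioo hαβ.ne]
  have hne : (𝓝[Ioo α β] x).NeBot := mem_closure_iff_nhdsWithin_neBot.1 hxcl
  have h1 : Tendsto Φ (𝓝[Ioo α β] x) (𝓝 (Φ x)) :=
    (hΦ x hx).mono_left (nhdsWithin_mono _ Ioo_subset_Icc_self)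
  have h2 : Tendsto Ψ (𝓝[Ioo α β] x) (𝓝 (Ψ x)) :=
    (hΨ x hx).mono_left (nhdsWithin_mono _ Ioo_subset_Icc_self)
  have h1' : Tendsto Ψ (𝓝[Ioo α β] x) (𝓝 (Φ x)) := by
    refine h1.congr' ?_
    filter_upwards [self_mem_nhdsWithin] with y hy using heq y hy
  exact tendsto_nhds_unique h1' h2

/-- elliptic maximum principle on [0,β] with Neumann boundary conditions:
at the max point y of w we have lam * w y ≤ F y -/
lemma elliptic_max {β lam : ℝ} {w w' w'' F : ℝ → ℝ} (hβ : 0 < β) (hlam : 0 < lam)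
    (hw : ∀ x ∈ Icc 0 β, HasDerivAt w (w' x) x)
    (hw' : ∀ x ∈ Icc 0 β, HasDerivAt w' (w'' x) x)
    (hN0 : w' 0 = 0) (hNβ : w' β = 0)
    (hF : ContinuousOn F (Icc 0 β))
    (hode : ∀ x ∈ Ioo 0 β, w'' x = lam * w x - F x) :
    ∃ y ∈ Icc 0 β, (∀ x ∈ Icc 0 β, w x ≤ w y) ∧ lam * w y ≤ F y := by
  have hwc : ContinuousOn w (Icc 0 β) :=
    fun x hx => ((hw x hx).continuousAt).continuousWithinAt
  obtain ⟨y, hy, hymax⟩ := (isCompact_Icc).exists_isMaxOn (nonempty_Icc.2 hβ.le) hwc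
  have hmax : ∀ x ∈ Icc 0 β, w x ≤ w y := fun x hx => hymax hx
  refine ⟨y, hy, hmax, ?_⟩
  set G : ℝ → ℝ := fun x => lam * w x - F x with hG
  have hGc : ContinuousOn G (Icc 0 β) := (hwc.const_smul lam).sub hF
  -- helper extracting a positive interval for G near an endpoint
  by_contra hcon
  push_neg at hcon
  have hGy : 0 < G y := by simp only [hG]; linarith
  rcases eq_or_lt_of_le hy.1 with h0y | h0y
  · -- y = 0
    have hy0 : y = 0 := h0y.symm
    subst hy0
    have hev : ∀ᶠ x in 𝓝[Icc 0 β] (0:ℝ), 0 < G x :=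
      (hGc 0 hy).eventually (eventually_gt_nhds hGy)
    rw [eventually_nhdsWithin_iff] at hev
    obtain ⟨ε, hε, hball⟩ := Metric.eventually_nhds_iff_ball.1 hev
    set w1 := min (ε / 2) β with hw1
    have hw1pos : 0 < w1 := lt_min (by linarith) hβ
    have hw1β : w1 ≤ β := min_le_right _ _
    have hsub : Icc 0 w1 ⊆ Icc 0 β := Icc_subset_Icc le_rfl hw1β
    have hGpos : ∀ x ∈ Ioo (0:ℝ) w1, 0 < G x := by
      intro x hx
      apply hball x _ (hsub (Ioo_subset_Icc_self hx))
      rw [Real.ball_eq_Ioo]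
      have : w1 ≤ ε / 2 := min_le_left _ _
      constructor <;> [linarith [hx.1]; linarith [hx.2]]
    have hmono' : StrictMonoOn w' (Icc 0 w1) := by
      apply strictMonoOn_of_deriv_pos (convex_Icc _ _)
      · exact fun x hx => ((hw' x (hsub hx)).continuousAt).continuousWithinAt
      · intro x hx
        rw [interior_Icc] at hx
        rw [(hw' x (hsub (Ioo_subset_Icc_self hx))).deriv]
        rw [hode x ⟨hx.1, lt_of_lt_of_le hx.2 hw1β⟩]
        exact hGpos x hx
    have hwmono : StrictMonoOn w (Icc 0 w1) := by
      apply strictMonoOn_of_deriv_pos (convex_Icc _ _)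
      · exact fun x hx => ((hw x (hsub hx)).continuousAt).continuousWithinAt
      · intro x hx
        rw [interior_Icc] at hx
        rw [(hw x (hsub (Ioo_subset_Icc_self hx))).deriv]
        have := hmono' (left_mem_Icc.2 hw1pos.le) (Ioo_subset_Icc_self hx) hx.1
        rw [hN0] at this
        exact this
    have h1 := hwmono (left_mem_Icc.2 hw1pos.le) (right_mem_Icc.2 hw1pos.le) hw1pos
    have h2 := hmax w1 (hsub (right_mem_Icc.2 hw1pos.le))
    linarith
  · rcases eq_or_lt_of_le hy.2 with hyβ | hyβ
    · -- y = β
      subst hyβ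
      have hev : ∀ᶠ x in 𝓝[Icc 0 y] y, 0 < G x :=
        (hGc y hy).eventually (eventually_gt_nhds hGy)
      rw [eventually_nhdsWithin_iff] at hev
      obtain ⟨ε, hε, hball⟩ := Metric.eventually_nhds_iff_ball.1 hev
      set w1 := max (y - ε / 2) 0 with hw1
      have hw1y : w1 < y := max_lt (by linarith) h0y
      have hw10 : 0 ≤ w1 := le_max_right _ _
      have hsub : Icc w1 y ⊆ Icc 0 y := Icc_subset_Icc hw10 le_rfl
      have hGpos : ∀ x ∈ Ioo w1 y, 0 < G x := by
        intro x hx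
        apply hball x _ (hsub (Ioo_subset_Icc_self hx))
        rw [Real.ball_eq_Ioo]
        have : y - ε / 2 ≤ w1 := le_max_left _ _
        constructor <;> [linarith [hx.1]; linarith [hx.2]]
      have hmono' : StrictMonoOn w' (Icc w1 y) := by
        apply strictMonoOn_of_deriv_pos (convex_Icc _ _)
        · exact fun x hx => ((hw' x (hsub hx)).continuousAt).continuousWithinAt
        · intro x hx
          rw [interior_Icc] at hx
          rw [(hw' x (hsub (Ioo_subset_Icc_self hx))).deriv]
          rw [hode x ⟨lt_of_le_of_lt hw10 hx.1, hx.2⟩]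
          exact hGpos x hx
      have hwanti : StrictAntiOn w (Icc w1 y) := by
        apply strictAntiOn_of_deriv_neg (convex_Icc _ _)
        · exact fun x hx => ((hw x (hsub hx)).continuousAt).continuousWithinAt
        · intro x hx
          rw [interior_Icc] at hx
          rw [(hw x (hsub (Ioo_subset_Icc_self hx))).deriv]
          have := hmono' (Ioo_subset_Icc_self hx) (right_mem_Icc.2 hw1y.le) hx.2
          rw [hNβ] at this
          exact this
      have h1 := hwanti (left_mem_Icc.2 hw1y.le) (right_mem_Icc.2 hw1y.le) hw1y
      have h2 := hmax w1 (hsub (left_mem_Icc.2 hw1y.le))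
      linarith
    · -- y interior
      have hyIoo : y ∈ Ioo 0 β := ⟨h0y, hyβ⟩
      have hloc : IsLocalMax w y := by
        have : Icc 0 β ∈ 𝓝 y := Icc_mem_nhds h0y hyβ
        exact Filter.eventually_of_mem this hmax
      have hd0 : w' y = 0 := by
        have := hloc.deriv_eq_zero
        rwa [(hw y hy).deriv] at this
      have hc := secondDeriv_nonpos_right hyβ
        (fun x hx => hw x ⟨le_trans hy.1 hx.1, hx.2⟩) hd0
        (fun x hx => hmax x ⟨le_trans hy.1 hx.1, hx.2⟩) (hw' y hy)
      rw [hode y hyIoo] at hc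
      linarith

end Helpers

set_option maxHeartbeats 1000000 in
/-- a priori bound for classical solutions of the FBP under (H1). -/
theorem stmt2 (ν χ1 χ2 lam1 lam2 μ1 μ2 : ℝ) (a b : ℝ → ℝ → ℝ)
    (hν : 0 < ν) (hχ1 : 0 ≤ χ1) (hχ2 : 0 ≤ χ2) (hμ1 : 0 ≤ μ1) (hμ2 : 0 ≤ μ2)
    (hlam1 : 0 < lam1) (hlam2 : 0 < lam2) (ha : Coeff a) (hb : Coeff b)
    (hH1 : χ1 * μ1 - χ2 * μ2 + Mconst χ1 χ2 lam1 lam2 μ1 μ2 < infOn b)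
    (u0 : ℝ → ℝ) (h0 : ℝ) (hinit : AdmissibleInit u0 h0)
    (T : ℝ) (hT : 0 < T) (u v1 v2 : ℝ → ℝ → ℝ) (h : ℝ → ℝ)
    (hsol : IsSol ν χ1 χ2 lam1 lam2 μ1 μ2 a b (Icc 0 T) (Ioc 0 T) u v1 v2 h)
    (hh0 : h 0 = h0) (hu0 : ∀ x ∈ Icc 0 h0, u 0 x = u0 x) :
    ∀ t ∈ Icc 0 T,
      sSup (u t '' Icc 0 (h t)) ≤ max (sSup (u0 '' Icc 0 h0)) (M0const χ1 χ2 lam1 lam2 μ1 μ2 a b) := by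
  intro tau htau
  obtain ⟨hτ0, hτT⟩ := htau
  set M0 := M0const χ1 χ2 lam1 lam2 μ1 μ2 a b with hM0def
  set B := max (sSup (u0 '' Icc 0 h0)) M0 with hBdef
  set Mc := Mconst χ1 χ2 lam1 lam2 μ1 μ2 with hMcdef
  have hJsub : Icc 0 tau ⊆ Icc 0 T := Icc_subset_Icc le_rfl hτT
  have hcontT : ContinuousOn h (Icc 0 T) :=
    fun s hs => (hsol.h_deriv s hs).continuousAt.continuousWithinAt
  set K : Set (ℝ × ℝ) := {p : ℝ × ℝ | p.1 ∈ Icc 0 tau ∧ p.2 ∈ Icc 0 (h p.1)} with hKdef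
  have hKsub : K ⊆ {p : ℝ × ℝ | p.1 ∈ Icc 0 T ∧ p.2 ∈ Icc 0 (h p.1)} :=
    fun p hp => ⟨hJsub hp.1, hp.2⟩
  have hKeq : K = (fun q : ℝ × ℝ => (q.1, q.2 * h q.1)) '' (Icc 0 tau ×ˢ Icc (0:ℝ) 1) := by
    ext ⟨s, x⟩
    constructor
    · rintro ⟨hs, hx⟩
      have hhs : 0 < h s := hsol.h_pos s (hJsub hs)
      refine ⟨(s, x / h s), ⟨hs, ⟨div_nonneg hx.1 hhs.le, (div_le_one hhs).2 hx.2⟩⟩, ?_⟩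
      simp only [Prod.mk.injEq]
      exact ⟨trivial, div_mul_cancel₀ x hhs.ne'⟩
    · rintro ⟨⟨s', r⟩, ⟨hs', hr⟩, heq⟩
      simp only [Prod.mk.injEq] at heq
      obtain ⟨h1, h2⟩ := heq
      subst h1
      subst h2
      have hhs : 0 < h s' := hsol.h_pos s' (hJsub hs')
      have hr0 : (0:ℝ) ≤ r := hr.1
      have hr1 : r ≤ 1 := hr.2
      refine ⟨hs', ⟨mul_nonneg hr0 hhs.le, ?_⟩⟩
      show r * h s' ≤ h s'
      nlinarith [mul_nonneg (sub_nonneg.2 hr1) hhs.le]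
  have hKcomp : IsCompact K := by
    rw [hKeq]
    apply (isCompact_Icc.prod isCompact_Icc).image_of_continuousOn
    apply ContinuousOn.prodMk continuousOn_fst
    exact continuousOn_snd.mul (hcontT.comp continuousOn_fst (fun q hq => hJsub hq.1))
  have hKne : ((0:ℝ), (0:ℝ)) ∈ K :=
    ⟨⟨le_rfl, hτ0⟩, ⟨le_rfl, (hsol.h_pos 0 ⟨le_rfl, hT.le⟩).le⟩⟩
  have hucK : ContinuousOn (Function.uncurry u) K := hsol.u_cont.mono hKsub
  obtain ⟨⟨t1, x1⟩, hmem, hmaxK⟩ := hKcomp.exists_isMaxOn ⟨_, hKne⟩ hucK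
  set U := u t1 x1 with hUdef
  have hmax : ∀ p ∈ K, u p.1 p.2 ≤ U := fun p hp => hmaxK hp
  have himgne : (u tau '' Icc 0 (h tau)).Nonempty :=
    ⟨u tau 0, mem_image_of_mem _ ⟨le_rfl, (hsol.h_pos tau ⟨hτ0, hτT⟩).le⟩⟩
  apply csSup_le himgne
  rintro y ⟨x, hx, rfl⟩
  have hyU : u tau x ≤ U := hmax (tau, x) ⟨⟨hτ0, le_rfl⟩, hx⟩
  suffices hUB : U ≤ B by linarith
  by_contra hUB
  push_neg at hUB
  -- basic facts
  have ht1 : t1 ∈ Icc 0 tau := hmem.1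
  have ht1T : t1 ∈ Icc 0 T := hJsub ht1
  have hbdd0 : BddAbove (u0 '' Icc 0 h0) :=
    (isCompact_Icc.image_of_continuousOn hinit.smooth.continuousOn).bddAbove
  have hB0 : 0 ≤ B := by
    have h1 : u0 h0 ≤ sSup (u0 '' Icc 0 h0) :=
      le_csSup hbdd0 (mem_image_of_mem _ (right_mem_Icc.2 hinit.h0_pos.le))
    rw [hinit.dirichlet] at h1
    exact le_trans h1 (le_max_left _ _)
  have hU0 : 0 < U := lt_of_le_of_lt hB0 hUB
  have ht1pos : 0 < t1 := by
    rcases eq_or_lt_of_le ht1.1 with h0t | h0t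
    · exfalso
      have hx1m : x1 ∈ Icc 0 h0 := by
        have := hmem.2
        rw [← h0t, hh0] at this
        exact this
      have : U = u0 x1 := by rw [hUdef, ← h0t, hu0 x1 hx1m]
      have h2 : u0 x1 ≤ sSup (u0 '' Icc 0 h0) := le_csSup hbdd0 (mem_image_of_mem _ hx1m)
      have h3 : sSup (u0 '' Icc 0 h0) ≤ B := le_max_left _ _
      linarith
    · exact h0t
  have ht1Jr : t1 ∈ Ioc 0 T := ⟨ht1pos, ht1T.2⟩
  set β := h t1 with hβdef
  have hβ : 0 < β := hsol.h_pos t1 ht1T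
  have hx1 : x1 ∈ Icc 0 β := hmem.2
  have hx1β : x1 < β := by
    rcases eq_or_lt_of_le hx1.2 with he | hl
    · exfalso
      have := (hsol.bch t1 ht1T).1
      rw [hUdef] at hU0
      rw [he] at hU0
      rw [hβdef] at hU0
      linarith
    · exact hl
  have huK : ∀ x ∈ Icc 0 β, u t1 x ≤ U := fun x hx => hmax (t1, x) ⟨ht1, hx⟩
  have hun : ∀ x ∈ Icc 0 β, 0 ≤ u t1 x := hsol.u_nonneg t1 ht1T
  -- slice continuity helpers
  have hsliceJr : ∀ (F : ℝ × ℝ → ℝ),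
      ContinuousOn F {p : ℝ × ℝ | p.1 ∈ Ioc 0 T ∧ p.2 ∈ Icc 0 (h p.1)} →
      ContinuousOn (fun x => F (t1, x)) (Icc 0 β) := by
    intro F hF
    exact hF.comp ((continuous_const.prodMk continuous_id).continuousOn)
      (fun x hx => ⟨ht1Jr, hx⟩)
  have hsliceJ : ∀ (F : ℝ × ℝ → ℝ),
      ContinuousOn F {p : ℝ × ℝ | p.1 ∈ Icc 0 T ∧ p.2 ∈ Icc 0 (h p.1)} →
      ContinuousOn (fun x => F (t1, x)) (Icc 0 β) := by
    intro F hF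
    exact hF.comp ((continuous_const.prodMk continuous_id).continuousOn)
      (fun x hx => ⟨ht1T, hx⟩)
  have c_u : ContinuousOn (fun x => u t1 x) (Icc 0 β) := hsliceJ _ hsol.u_cont
  have c_v1 : ContinuousOn (fun x => v1 t1 x) (Icc 0 β) := hsliceJ _ hsol.v1_cont
  have c_v2 : ContinuousOn (fun x => v2 t1 x) (Icc 0 β) := hsliceJ _ hsol.v2_cont
  have c_ux : ContinuousOn (fun x => deriv (u t1) x) (Icc 0 β) := hsliceJr _ hsol.ux_cont
  have c_uxx : ContinuousOn (fun x => deriv (deriv (u t1)) x) (Icc 0 β) :=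
    hsliceJr _ hsol.uxx_cont
  have c_v1x : ContinuousOn (fun x => deriv (v1 t1) x) (Icc 0 β) := hsliceJ _ hsol.v1x_cont
  have c_v2x : ContinuousOn (fun x => deriv (v2 t1) x) (Icc 0 β) := hsliceJ _ hsol.v2x_cont
  have c_a : ContinuousOn (fun x => a t1 x) (Icc 0 β) := by
    have hc := ha.smooth.continuousOn
    exact hc.comp ((continuous_const.prodMk continuous_id).continuousOn)
      (fun x hx => ⟨mem_univ _, hx.1⟩)
  have c_b : ContinuousOn (fun x => b t1 x) (Icc 0 β) := by
    have hc := hb.smooth.continuousOn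
    exact hc.comp ((continuous_const.prodMk continuous_id).continuousOn)
      (fun x hx => ⟨mem_univ _, hx.1⟩)
  -- time derivative at (t1,x1) is ≥ 0
  have htder : 0 ≤ deriv (fun s => u s x1) t1 := by
    have hder := (hsol.u_diff_t t1 ht1Jr x1 hx1).hasDerivAt
    have hs := hasDerivAt_iff_tendsto_slope.1 hder
    have hs' : Tendsto (slope (fun s => u s x1) t1) (𝓝[<] t1)
        (𝓝 (deriv (fun s => u s x1) t1)) :=
      hs.mono_left (nhdsWithin_mono _ (fun x hx => ne_of_lt hx))
    apply ge_of_tendsto hs'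
    have hev1 : ∀ᶠ s in 𝓝 t1, x1 < h s :=
      (hsol.h_deriv t1 ht1T).continuousAt.eventually (eventually_gt_nhds hx1β)
    have hev2 : ∀ᶠ s in 𝓝 t1, 0 < s := eventually_gt_nhds ht1pos
    filter_upwards [hev1.filter_mono nhdsWithin_le_nhds,
      hev2.filter_mono nhdsWithin_le_nhds, self_mem_nhdsWithin] with s hs1 hs2 hs3
    have hsK : (s, x1) ∈ K := ⟨⟨hs2.le, le_trans (le_of_lt hs3) ht1.2⟩, ⟨hx1.1, hs1.le⟩⟩
    have hle : u s x1 ≤ U := hmax (s, x1) hsK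
    rw [slope_def_field]
    apply div_nonneg_of_nonpos
    · rw [hUdef] at hle; linarith
    · have : s < t1 := hs3
      linarith
  -- spatial first derivative vanishes at (t1,x1)
  have hux1 : deriv (u t1) x1 = 0 := by
    rcases eq_or_lt_of_le hx1.1 with h0 | h0
    · rw [← h0]
      exact (hsol.bc0 t1 ht1T).1
    · have hloc : IsLocalMax (u t1) x1 :=
        Filter.eventually_of_mem (Icc_mem_nhds h0 hx1β) (fun x hx => huK x hx)
      exact hloc.deriv_eq_zero
  -- second derivative nonpositive
  have hdiffx := hsol.u_diff_x t1 ht1Jr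
  have huxx1 : deriv (deriv (u t1)) x1 ≤ 0 := by
    apply secondDeriv_nonpos_right hx1β
      (f := u t1) (f' := fun x => deriv (u t1) x)
      (fun x hx => (hdiffx x ⟨le_trans hx1.1 hx.1, hx.2⟩).1.hasDerivAt)
      hux1
      (fun x hx => huK x ⟨le_trans hx1.1 hx.1, hx.2⟩)
    exact (hdiffx x1 hx1).2.hasDerivAt
  -- elliptic estimates
  have hv1d := hsol.v1_diff_x t1 ht1T
  have hv2d := hsol.v2_diff_x t1 ht1T
  have hode1 : ∀ x ∈ Ioo 0 β, deriv (deriv (v1 t1)) x = lam1 * v1 t1 x - μ1 * u t1 x := by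
    intro x hx
    have := hsol.v1_ode t1 ht1T x hx
    linarith
  have hode2 : ∀ x ∈ Ioo 0 β, deriv (deriv (v2 t1)) x = lam2 * v2 t1 x - μ2 * u t1 x := by
    intro x hx
    have := hsol.v2_ode t1 ht1T x hx
    linarith
  obtain ⟨y1, hy1, hy1max, hy1ineq⟩ := elliptic_max (w := v1 t1)
    (w' := fun x => deriv (v1 t1) x) (w'' := fun x => deriv (deriv (v1 t1)) x)
    (F := fun x => μ1 * u t1 x) hβ hlam1
    (fun x hx => (hv1d x hx).1.hasDerivAt) (fun x hx => (hv1d x hx).2.hasDerivAt)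
    (hsol.bc0 t1 ht1T).2.1 (hsol.bch t1 ht1T).2.1
    (continuous_const.continuousOn.mul c_u) hode1
  have hv1b : ∀ x ∈ Icc 0 β, lam1 * v1 t1 x ≤ μ1 * U := by
    intro x hx
    calc lam1 * v1 t1 x ≤ lam1 * v1 t1 y1 :=
          mul_le_mul_of_nonneg_left (hy1max x hx) hlam1.le
      _ ≤ μ1 * u t1 y1 := hy1ineq
      _ ≤ μ1 * U := mul_le_mul_of_nonneg_left (huK y1 hy1) hμ1
  obtain ⟨y2, hy2, hy2max, hy2ineq⟩ := elliptic_max (w := v2 t1)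
    (w' := fun x => deriv (v2 t1) x) (w'' := fun x => deriv (deriv (v2 t1)) x)
    (F := fun x => μ2 * u t1 x) hβ hlam2
    (fun x hx => (hv2d x hx).1.hasDerivAt) (fun x hx => (hv2d x hx).2.hasDerivAt)
    (hsol.bc0 t1 ht1T).2.2 (hsol.bch t1 ht1T).2.2
    (continuous_const.continuousOn.mul c_u) hode2
  have hv2b : ∀ x ∈ Icc 0 β, lam2 * v2 t1 x ≤ μ2 * U := by
    intro x hx
    calc lam2 * v2 t1 x ≤ lam2 * v2 t1 y2 :=
          mul_le_mul_of_nonneg_left (hy2max x hx) hlam2.le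
      _ ≤ μ2 * u t1 y2 := hy2ineq
      _ ≤ μ2 * U := mul_le_mul_of_nonneg_left (huK y2 hy2) hμ2
  -- the combination P and its bound by Mconst * U
  set P : ℝ → ℝ := fun x => χ2 * lam2 * v2 t1 x - χ1 * lam1 * v1 t1 x with hPdef
  have hPd : ∀ x ∈ Icc 0 β,
      HasDerivAt P (χ2 * lam2 * deriv (v2 t1) x - χ1 * lam1 * deriv (v1 t1) x) x :=
    fun x hx => ((hv2d x hx).1.hasDerivAt.const_mul _).sub
      ((hv1d x hx).1.hasDerivAt.const_mul _)
  have hPd' : ∀ x ∈ Icc 0 β,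
      HasDerivAt (fun x => χ2 * lam2 * deriv (v2 t1) x - χ1 * lam1 * deriv (v1 t1) x)
        (χ2 * lam2 * deriv (deriv (v2 t1)) x - χ1 * lam1 * deriv (deriv (v1 t1)) x) x :=
    fun x hx => ((hv2d x hx).2.hasDerivAt.const_mul _).sub
      ((hv1d x hx).2.hasDerivAt.const_mul _)
  have hPN0 : χ2 * lam2 * deriv (v2 t1) 0 - χ1 * lam1 * deriv (v1 t1) 0 = 0 := by
    rw [(hsol.bc0 t1 ht1T).2.1, (hsol.bc0 t1 ht1T).2.2]
    ring
  have hPNβ : χ2 * lam2 * deriv (v2 t1) β - χ1 * lam1 * deriv (v1 t1) β = 0 := by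
    rw [hβdef, (hsol.bch t1 ht1T).2.1, (hsol.bch t1 ht1T).2.2]
    ring
  have hC1 : (χ2 * μ2 * lam2 - χ1 * μ1 * lam1) ≤ pp (χ2 * μ2 * lam2 - χ1 * μ1 * lam1) :=
    le_max_left _ _
  have hC1' : 0 ≤ pp (χ2 * μ2 * lam2 - χ1 * μ1 * lam1) := le_max_right _ _
  have hL : lam1 - lam2 ≤ pp (lam1 - lam2) := le_max_left _ _
  have hL' : 0 ≤ pp (lam1 - lam2) := le_max_right _ _
  have hL2 : lam2 - lam1 ≤ pp (lam2 - lam1) := le_max_left _ _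
  have hL2' : 0 ≤ pp (lam2 - lam1) := le_max_right _ _
  -- first P bound with lam2
  have hPb1 : lam2 * P x1 ≤
      (pp (χ2 * μ2 * lam2 - χ1 * μ1 * lam1) + χ1 * μ1 * pp (lam1 - lam2)) * U := by
    obtain ⟨z, hz, hzmax, hzineq⟩ := elliptic_max (w := P)
      (w' := fun x => χ2 * lam2 * deriv (v2 t1) x - χ1 * lam1 * deriv (v1 t1) x)
      (w'' := fun x => χ2 * lam2 * deriv (deriv (v2 t1)) x - χ1 * lam1 * deriv (deriv (v1 t1)) x)
      (F := fun x => (χ2 * μ2 * lam2 - χ1 * μ1 * lam1) * u t1 x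
        - χ1 * lam1 * (lam2 - lam1) * v1 t1 x)
      hβ hlam2 hPd hPd' hPN0 hPNβ
      (((continuous_const.continuousOn).mul c_u).sub ((continuous_const.continuousOn).mul c_v1))
      (by
        intro x hx
        have e1 := hode1 x hx
        have e2 := hode2 x hx
        simp only [hPdef]
        rw [e1, e2]
        ring)
    have hFz : (χ2 * μ2 * lam2 - χ1 * μ1 * lam1) * u t1 z
        - χ1 * lam1 * (lam2 - lam1) * v1 t1 z ≤
        (pp (χ2 * μ2 * lam2 - χ1 * μ1 * lam1) + χ1 * μ1 * pp (lam1 - lam2)) * U := by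
      have h1 : (χ2 * μ2 * lam2 - χ1 * μ1 * lam1) * u t1 z ≤
          pp (χ2 * μ2 * lam2 - χ1 * μ1 * lam1) * U := by
        nlinarith [hun z hz, huK z hz, hU0.le]
      have h2 : - (χ1 * lam1 * (lam2 - lam1) * v1 t1 z) ≤
          χ1 * μ1 * pp (lam1 - lam2) * U := by
        have hA0 : 0 ≤ lam1 * v1 t1 z :=
          mul_nonneg hlam1.le (hsol.v1_nonneg t1 ht1T z hz)
        have hA1 : lam1 * v1 t1 z ≤ μ1 * U := hv1b z hz
        nlinarith [mul_nonneg (mul_nonneg hχ1 hA0) (sub_nonneg.2 hL),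
          mul_nonneg (mul_nonneg hχ1 hL') (sub_nonneg.2 hA1)]
      linarith
    have hPzx : lam2 * P x1 ≤ lam2 * P z :=
      mul_le_mul_of_nonneg_left (hzmax x1 hx1) hlam2.le
    linarith
  -- second P bound with lam1
  have hPb2 : lam1 * P x1 ≤
      (pp (χ2 * μ2 * lam2 - χ1 * μ1 * lam1) + χ2 * μ2 * pp (lam1 - lam2)) * U := by
    obtain ⟨z, hz, hzmax, hzineq⟩ := elliptic_max (w := P)
      (w' := fun x => χ2 * lam2 * deriv (v2 t1) x - χ1 * lam1 * deriv (v1 t1) x)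
      (w'' := fun x => χ2 * lam2 * deriv (deriv (v2 t1)) x - χ1 * lam1 * deriv (deriv (v1 t1)) x)
      (F := fun x => (χ2 * μ2 * lam2 - χ1 * μ1 * lam1) * u t1 x
        - χ2 * lam2 * (lam2 - lam1) * v2 t1 x)
      hβ hlam1 hPd hPd' hPN0 hPNβ
      (((continuous_const.continuousOn).mul c_u).sub ((continuous_const.continuousOn).mul c_v2))
      (by
        intro x hx
        have e1 := hode1 x hx
        have e2 := hode2 x hx
        simp only [hPdef]
        rw [e1, e2]
        ring)
    have hFz : (χ2 * μ2 * lam2 - χ1 * μ1 * lam1) * u t1 z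
        - χ2 * lam2 * (lam2 - lam1) * v2 t1 z ≤
        (pp (χ2 * μ2 * lam2 - χ1 * μ1 * lam1) + χ2 * μ2 * pp (lam1 - lam2)) * U := by
      have h1 : (χ2 * μ2 * lam2 - χ1 * μ1 * lam1) * u t1 z ≤
          pp (χ2 * μ2 * lam2 - χ1 * μ1 * lam1) * U := by
        nlinarith [hun z hz, huK z hz, hU0.le]
      have h2 : - (χ2 * lam2 * (lam2 - lam1) * v2 t1 z) ≤
          χ2 * μ2 * pp (lam1 - lam2) * U := by
        have hA0 : 0 ≤ lam2 * v2 t1 z :=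
          mul_nonneg hlam2.le (hsol.v2_nonneg t1 ht1T z hz)
        have hA1 : lam2 * v2 t1 z ≤ μ2 * U := hv2b z hz
        nlinarith [mul_nonneg (mul_nonneg hχ2 hA0) (sub_nonneg.2 hL),
          mul_nonneg (mul_nonneg hχ2 hL') (sub_nonneg.2 hA1)]
      linarith
    have hPzx : lam1 * P x1 ≤ lam1 * P z :=
      mul_le_mul_of_nonneg_left (hzmax x1 hx1) hlam1.le
    linarith
  have hPx1 : P x1 ≤ Mc * U := by
    have hm1 : P x1 ≤ (1 / lam2) *
        (pp (χ2 * μ2 * lam2 - χ1 * μ1 * lam1) + χ1 * μ1 * pp (lam1 - lam2)) * U := by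
      rw [mul_assoc, mul_comm (1 / lam2), ← div_eq_mul_one_div, le_div_iff₀ hlam2]
      linarith [hPb1]
    have hm2 : P x1 ≤ (1 / lam1) *
        (pp (χ2 * μ2 * lam2 - χ1 * μ1 * lam1) + χ2 * μ2 * pp (lam1 - lam2)) * U := by
      rw [mul_assoc, mul_comm (1 / lam1), ← div_eq_mul_one_div, le_div_iff₀ hlam1]
      linarith [hPb2]
    rw [hMcdef, Mconst]
    rcases min_cases ((1 / lam2) * (pp (χ2 * μ2 * lam2 - χ1 * μ1 * lam1) + χ1 * μ1 * pp (lam1 - lam2)))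
      ((1 / lam1) * (pp (χ2 * μ2 * lam2 - χ1 * μ1 * lam1) + χ2 * μ2 * pp (lam1 - lam2))) with
      ⟨he, _⟩ | ⟨he, _⟩
    · rw [he]; exact hm1
    · rw [he]; exact hm2
  -- extension of the PDE to the closed interval
  set Φ : ℝ → ℝ := fun x => deriv (fun s => u s x) t1 with hΦdef
  set Ψ : ℝ → ℝ := fun x =>
    deriv (deriv (u t1)) x
      - χ1 * (deriv (u t1) x * deriv (v1 t1) x + u t1 x * (lam1 * v1 t1 x - μ1 * u t1 x))
      + χ2 * (deriv (u t1) x * deriv (v2 t1) x + u t1 x * (lam2 * v2 t1 x - μ2 * u t1 x))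
      + u t1 x * (a t1 x - b t1 x * u t1 x) with hΨdef
  have heqIoo : ∀ x ∈ Ioo 0 β, Φ x = Ψ x := by
    intro x hx
    have hxI : x ∈ Icc 0 β := Ioo_subset_Icc_self hx
    have hpde := hsol.pde t1 ht1Jr x hx
    have hd1 : deriv (fun y => u t1 y * deriv (v1 t1) y) x
        = deriv (u t1) x * deriv (v1 t1) x + u t1 x * deriv (deriv (v1 t1)) x :=
      deriv_mul (hdiffx x hxI).1 (hv1d x hxI).2
    have hd2 : deriv (fun y => u t1 y * deriv (v2 t1) y) x
        = deriv (u t1) x * deriv (v2 t1) x + u t1 x * deriv (deriv (v2 t1)) x :=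
      deriv_mul (hdiffx x hxI).1 (hv2d x hxI).2
    simp only [hΦdef, hΨdef]
    rw [hpde, hd1, hd2, hode1 x hx, hode2 x hx]
  have hΦc : ContinuousOn Φ (Icc 0 β) := hsliceJr _ hsol.ut_cont
  have hΨc : ContinuousOn Ψ (Icc 0 β) := by
    apply ContinuousOn.add
    apply ContinuousOn.add
    apply ContinuousOn.sub
    · exact c_uxx
    · exact continuous_const.continuousOn.mul
        ((c_ux.mul c_v1x).add (c_u.mul ((continuous_const.continuousOn.mul c_v1).sub
          (continuous_const.continuousOn.mul c_u))))
    · exact continuous_const.continuousOn.mul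
        ((c_ux.mul c_v2x).add (c_u.mul ((continuous_const.continuousOn.mul c_v2).sub
          (continuous_const.continuousOn.mul c_u))))
    · exact c_u.mul (c_a.sub (c_b.mul c_u))
  have hkey : Φ x1 = Ψ x1 := eqOn_Icc_of_eqOn_Ioo hβ hΦc hΨc heqIoo x1 hx1
  have h0Ψ : 0 ≤ Ψ x1 := by
    rw [← hkey]
    exact htder
  -- sup / inf bounds on coefficients
  obtain ⟨Ca, hCa⟩ := ha.bdd
  have hbddA : BddAbove {y | ∃ t x, 0 ≤ x ∧ a t x = y} := by
    refine ⟨Ca, ?_⟩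
    rintro y ⟨t', x', hx', rfl⟩
    exact (abs_le.1 (hCa t' x' hx')).2
  have hasup : a t1 x1 ≤ supOn a := le_csSup hbddA ⟨t1, x1, hx1.1, rfl⟩
  obtain ⟨Cb, hCb⟩ := hb.bdd
  have hbddB : BddBelow {y | ∃ t x, 0 ≤ x ∧ b t x = y} := by
    refine ⟨-Cb, ?_⟩
    rintro y ⟨t', x', hx', rfl⟩
    exact (abs_le.1 (hCb t' x' hx')).1
  have hbinf : infOn b ≤ b t1 x1 := csInf_le hbddB ⟨t1, x1, hx1.1, rfl⟩
  -- final contradiction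
  have hc : 0 < infOn b + χ2 * μ2 - χ1 * μ1 - Mc := by
    rw [hMcdef]
    linarith [hH1]
  have hUM0 : M0 < U := lt_of_le_of_lt (le_max_right _ _) hUB
  have hsupc : supOn a < (infOn b + χ2 * μ2 - χ1 * μ1 - Mc) * U := by
    rw [hM0def, M0const, ← hMcdef, div_lt_iff₀ hc] at hUM0
    linarith [hUM0]
  have hΨval : Ψ x1 = deriv (deriv (u t1)) x1
      + U * P x1 + (χ1 * μ1 - χ2 * μ2) * (U * U)
      + U * a t1 x1 - b t1 x1 * (U * U) := by
    simp only [hΨdef, hPdef, hux1, hUdef]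
    ring
  have e1 : U * P x1 ≤ U * (Mc * U) := mul_le_mul_of_nonneg_left hPx1 hU0.le
  have e2 : U * a t1 x1 ≤ U * supOn a := mul_le_mul_of_nonneg_left hasup hU0.le
  have e3 : infOn b * (U * U) ≤ b t1 x1 * (U * U) :=
    mul_le_mul_of_nonneg_right hbinf (by positivity)
  have e5 : U * supOn a < U * ((infOn b + χ2 * μ2 - χ1 * μ1 - Mc) * U) :=
    mul_lt_mul_of_pos_left hsupc hU0
  rw [hΨval] at h0Ψ
  linarith [h0Ψ, e1, e2, e3, e5, huxx1]
end

section
/- Assume (H1). Let (u, v1, v2, h) be a classical solution of the FBP on [0, T] with admissible initial data (u0, h0), and suppose that sup_{0 ≤ x ≤ h(t)} u(t,x) > M0 for every t ∈ [0, T]. Then the function t ↦ sup_{0 ≤ x ≤ h(t)} u(t,x) is nonincreasing on [0, T]. -/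
open Set Filter Topology

/-- slice continuity -/
lemma sliceCont {F : ℝ × ℝ → ℝ} {A : Set ℝ} {h : ℝ → ℝ}
    (hF : ContinuousOn F {p : ℝ × ℝ | p.1 ∈ A ∧ p.2 ∈ Icc 0 (h p.1)})
    {t : ℝ} (ht : t ∈ A) : ContinuousOn (fun x => F (t, x)) (Icc 0 (h t)) := by
  have : ContinuousOn (fun x : ℝ => (t, x)) (Icc 0 (h t)) :=
    (continuous_const.prodMk continuous_id).continuousOn
  exact hF.comp this (fun x hx => ⟨ht, hx⟩)

/-- maximum principle with Neumann boundary conditions -/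
lemma maxPrinciple {L lam : ℝ} (hL : 0 < L) (hlam : 0 < lam) {w : ℝ → ℝ}
    (hw : ∀ x ∈ Icc 0 L, DifferentiableAt ℝ w x)
    (hw' : ContinuousOn (deriv w) (Icc 0 L))
    (hineq : ∀ x ∈ Ioo 0 L, lam * w x ≤ deriv (deriv w) x)
    (hn0 : deriv w 0 = 0) (hnL : deriv w L = 0) :
    ∀ x ∈ Icc 0 L, w x ≤ 0 := by
  have hwc : ContinuousOn w (Icc 0 L) := fun x hx => (hw x hx).continuousAt.continuousWithinAt
  obtain ⟨x0, hx0, hmax⟩ := isCompact_Icc.exists_isMaxOn (nonempty_Icc.mpr hL.le) hwc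
  intro x hx
  rcases le_or_gt (w x0) 0 with h0 | h0
  · exact le_trans (hmax hx) h0
  exfalso
  -- w positive near x0
  have hcw : ContinuousAt w x0 := (hw x0 hx0).continuousAt
  have hev : ∀ᶠ y in 𝓝 x0, 0 < w y := hcw.eventually (eventually_gt_nhds h0)
  obtain ⟨ε, hε, hball⟩ := Metric.eventually_nhds_iff.mp hev
  rcases lt_or_eq_of_le hx0.2 with hx0L | hx0L
  · -- x0 < L : push to the right
    have hd0 : deriv w x0 = 0 := by
      rcases eq_or_lt_of_le hx0.1 with h00 | h00
      · rw [← h00]; exact hn0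
      · exact ((hmax.isLocalMax (Icc_mem_nhds h00 hx0L)).deriv_eq_zero)
    set r : ℝ := min (ε / 2) (L - x0) with hr
    have hrpos : 0 < r := lt_min (by linarith) (by linarith)
    have hsub : Icc x0 (x0 + r) ⊆ Icc 0 L := by
      intro y hy
      constructor
      · linarith [hy.1, hx0.1]
      · have : r ≤ L - x0 := min_le_right _ _
        linarith [hy.2]
    have hposw : ∀ y ∈ Icc x0 (x0 + r), 0 < w y := by
      intro y hy
      apply hball
      have h1 : |y - x0| ≤ r := by
        rw [abs_le]; constructor <;> [linarith [hy.1]; linarith [hy.2]]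
      calc dist y x0 = |y - x0| := Real.dist_eq y x0
        _ ≤ r := h1
        _ ≤ ε / 2 := min_le_left _ _
        _ < ε := by linarith
    have hmono' : StrictMonoOn (deriv w) (Icc x0 (x0 + r)) := by
      apply strictMonoOn_of_deriv_pos (convex_Icc _ _) (hw'.mono hsub)
      intro y hy
      rw [interior_Icc] at hy
      have hyI : y ∈ Ioo 0 L := ⟨lt_of_le_of_lt hx0.1 hy.1, by
        have : r ≤ L - x0 := min_le_right _ _; linarith [hy.2]⟩
      calc (0:ℝ) < lam * w y := mul_pos hlam (hposw y ⟨hy.1.le, hy.2.le⟩)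
        _ ≤ deriv (deriv w) y := hineq y hyI
    have hmono : StrictMonoOn w (Icc x0 (x0 + r)) := by
      apply strictMonoOn_of_deriv_pos (convex_Icc _ _) (hwc.mono hsub)
      intro y hy
      rw [interior_Icc] at hy
      have := hmono' (left_mem_Icc.mpr (by linarith [hrpos])) ⟨hy.1.le, hy.2.le⟩ hy.1
      rw [hd0] at this; exact this
    have : w x0 < w (x0 + r) :=
      hmono (left_mem_Icc.mpr (by linarith)) (right_mem_Icc.mpr (by linarith)) (by linarith)
    exact absurd (hmax (hsub (right_mem_Icc.mpr (by linarith)))) (by simp; linarith)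
  · -- x0 = L : push to the left
    subst hx0L
    set r : ℝ := min (ε / 2) x0 with hr
    have hLpos : 0 < x0 := hL
    have hrpos : 0 < r := lt_min (by linarith) hLpos
    have hsub : Icc (x0 - r) x0 ⊆ Icc 0 x0 := by
      intro y hy
      have : r ≤ x0 := min_le_right _ _
      exact ⟨by linarith [hy.1], hy.2⟩
    have hposw : ∀ y ∈ Icc (x0 - r) x0, 0 < w y := by
      intro y hy
      apply hball
      have h1 : |y - x0| ≤ r := by
        rw [abs_le]; constructor <;> [linarith [hy.1]; linarith [hy.2]]
      calc dist y x0 = |y - x0| := Real.dist_eq y x0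
        _ ≤ r := h1
        _ ≤ ε / 2 := min_le_left _ _
        _ < ε := by linarith
    have hmono' : StrictMonoOn (deriv w) (Icc (x0 - r) x0) := by
      apply strictMonoOn_of_deriv_pos (convex_Icc _ _) (hw'.mono hsub)
      intro y hy
      rw [interior_Icc] at hy
      have hyI : y ∈ Ioo 0 x0 := ⟨by have : r ≤ x0 := min_le_right _ _; linarith [hy.1], hy.2⟩
      calc (0:ℝ) < lam * w y := mul_pos hlam (hposw y ⟨hy.1.le, hy.2.le⟩)
        _ ≤ deriv (deriv w) y := hineq y hyI
    have hanti : StrictAntiOn w (Icc (x0 - r) x0) := by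
      apply strictAntiOn_of_deriv_neg (convex_Icc _ _) (hwc.mono hsub)
      intro y hy
      rw [interior_Icc] at hy
      have := hmono' ⟨hy.1.le, hy.2.le⟩ (right_mem_Icc.mpr (by linarith)) hy.2
      rw [hnL] at this; exact this
    have : w x0 < w (x0 - r) :=
      hanti (left_mem_Icc.mpr (by linarith)) (right_mem_Icc.mpr (by linarith)) (by linarith)
    exact absurd (hmax (hsub (left_mem_Icc.mpr (by linarith)))) (by simp; linarith)

/-- second derivative test at a (possibly left-boundary) maximum point -/
lemma secondDerivNonpos {f : ℝ → ℝ} {x0 L : ℝ} (hx0 : 0 ≤ x0) (hxL : x0 < L)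
    (hmax : ∀ y ∈ Icc 0 L, f y ≤ f x0)
    (hf : ∀ x ∈ Icc 0 L, DifferentiableAt ℝ f x)
    (hf' : ∀ x ∈ Icc 0 L, DifferentiableAt ℝ (deriv f) x)
    (hf'' : ContinuousWithinAt (deriv (deriv f)) (Icc 0 L) x0)
    (hd0 : deriv f x0 = 0) : deriv (deriv f) x0 ≤ 0 := by
  by_contra hpos
  push_neg at hpos
  have hev : ∀ᶠ y in 𝓝[Icc 0 L] x0, 0 < deriv (deriv f) y :=
    hf''.eventually (eventually_gt_nhds hpos)
  rw [eventually_iff, Metric.mem_nhdsWithin_iff] at hev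
  obtain ⟨ε, hε, hball⟩ := hev
  set r : ℝ := min (ε / 2) (L - x0) with hrdef
  have hrpos : 0 < r := lt_min (by linarith) (by linarith)
  have hsub : Icc x0 (x0 + r) ⊆ Icc 0 L := by
    intro y hy
    have : r ≤ L - x0 := min_le_right _ _
    exact ⟨by linarith [hy.1], by linarith [hy.2]⟩
  have hdd : ∀ y ∈ Icc x0 (x0 + r), 0 < deriv (deriv f) y := by
    intro y hy
    apply hball
    refine ⟨?_, hsub hy⟩
    have h1 : |y - x0| ≤ r := by
      rw [abs_le]; constructor <;> [linarith [hy.1]; linarith [hy.2]]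
    have : dist y x0 < ε := by
      calc dist y x0 = |y - x0| := Real.dist_eq y x0
        _ ≤ r := h1
        _ < ε := lt_of_le_of_lt (min_le_left _ _) (by linarith)
    exact Metric.mem_ball.mpr this
  have hcont' : ContinuousOn (deriv f) (Icc x0 (x0 + r)) := fun y hy =>
    (hf' y (hsub hy)).continuousAt.continuousWithinAt
  have hmono' : StrictMonoOn (deriv f) (Icc x0 (x0 + r)) := by
    apply strictMonoOn_of_deriv_pos (convex_Icc _ _) hcont'
    intro y hy
    rw [interior_Icc] at hy
    exact hdd y ⟨hy.1.le, hy.2.le⟩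
  have hcont : ContinuousOn f (Icc x0 (x0 + r)) := fun y hy =>
    (hf y (hsub hy)).continuousAt.continuousWithinAt
  have hmono : StrictMonoOn f (Icc x0 (x0 + r)) := by
    apply strictMonoOn_of_deriv_pos (convex_Icc _ _) hcont
    intro y hy
    rw [interior_Icc] at hy
    have := hmono' (left_mem_Icc.mpr (by linarith)) ⟨hy.1.le, hy.2.le⟩ hy.1
    rw [hd0] at this; exact this
  have h1 : f x0 < f (x0 + r) :=
    hmono (left_mem_Icc.mpr (by linarith)) (right_mem_Icc.mpr (by linarith)) (by linarith)
  exact absurd (hmax _ (hsub (right_mem_Icc.mpr (by linarith)))) (by linarith)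

/-- derivative is nonneg at a point which is a max from the left -/
lemma derivNonnegOfLeftMax {ψ : ℝ → ℝ} {t η : ℝ} (hη : 0 < η)
    (hd : DifferentiableAt ℝ ψ t)
    (hmax : ∀ s ∈ Ico (t - η) t, ψ s ≤ ψ t) : 0 ≤ deriv ψ t := by
  have hslope : Tendsto (slope ψ t) (𝓝[≠] t) (𝓝 (deriv ψ t)) :=
    hasDerivAt_iff_tendsto_slope.mp hd.hasDerivAt
  have hsl : Tendsto (slope ψ t) (𝓝[<] t) (𝓝 (deriv ψ t)) :=
    hslope.mono_left (nhdsWithin_mono _ (fun s hs => ne_of_lt hs))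
  have hne : (𝓝[<] t).NeBot := nhdsLT_neBot t
  apply ge_of_tendsto hsl
  filter_upwards [Ioo_mem_nhdsLT_of_mem (⟨by linarith, le_refl t⟩ : t ∈ Ioc (t - η) t)]
  intro s hs
  have h1 : ψ s ≤ ψ t := hmax s ⟨hs.1.le, hs.2⟩
  have h2 : s - t < 0 := by linarith [hs.2]
  rw [slope_def_field]
  exact div_nonneg_iff.mpr (Or.inr ⟨by linarith, by linarith⟩)

/-- two functions continuous within Icc at 0 and equal on Ioo agree at 0 -/
lemma eqAtZero {F G : ℝ → ℝ} {L : ℝ} (hL : 0 < L)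
    (hF : ContinuousWithinAt F (Icc 0 L) 0) (hG : ContinuousWithinAt G (Icc 0 L) 0)
    (heq : ∀ x ∈ Ioo 0 L, F x = G x) : F 0 = G 0 := by
  have hcl : (0:ℝ) ∈ closure (Ioo 0 L) := by
    rw [closure_Ioo hL.ne]; exact ⟨le_refl 0, hL.le⟩
  have hne : (𝓝[Ioo 0 L] (0:ℝ)).NeBot := mem_closure_iff_nhdsWithin_neBot.mp hcl
  have hF' : Tendsto F (𝓝[Ioo 0 L] 0) (𝓝 (F 0)) :=
    hF.tendsto.mono_left (nhdsWithin_mono _ Ioo_subset_Icc_self)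
  have hG' : Tendsto G (𝓝[Ioo 0 L] 0) (𝓝 (G 0)) :=
    hG.tendsto.mono_left (nhdsWithin_mono _ Ioo_subset_Icc_self)
  have : Tendsto F (𝓝[Ioo 0 L] 0) (𝓝 (G 0)) := by
    apply hG'.congr'
    filter_upwards [self_mem_nhdsWithin] with x hx
    exact (heq x hx).symm
  exact tendsto_nhds_unique hF' this
set_option maxHeartbeats 4000000 in
/-- if the sup of u stays above M0, it is nonincreasing in time. -/
theorem stmt3 (ν χ1 χ2 lam1 lam2 μ1 μ2 : ℝ) (a b : ℝ → ℝ → ℝ)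
    (hν : 0 < ν) (hχ1 : 0 ≤ χ1) (hχ2 : 0 ≤ χ2) (hμ1 : 0 ≤ μ1) (hμ2 : 0 ≤ μ2)
    (hlam1 : 0 < lam1) (hlam2 : 0 < lam2) (ha : Coeff a) (hb : Coeff b)
    (hH1 : χ1 * μ1 - χ2 * μ2 + Mconst χ1 χ2 lam1 lam2 μ1 μ2 < infOn b)
    (u0 : ℝ → ℝ) (h0 : ℝ) (hinit : AdmissibleInit u0 h0)
    (T : ℝ) (hT : 0 < T) (u v1 v2 : ℝ → ℝ → ℝ) (h : ℝ → ℝ)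
    (hsol : IsSol ν χ1 χ2 lam1 lam2 μ1 μ2 a b (Icc 0 T) (Ioc 0 T) u v1 v2 h)
    (hh0 : h 0 = h0) (hu0 : ∀ x ∈ Icc 0 h0, u 0 x = u0 x)
    (hbig : ∀ t ∈ Icc 0 T, M0const χ1 χ2 lam1 lam2 μ1 μ2 a b < sSup (u t '' Icc 0 (h t))) :
    ∀ t1 ∈ Icc 0 T, ∀ t2 ∈ Icc 0 T, t1 ≤ t2 →
      sSup (u t2 '' Icc 0 (h t2)) ≤ sSup (u t1 '' Icc 0 (h t1)) := by
  classical
  -- bounds from the coefficient hypotheses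
  obtain ⟨Ca, hCa⟩ := ha.bdd
  obtain ⟨Cb, hCb⟩ := hb.bdd
  have hbAa : BddAbove {y | ∃ t x, 0 ≤ x ∧ a t x = y} := by
    refine ⟨Ca, ?_⟩; rintro y ⟨t, x, hx, rfl⟩; exact (abs_le.mp (hCa t x hx)).2
  have hbBa : BddBelow {y | ∃ t x, 0 ≤ x ∧ a t x = y} := by
    refine ⟨-Ca, ?_⟩; rintro y ⟨t, x, hx, rfl⟩; exact (abs_le.mp (hCa t x hx)).1
  have hbBb : BddBelow {y | ∃ t x, 0 ≤ x ∧ b t x = y} := by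
    refine ⟨-Cb, ?_⟩; rintro y ⟨t, x, hx, rfl⟩; exact (abs_le.mp (hCb t x hx)).1
  have hsupa : ∀ t x, 0 ≤ x → a t x ≤ supOn a := fun t x hx =>
    le_csSup hbAa ⟨t, x, hx, rfl⟩
  have hinfb : ∀ t x, 0 ≤ x → infOn b ≤ b t x := fun t x hx =>
    csInf_le hbBb ⟨t, x, hx, rfl⟩
  have hsupa_pos : 0 < supOn a :=
    lt_of_lt_of_le ha.inf_pos ((csInf_le hbBa ⟨0, 0, le_rfl, rfl⟩).trans (hsupa 0 0 le_rfl))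
  have hc : 0 < infOn b + χ2 * μ2 - χ1 * μ1 - Mconst χ1 χ2 lam1 lam2 μ1 μ2 := by linarith
  -- continuity of h and slice continuity of u
  have hhc : ∀ t ∈ Icc 0 T, ContinuousAt h t := fun t ht => (hsol.h_deriv t ht).continuousAt
  have husc : ∀ t ∈ Icc 0 T, ContinuousOn (u t) (Icc 0 (h t)) := by
    intro t ht
    exact sliceCont hsol.u_cont ht
  have hScomp : ∀ t ∈ Icc 0 T, IsCompact (u t '' Icc 0 (h t)) := fun t ht =>
    isCompact_Icc.image_of_continuousOn (husc t ht)
  have hub : ∀ t ∈ Icc 0 T, ∀ x ∈ Icc 0 (h t), u t x ≤ sSup (u t '' Icc 0 (h t)) :=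
    fun t ht x hx => le_csSup (hScomp t ht).bddAbove ⟨x, hx, rfl⟩
  intro t1 ht1 t2 ht2 h12
  by_contra hcon
  push_neg at hcon
  have hlt : t1 < t2 := by
    rcases eq_or_lt_of_le h12 with he | hl
    · exfalso; rw [he] at hcon; exact lt_irrefl _ hcon
    · exact hl
  set S1 := sSup (u t1 '' Icc 0 (h t1)) with hS1def
  clear_value S1
  set S2 := sSup (u t2 '' Icc 0 (h t2)) with hS2def
  clear_value S2
  set δ := (S2 - S1) / (2 * (t2 - t1)) with hδdef
  clear_value δ
  have hδ : 0 < δ := by rw [hδdef]; exact div_pos (by linarith) (by linarith)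
  have hne : t2 - t1 ≠ 0 := ne_of_gt (by linarith)
  have hδt : δ * (t2 - t1) = (S2 - S1) / 2 := by
    rw [hδdef, div_mul_eq_mul_div, mul_comm 2 (t2 - t1), ← div_div, mul_div_assoc,
      div_self hne, mul_one]
  -- the compact parabolic domain
  set D : Set (ℝ × ℝ) := {p : ℝ × ℝ | p.1 ∈ Icc t1 t2 ∧ p.2 ∈ Icc 0 (h p.1)} with hDdef
  have hsubJ : Icc t1 t2 ⊆ Icc 0 T := Icc_subset_Icc ht1.1 ht2.2
  have hDimg : D = (fun q : ℝ × ℝ => (q.1, q.2 * h q.1)) '' (Icc t1 t2 ×ˢ Icc 0 1) := by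
    ext p
    constructor
    · rintro ⟨hp1, hp2⟩
      have hhp : 0 < h p.1 := hsol.h_pos p.1 (hsubJ hp1)
      refine ⟨(p.1, p.2 / h p.1), ⟨hp1, ⟨div_nonneg hp2.1 hhp.le, ?_⟩⟩, ?_⟩
      · rw [div_le_one hhp]; exact hp2.2
      · simp only []
        rw [div_mul_cancel₀ _ hhp.ne']
    · rintro ⟨q, ⟨hq1, hq2⟩, rfl⟩
      have hhp : 0 < h q.1 := hsol.h_pos q.1 (hsubJ hq1)
      exact ⟨hq1, ⟨mul_nonneg hq2.1 hhp.le, mul_le_of_le_one_left hhp.le hq2.2⟩⟩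
  have hDcomp : IsCompact D := by
    rw [hDimg]
    apply (isCompact_Icc.prod isCompact_Icc).image_of_continuousOn
    apply ContinuousOn.prodMk continuousOn_fst
    exact continuousOn_snd.mul (ContinuousOn.comp
      (fun t ht => (hhc t ht).continuousWithinAt) continuousOn_fst
      (fun q hq => hsubJ hq.1))
  set φ : ℝ × ℝ → ℝ := fun p => u p.1 p.2 - δ * (p.1 - t1) with hφdef
  have hφc : ContinuousOn φ D := by
    apply ContinuousOn.sub
    · exact hsol.u_cont.mono (fun p hp => ⟨hsubJ hp.1, hp.2⟩)
    · exact (continuous_const.mul (continuous_fst.sub continuous_const)).continuousOn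
  have hDne : D.Nonempty := ⟨(t2, 0), ⟨⟨h12, le_rfl⟩, ⟨le_rfl, (hsol.h_pos t2 ht2).le⟩⟩⟩
  have hφeval : ∀ s y : ℝ, φ (s, y) = u s y - δ * (s - t1) := fun s y => by rw [hφdef]
  clear_value φ
  obtain ⟨⟨t', x'⟩, ⟨hpt, hpx⟩, hpmax⟩ := hDcomp.exists_isMaxOn hDne hφc
  simp only [] at hpt hpx
  -- the maximum value of φ is large
  obtain ⟨x2, hx2, hx2max⟩ :=
    isCompact_Icc.exists_isMaxOn (nonempty_Icc.mpr (hsol.h_pos t2 ht2).le) (husc t2 ht2)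
  have hS2eq : S2 = u t2 x2 := by
    rw [hS2def]
    exact IsGreatest.csSup_eq ⟨⟨x2, hx2, rfl⟩, by rintro y ⟨x, hx, rfl⟩; exact hx2max hx⟩
  have hlow : S2 - δ * (t2 - t1) ≤ φ (t', x') := by
    have h2 : φ (t2, x2) ≤ φ (t', x') := hpmax (show (t2, x2) ∈ D from ⟨⟨h12, le_rfl⟩, hx2⟩)
    rw [hφeval t2 x2] at h2
    rw [hS2eq]
    exact h2
  have hkey : S1 < φ (t', x') := by
    rw [hδt] at hlow; linarith
  have ht'1 : t1 < t' := by
    rcases eq_or_lt_of_le hpt.1 with he | hl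
    · exfalso
      have : φ (t', x') = u t' x' := by rw [hφeval, ← he]; simp
      have h2 : u t' x' ≤ S1 := by
        rw [← he] at hpx ⊢
        rw [hS1def]
        exact hub t1 ht1 x' hpx
      rw [this] at hkey; linarith
    · exact hl
  have ht'J : t' ∈ Icc 0 T := hsubJ hpt
  have ht'Jr : t' ∈ Ioc 0 T := ⟨lt_of_le_of_lt ht1.1 ht'1, ht'J.2⟩
  have hS1nn : 0 ≤ S1 := by
    have h0m : (0:ℝ) ∈ Icc 0 (h t1) := ⟨le_rfl, (hsol.h_pos t1 ht1).le⟩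
    rw [hS1def]
    exact le_trans (hsol.u_nonneg t1 ht1 0 h0m) (hub t1 ht1 0 h0m)
  have hx'lt : x' < h t' := by
    rcases lt_or_eq_of_le hpx.2 with hl | he
    · exact hl
    · exfalso
      have : φ (t', x') = - (δ * (t' - t1)) := by
        rw [hφeval, he, (hsol.bch t' ht'J).1]; ring
      rw [this] at hkey
      linarith [mul_pos hδ (show (0:ℝ) < t' - t1 by linarith)]
  -- x' maximizes u t' over its domain
  have hmaxx : ∀ x ∈ Icc 0 (h t'), u t' x ≤ u t' x' := by
    intro x hx
    have h2 : φ (t', x) ≤ φ (t', x') := hpmax (show (t', x) ∈ D from ⟨hpt, hx⟩)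
    rw [hφeval, hφeval] at h2
    linarith
  -- differentiability of u t' in x
  have hudx : ∀ x ∈ Icc 0 (h t'), DifferentiableAt ℝ (u t') x := fun x hx =>
    (hsol.u_diff_x t' ht'Jr x hx).1
  have hudx2 : ∀ x ∈ Icc 0 (h t'), DifferentiableAt ℝ (deriv (u t')) x := fun x hx =>
    (hsol.u_diff_x t' ht'Jr x hx).2
  have hdx : deriv (u t') x' = 0 := by
    rcases eq_or_lt_of_le hpx.1 with h0 | h0
    · rw [← h0]; exact (hsol.bc0 t' ht'J).1
    · exact ((isMaxOn_iff.mpr hmaxx).isLocalMax (Icc_mem_nhds h0 hx'lt)).deriv_eq_zero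
  have hdxx : deriv (deriv (u t')) x' ≤ 0 := by
    refine secondDerivNonpos hpx.1 hx'lt hmaxx hudx hudx2 ?_ hdx
    exact (sliceCont hsol.uxx_cont ht'Jr) x' hpx
  have hSeq : sSup (u t' '' Icc 0 (h t')) = u t' x' := by
    exact IsGreatest.csSup_eq ⟨⟨x', hpx, rfl⟩, by rintro y ⟨x, hx, rfl⟩; exact hmaxx x hx⟩
  have hUM0 : M0const χ1 χ2 lam1 lam2 μ1 μ2 a b < u t' x' := by
    have := hbig t' ht'J; rwa [hSeq] at this
  have hUnn : 0 ≤ u t' x' := hsol.u_nonneg t' ht'J x' hpx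
  have hUpos : 0 < u t' x' := lt_of_le_of_lt (le_of_lt (div_pos hsupa_pos hc)) hUM0
  have hcU : supOn a < (infOn b + χ2 * μ2 - χ1 * μ1 - Mconst χ1 χ2 lam1 lam2 μ1 μ2) * u t' x' := by
    have h1 : supOn a / (infOn b + χ2 * μ2 - χ1 * μ1 - Mconst χ1 χ2 lam1 lam2 μ1 μ2) < u t' x' := hUM0
    calc supOn a = (supOn a / (infOn b + χ2 * μ2 - χ1 * μ1 - Mconst χ1 χ2 lam1 lam2 μ1 μ2)) *
        (infOn b + χ2 * μ2 - χ1 * μ1 - Mconst χ1 χ2 lam1 lam2 μ1 μ2) := by field_simp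
      _ < _ := by rw [mul_comm (infOn b + χ2 * μ2 - χ1 * μ1 - Mconst χ1 χ2 lam1 lam2 μ1 μ2) (u t' x')]
                  exact mul_lt_mul_of_pos_right h1 hc
  set U := u t' x' with hUdef
  have hUx : u t' x' = U := hUdef.symm
  have hmaxU : ∀ x ∈ Icc 0 (h t'), u t' x ≤ U := hmaxx
  clear_value U
  -- the time derivative of u at (t', x') is at least δ
  have hut : δ ≤ deriv (fun s => u s x') t' := by
    have hev : ∀ᶠ s in 𝓝 t', x' < h s := (hhc t' ht'J).eventually (eventually_gt_nhds hx'lt)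
    obtain ⟨ε, hε, hball⟩ := Metric.eventually_nhds_iff.mp hev
    set η := min (ε / 2) (t' - t1) with hηdef
    have hηpos : 0 < η := lt_min (by linarith) (by linarith)
    have hψd : DifferentiableAt ℝ (fun s => u s x') t' := hsol.u_diff_t t' ht'Jr x' hpx
    set ψ : ℝ → ℝ := fun s => u s x' - δ * (s - t1) with hψdef
    have hlin : HasDerivAt (fun s : ℝ => δ * (s - t1)) δ t' := by
      simpa using ((hasDerivAt_id t').sub_const t1).const_mul δ
    have hψdiff : HasDerivAt ψ (deriv (fun s => u s x') t' - δ) t' :=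
      hψd.hasDerivAt.sub hlin
    have hψmax : ∀ s ∈ Ico (t' - η) t', ψ s ≤ ψ t' := by
      intro s hs
      have hsx : x' < h s := by
        apply hball
        rw [Real.dist_eq, abs_lt]
        constructor
        · have : η ≤ ε / 2 := min_le_left _ _
          linarith [hs.1]
        · linarith [hs.2, hε]
      have hst1 : t1 ≤ s := by
        have : η ≤ t' - t1 := min_le_right _ _
        linarith [hs.1]
      have hsd : (s, x') ∈ D := ⟨⟨hst1, le_trans hs.2.le hpt.2⟩, ⟨hpx.1, hsx.le⟩⟩
      have h2 : φ (s, x') ≤ φ (t', x') := hpmax hsd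
      rw [hφeval, hφeval] at h2
      exact h2
    have h0d := derivNonnegOfLeftMax hηpos hψdiff.differentiableAt hψmax
    rw [hψdiff.deriv] at h0d
    linarith
  -- v bounds via the maximum principle
  have hL0 : 0 < h t' := hsol.h_pos t' ht'J
  have hv1d : ∀ x ∈ Icc 0 (h t'), DifferentiableAt ℝ (v1 t') x := fun x hx =>
    (hsol.v1_diff_x t' ht'J x hx).1
  have hv1d2 : ∀ x ∈ Icc 0 (h t'), DifferentiableAt ℝ (deriv (v1 t')) x := fun x hx =>
    (hsol.v1_diff_x t' ht'J x hx).2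
  have hv2d : ∀ x ∈ Icc 0 (h t'), DifferentiableAt ℝ (v2 t') x := fun x hx =>
    (hsol.v2_diff_x t' ht'J x hx).1
  have hv2d2 : ∀ x ∈ Icc 0 (h t'), DifferentiableAt ℝ (deriv (v2 t')) x := fun x hx =>
    (hsol.v2_diff_x t' ht'J x hx).2
  have hv1nn : ∀ x ∈ Icc 0 (h t'), 0 ≤ v1 t' x := hsol.v1_nonneg t' ht'J
  have hv2nn : ∀ x ∈ Icc 0 (h t'), 0 ≤ v2 t' x := hsol.v2_nonneg t' ht'J
  have hunn : ∀ x ∈ Icc 0 (h t'), 0 ≤ u t' x := hsol.u_nonneg t' ht'J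
  -- v1 ≤ μ1/lam1 * U
  have hv1b : ∀ x ∈ Icc 0 (h t'), v1 t' x ≤ μ1 / lam1 * U := by
    have hder : deriv (fun y => v1 t' y - μ1 / lam1 * U) = deriv (v1 t') := by
      funext y; exact deriv_sub_const _
    have := maxPrinciple hL0 hlam1 (w := fun y => v1 t' y - μ1 / lam1 * U)
      (fun x hx => (hv1d x hx).sub_const _)
      (by rw [hder]; exact fun x hx => (hv1d2 x hx).continuousAt.continuousWithinAt)
      (by
        intro x hx
        have hxI : x ∈ Icc 0 (h t') := Ioo_subset_Icc_self hx
        rw [hder]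
        have hode := hsol.v1_ode t' ht'J x hx
        have hmm : lam1 * (μ1 / lam1 * U) = μ1 * U := by field_simp
        have hu : μ1 * u t' x ≤ μ1 * U := mul_le_mul_of_nonneg_left (hmaxU x hxI) hμ1
        linarith [hode, hmm, hu])
      (by rw [hder]; exact (hsol.bc0 t' ht'J).2.1)
      (by rw [hder]; exact (hsol.bch t' ht'J).2.1)
    intro x hx
    have := this x hx
    linarith
  have hv2b : ∀ x ∈ Icc 0 (h t'), v2 t' x ≤ μ2 / lam2 * U := by
    have hder : deriv (fun y => v2 t' y - μ2 / lam2 * U) = deriv (v2 t') := by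
      funext y; exact deriv_sub_const _
    have := maxPrinciple hL0 hlam2 (w := fun y => v2 t' y - μ2 / lam2 * U)
      (fun x hx => (hv2d x hx).sub_const _)
      (by rw [hder]; exact fun x hx => (hv2d2 x hx).continuousAt.continuousWithinAt)
      (by
        intro x hx
        have hxI : x ∈ Icc 0 (h t') := Ioo_subset_Icc_self hx
        rw [hder]
        have hode := hsol.v2_ode t' ht'J x hx
        have hmm : lam2 * (μ2 / lam2 * U) = μ2 * U := by field_simp
        have hu : μ2 * u t' x ≤ μ2 * U := mul_le_mul_of_nonneg_left (hmaxU x hxI) hμ2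
        linarith [hode, hmm, hu])
      (by rw [hder]; exact (hsol.bc0 t' ht'J).2.2)
      (by rw [hder]; exact (hsol.bch t' ht'J).2.2)
    intro x hx
    have := this x hx
    linarith
  -- the combined bound χ2 lam2 v2 - χ1 lam1 v1 ≤ M U
  have hppA1 : χ2 * μ2 * lam2 - χ1 * μ1 * lam1 ≤ pp (χ2 * μ2 * lam2 - χ1 * μ1 * lam1) :=
    le_max_left _ _
  have hppA2 : 0 ≤ pp (χ2 * μ2 * lam2 - χ1 * μ1 * lam1) := le_max_right _ _
  have hppL1 : lam1 - lam2 ≤ pp (lam1 - lam2) := le_max_left _ _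
  have hppL2 : 0 ≤ pp (lam1 - lam2) := le_max_right _ _
  have hzgen : ∀ lam M1 : ℝ, 0 < lam →
      (∀ x ∈ Ioo 0 (h t'),
        lam * (χ2 * lam2 * v2 t' x - χ1 * lam1 * v1 t' x - M1 * U) ≤
          χ2 * lam2 * (lam2 * v2 t' x - μ2 * u t' x) -
            χ1 * lam1 * (lam1 * v1 t' x - μ1 * u t' x)) →
      ∀ x ∈ Icc 0 (h t'), χ2 * lam2 * v2 t' x - χ1 * lam1 * v1 t' x ≤ M1 * U := by
    intro lam M1 hlam hineq
    set w : ℝ → ℝ := fun y => χ2 * lam2 * v2 t' y - χ1 * lam1 * v1 t' y - M1 * U with hwdef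
    set g : ℝ → ℝ := fun y => χ2 * lam2 * deriv (v2 t') y - χ1 * lam1 * deriv (v1 t') y
      with hgdef
    have hwdiff : ∀ x ∈ Icc 0 (h t'), HasDerivAt w (g x) x := by
      intro x hx
      exact (((hv2d x hx).hasDerivAt.const_mul (χ2 * lam2)).sub
        ((hv1d x hx).hasDerivAt.const_mul (χ1 * lam1))).sub_const (M1 * U)
    have hdw : ∀ x ∈ Icc 0 (h t'), deriv w x = g x := fun x hx => (hwdiff x hx).deriv
    have hgc : ContinuousOn g (Icc 0 (h t')) := by
      apply ContinuousOn.sub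
      · exact continuousOn_const.mul
          (fun x hx => (hv2d2 x hx).continuousAt.continuousWithinAt)
      · exact continuousOn_const.mul
          (fun x hx => (hv1d2 x hx).continuousAt.continuousWithinAt)
    have := maxPrinciple hL0 hlam (w := w)
      (fun x hx => (hwdiff x hx).differentiableAt)
      (hgc.congr hdw)
      (by
        intro x hx
        have hxI : x ∈ Icc 0 (h t') := Ioo_subset_Icc_self hx
        have hevq : deriv w =ᶠ[𝓝 x] g := by
          filter_upwards [Ioo_mem_nhds hx.1 hx.2] with y hy
          exact hdw y (Ioo_subset_Icc_self hy)
        rw [hevq.deriv_eq]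
        have hgder : deriv g x =
            χ2 * lam2 * deriv (deriv (v2 t')) x - χ1 * lam1 * deriv (deriv (v1 t')) x :=
          (((hv2d2 x hxI).hasDerivAt.const_mul (χ2 * lam2)).sub
            ((hv1d2 x hxI).hasDerivAt.const_mul (χ1 * lam1))).deriv
        rw [hgder]
        have h1 : deriv (deriv (v1 t')) x = lam1 * v1 t' x - μ1 * u t' x := by
          linarith [hsol.v1_ode t' ht'J x hx]
        have h2 : deriv (deriv (v2 t')) x = lam2 * v2 t' x - μ2 * u t' x := by
          linarith [hsol.v2_ode t' ht'J x hx]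
        rw [h1, h2]
        exact hineq x hx)
      (by
        rw [hdw 0 ⟨le_rfl, hL0.le⟩, hgdef]
        simp only []
        rw [(hsol.bc0 t' ht'J).2.1, (hsol.bc0 t' ht'J).2.2]; ring)
      (by
        rw [hdw (h t') ⟨hL0.le, le_rfl⟩, hgdef]
        simp only []
        rw [(hsol.bch t' ht'J).2.1, (hsol.bch t' ht'J).2.2]; ring)
    intro x hx
    have := this x hx
    simp only [hwdef] at this
    linarith
  have hz1 : ∀ x ∈ Icc 0 (h t'), χ2 * lam2 * v2 t' x - χ1 * lam1 * v1 t' x ≤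
      (1 / lam2) * (pp (χ2 * μ2 * lam2 - χ1 * μ1 * lam1) + χ1 * μ1 * pp (lam1 - lam2)) * U := by
    apply hzgen _ _ hlam2
    intro x hx
    have hxI : x ∈ Icc 0 (h t') := Ioo_subset_Icc_self hx
    have hMid : lam2 * ((1 / lam2) * (pp (χ2 * μ2 * lam2 - χ1 * μ1 * lam1) +
        χ1 * μ1 * pp (lam1 - lam2))) =
        pp (χ2 * μ2 * lam2 - χ1 * μ1 * lam1) + χ1 * μ1 * pp (lam1 - lam2) := by
      field_simp
    have e1 : (χ2 * μ2 * lam2 - χ1 * μ1 * lam1) * u t' x ≤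
        pp (χ2 * μ2 * lam2 - χ1 * μ1 * lam1) * U := by
      have p1 : (χ2 * μ2 * lam2 - χ1 * μ1 * lam1) * u t' x ≤
          pp (χ2 * μ2 * lam2 - χ1 * μ1 * lam1) * u t' x :=
        mul_le_mul_of_nonneg_right hppA1 (hunn x hxI)
      have p2 : pp (χ2 * μ2 * lam2 - χ1 * μ1 * lam1) * u t' x ≤
          pp (χ2 * μ2 * lam2 - χ1 * μ1 * lam1) * U :=
        mul_le_mul_of_nonneg_left (hmaxU x hxI) hppA2
      linarith [p1, p2]
    have e2 : χ1 * lam1 * (lam1 - lam2) * v1 t' x ≤ χ1 * μ1 * pp (lam1 - lam2) * U := by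
      have hvb := hv1b x hxI
      have hvn := hv1nn x hxI
      have key : χ1 * lam1 * pp (lam1 - lam2) * v1 t' x ≤
          χ1 * lam1 * pp (lam1 - lam2) * (μ1 / lam1 * U) := by
        apply mul_le_mul_of_nonneg_left hvb
        positivity
      have hrw : χ1 * lam1 * pp (lam1 - lam2) * (μ1 / lam1 * U) =
          χ1 * μ1 * pp (lam1 - lam2) * U := by field_simp
      have step1 : 0 ≤ (pp (lam1 - lam2) - (lam1 - lam2)) * (χ1 * lam1 * v1 t' x) :=
        mul_nonneg (sub_nonneg.mpr hppL1) (mul_nonneg (mul_nonneg hχ1 hlam1.le) hvn)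
      linarith [key, hrw, step1]
    have hMidU := congrArg (fun z => z * U) hMid
    linarith [e1, e2, hMidU]
  have hz2 : ∀ x ∈ Icc 0 (h t'), χ2 * lam2 * v2 t' x - χ1 * lam1 * v1 t' x ≤
      (1 / lam1) * (pp (χ2 * μ2 * lam2 - χ1 * μ1 * lam1) + χ2 * μ2 * pp (lam1 - lam2)) * U := by
    apply hzgen _ _ hlam1
    intro x hx
    have hxI : x ∈ Icc 0 (h t') := Ioo_subset_Icc_self hx
    have hMid : lam1 * ((1 / lam1) * (pp (χ2 * μ2 * lam2 - χ1 * μ1 * lam1) +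
        χ2 * μ2 * pp (lam1 - lam2))) =
        pp (χ2 * μ2 * lam2 - χ1 * μ1 * lam1) + χ2 * μ2 * pp (lam1 - lam2) := by
      field_simp
    have e1 : (χ2 * μ2 * lam2 - χ1 * μ1 * lam1) * u t' x ≤
        pp (χ2 * μ2 * lam2 - χ1 * μ1 * lam1) * U := by
      have p1 : (χ2 * μ2 * lam2 - χ1 * μ1 * lam1) * u t' x ≤
          pp (χ2 * μ2 * lam2 - χ1 * μ1 * lam1) * u t' x :=
        mul_le_mul_of_nonneg_right hppA1 (hunn x hxI)
      have p2 : pp (χ2 * μ2 * lam2 - χ1 * μ1 * lam1) * u t' x ≤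
          pp (χ2 * μ2 * lam2 - χ1 * μ1 * lam1) * U :=
        mul_le_mul_of_nonneg_left (hmaxU x hxI) hppA2
      linarith [p1, p2]
    have e2 : χ2 * lam2 * (lam1 - lam2) * v2 t' x ≤ χ2 * μ2 * pp (lam1 - lam2) * U := by
      have hvb := hv2b x hxI
      have hvn := hv2nn x hxI
      have key : χ2 * lam2 * pp (lam1 - lam2) * v2 t' x ≤
          χ2 * lam2 * pp (lam1 - lam2) * (μ2 / lam2 * U) := by
        apply mul_le_mul_of_nonneg_left hvb
        positivity
      have hrw : χ2 * lam2 * pp (lam1 - lam2) * (μ2 / lam2 * U) =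
          χ2 * μ2 * pp (lam1 - lam2) * U := by field_simp
      have step1 : 0 ≤ (pp (lam1 - lam2) - (lam1 - lam2)) * (χ2 * lam2 * v2 t' x) :=
        mul_nonneg (sub_nonneg.mpr hppL1) (mul_nonneg (mul_nonneg hχ2 hlam2.le) hvn)
      linarith [key, hrw, step1]
    have hMidU := congrArg (fun z => z * U) hMid
    linarith [e1, e2, hMidU]
  have hvb : χ2 * lam2 * v2 t' x' - χ1 * lam1 * v1 t' x' ≤
      Mconst χ1 χ2 lam1 lam2 μ1 μ2 * U := by
    have h1 := hz1 x' hpx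
    have h2 := hz2 x' hpx
    rw [Mconst]
    rcases min_cases ((1 / lam2) * (pp (χ2 * μ2 * lam2 - χ1 * μ1 * lam1) +
        χ1 * μ1 * pp (lam1 - lam2)))
      ((1 / lam1) * (pp (χ2 * μ2 * lam2 - χ1 * μ1 * lam1) + χ2 * μ2 * pp (lam1 - lam2)))
      with ⟨hm, _⟩ | ⟨hm, _⟩ <;> rw [hm]
    · exact h1
    · exact h2
  -- the pde at (t', x')
  set G : ℝ → ℝ := fun x =>
    deriv (deriv (u t')) x
      - χ1 * (deriv (u t') x * deriv (v1 t') x + u t' x * (lam1 * v1 t' x - μ1 * u t' x))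
      + χ2 * (deriv (u t') x * deriv (v2 t') x + u t' x * (lam2 * v2 t' x - μ2 * u t' x))
      + u t' x * (a t' x - b t' x * u t' x) with hGdef
  have hGeval : ∀ x, G x =
    deriv (deriv (u t')) x
      - χ1 * (deriv (u t') x * deriv (v1 t') x + u t' x * (lam1 * v1 t' x - μ1 * u t' x))
      + χ2 * (deriv (u t') x * deriv (v2 t') x + u t' x * (lam2 * v2 t' x - μ2 * u t' x))
      + u t' x * (a t' x - b t' x * u t' x) := fun x => by rw [hGdef]
  have hGoo : ∀ x ∈ Ioo 0 (h t'), deriv (fun s => u s x) t' = G x := by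
    intro x hx
    have hxI : x ∈ Icc 0 (h t') := Ioo_subset_Icc_self hx
    have h1 := hsol.pde t' ht'Jr x hx
    have hv1xx : deriv (deriv (v1 t')) x = lam1 * v1 t' x - μ1 * u t' x := by
      linarith [hsol.v1_ode t' ht'J x hx]
    have hv2xx : deriv (deriv (v2 t')) x = lam2 * v2 t' x - μ2 * u t' x := by
      linarith [hsol.v2_ode t' ht'J x hx]
    have hm1 : deriv (fun y => u t' y * deriv (v1 t') y) x =
        deriv (u t') x * deriv (v1 t') x + u t' x * deriv (deriv (v1 t')) x :=
      deriv_mul (hudx x hxI) (hv1d2 x hxI)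
    have hm2 : deriv (fun y => u t' y * deriv (v2 t') y) x =
        deriv (u t') x * deriv (v2 t') x + u t' x * deriv (deriv (v2 t')) x :=
      deriv_mul (hudx x hxI) (hv2d2 x hxI)
    rw [h1, hm1, hm2, hv1xx, hv2xx, hGeval]
  have hGc : ContinuousOn G (Icc 0 (h t')) := by
    have c_u : ContinuousOn (fun x => u t' x) (Icc 0 (h t')) := fun x hx =>
      (hudx x hx).continuousAt.continuousWithinAt
    have c_ux : ContinuousOn (fun x => deriv (u t') x) (Icc 0 (h t')) := fun x hx =>
      (hudx2 x hx).continuousAt.continuousWithinAt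
    have c_uxx : ContinuousOn (fun x => deriv (deriv (u t')) x) (Icc 0 (h t')) :=
      sliceCont hsol.uxx_cont ht'Jr
    have c_v1 : ContinuousOn (fun x => v1 t' x) (Icc 0 (h t')) := fun x hx =>
      (hv1d x hx).continuousAt.continuousWithinAt
    have c_v1x : ContinuousOn (fun x => deriv (v1 t') x) (Icc 0 (h t')) := fun x hx =>
      (hv1d2 x hx).continuousAt.continuousWithinAt
    have c_v2 : ContinuousOn (fun x => v2 t' x) (Icc 0 (h t')) := fun x hx =>
      (hv2d x hx).continuousAt.continuousWithinAt
    have c_v2x : ContinuousOn (fun x => deriv (v2 t') x) (Icc 0 (h t')) := fun x hx =>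
      (hv2d2 x hx).continuousAt.continuousWithinAt
    have c_pair : ContinuousOn (fun x : ℝ => (t', x)) (Icc 0 (h t')) :=
      (continuous_const.prodMk continuous_id).continuousOn
    have c_a : ContinuousOn (fun x => a t' x) (Icc 0 (h t')) :=
      (ha.smooth.continuousOn.comp c_pair (fun x hx => ⟨mem_univ _, hx.1⟩))
    have c_b : ContinuousOn (fun x => b t' x) (Icc 0 (h t')) :=
      (hb.smooth.continuousOn.comp c_pair (fun x hx => ⟨mem_univ _, hx.1⟩))
    rw [hGdef]
    exact (((c_uxx.sub (continuousOn_const.mul ((c_ux.mul c_v1x).add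
        (c_u.mul ((continuousOn_const.mul c_v1).sub (continuousOn_const.mul c_u)))))).add
      (continuousOn_const.mul ((c_ux.mul c_v2x).add
        (c_u.mul ((continuousOn_const.mul c_v2).sub (continuousOn_const.mul c_u)))))).add
      (c_u.mul (c_a.sub (c_b.mul c_u))))
  clear_value G
  have hpdex : deriv (fun s => u s x') t' = G x' := by
    rcases eq_or_lt_of_le hpx.1 with h0 | h0
    · rw [← h0]
      refine eqAtZero hL0 ?_ ?_ hGoo
      · exact (sliceCont hsol.ut_cont ht'Jr) 0 ⟨le_rfl, hL0.le⟩
      · exact hGc 0 ⟨le_rfl, hL0.le⟩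
    · exact hGoo x' ⟨h0, hx'lt⟩
  -- final contradiction
  have ha' : a t' x' ≤ supOn a := hsupa t' x' hpx.1
  have hb' : infOn b ≤ b t' x' := hinfb t' x' hpx.1
  have hfin : G x' ≤ 0 := by
    rw [hGeval, hdx, hUx]
    have hprod : (χ2 * lam2 * v2 t' x' - χ1 * lam1 * v1 t' x') * U ≤
        Mconst χ1 χ2 lam1 lam2 μ1 μ2 * U * U :=
      mul_le_mul_of_nonneg_right hvb hUnn
    have hbU : infOn b * (U * U) ≤ b t' x' * (U * U) :=
      mul_le_mul_of_nonneg_right hb' (by positivity)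
    have haU : U * a t' x' ≤ U * supOn a := mul_le_mul_of_nonneg_left ha' hUnn
    have hcUU : supOn a * U ≤
        (infOn b + χ2 * μ2 - χ1 * μ1 - Mconst χ1 χ2 lam1 lam2 μ1 μ2) * U * U :=
      mul_le_mul_of_nonneg_right hcU.le hUnn
    linarith [hprod, hbU, haU, hcUU, hdxx]
  rw [hpdex] at hut
  linarith
end

section
/- Let L > 0, let u : [0, L] → ℝ be continuous with u ≥ 0, and let v1, v2 ∈ C²([0, L]) satisfy v_i''(x) − λ_i v_i(x) + μ_i u(x) = 0 for all x ∈ [0, L] and v_i'(0) = v_i'(L) = 0, for i = 1, 2. Then χ2 λ2 v2(x) − χ1 λ1 v1(x) ≤ M · sup_{[0,L]} u for every x ∈ [0, L]. -/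
open Set

/-- 1D maximum principle on [0,L] with Neumann BC. -/
lemma maxprin (lam L B : ℝ) (hlam : 0 < lam) (hL : 0 < L)
    (w w' w'' f : ℝ → ℝ)
    (hwd : ∀ x ∈ Icc (0:ℝ) L, HasDerivAt w (w' x) x)
    (hwdd : ∀ x ∈ Icc (0:ℝ) L, HasDerivAt w' (w'' x) x)
    (heq : ∀ x ∈ Icc (0:ℝ) L, w'' x = lam * w x - f x)
    (hf : ∀ x ∈ Icc (0:ℝ) L, f x ≤ B)
    (hbc0 : w' 0 = 0) (hbcL : w' L = 0) :
    ∀ x ∈ Icc (0:ℝ) L, w x ≤ B / lam := by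
  have hne : (Icc (0:ℝ) L).Nonempty := nonempty_Icc.2 hL.le
  have hcw : ContinuousOn w (Icc 0 L) := fun x hx => (hwd x hx).continuousAt.continuousWithinAt
  obtain ⟨x0, hx0, hmax⟩ := isCompact_Icc.exists_isMaxOn hne hcw
  suffices hkey : w x0 ≤ B / lam by
    intro x hx; exact le_trans (hmax hx) hkey
  by_contra hcon
  push_neg at hcon
  have hW : B < lam * w x0 := by
    rw [div_lt_iff₀ hlam] at hcon; linarith
  have hpos : 0 < w'' x0 := by
    have h1 := heq x0 hx0; have h2 := hf x0 hx0; linarith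
  have hder0 : w' x0 = 0 := by
    rcases eq_or_lt_of_le hx0.1 with h0 | h0
    · rw [← h0]; exact hbc0
    rcases eq_or_lt_of_le hx0.2 with hL' | hL'
    · rw [hL']; exact hbcL
    · have hnbhd : Icc (0:ℝ) L ∈ nhds x0 := Icc_mem_nhds h0 hL'
      have hlm : IsLocalMax w x0 := hmax.isLocalMax hnbhd
      exact hlm.hasDerivAt_eq_zero (hwd x0 hx0)
  have htend : Filter.Tendsto (slope w' x0) (nhdsWithin x0 {x0}ᶜ) (nhds (w'' x0)) :=
    hasDerivAt_iff_tendsto_slope.1 (hwdd x0 hx0)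
  rcases lt_or_eq_of_le hx0.2 with hx0L | hx0L
  · -- max attained with room on the right
    have htend' : Filter.Tendsto (slope w' x0) (nhdsWithin x0 (Ioi x0)) (nhds (w'' x0)) :=
      htend.mono_left (nhdsWithin_mono _ (fun t ht => ht.ne'))
    obtain ⟨b, hb, hsub⟩ := mem_nhdsGT_iff_exists_Ioo_subset.1
      (htend' (Ioi_mem_nhds hpos))
    set c := min b L with hc
    have hx0c : x0 < c := lt_min hb hx0L
    have hsubIcc : Icc x0 c ⊆ Icc 0 L := Icc_subset_Icc hx0.1 (min_le_right b L)
    have hwpos : ∀ t ∈ Ioo x0 c, 0 < w' t := by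
      intro t ht
      have hts : t ∈ Ioo x0 b := ⟨ht.1, lt_of_lt_of_le ht.2 (min_le_left _ _)⟩
      have hsl : 0 < slope w' x0 t := hsub hts
      rw [slope_def_field, hder0] at hsl
      have htx : 0 < t - x0 := sub_pos.2 ht.1
      rw [div_pos_iff] at hsl
      rcases hsl with ⟨h1, _⟩ | ⟨_, h2⟩
      · linarith
      · linarith
    have hmono : StrictMonoOn w (Icc x0 c) := by
      apply strictMonoOn_of_deriv_pos (convex_Icc x0 c) (hcw.mono hsubIcc)
      intro t ht
      rw [interior_Icc] at ht
      rw [(hwd t (hsubIcc (Ioo_subset_Icc_self ht))).deriv]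
      exact hwpos t ht
    have hlt : w x0 < w c :=
      hmono (left_mem_Icc.2 hx0c.le) (right_mem_Icc.2 hx0c.le) hx0c
    exact absurd (hmax (hsubIcc (right_mem_Icc.2 hx0c.le))) (not_le.2 hlt)
  · -- x0 = L, room on the left
    have hx00 : 0 < x0 := by rw [hx0L]; exact hL
    have htend' : Filter.Tendsto (slope w' x0) (nhdsWithin x0 (Iio x0)) (nhds (w'' x0)) :=
      htend.mono_left (nhdsWithin_mono _ (fun t ht => ht.ne))
    obtain ⟨b, hb, hsub⟩ := mem_nhdsLT_iff_exists_Ioo_subset.1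
      (htend' (Ioi_mem_nhds hpos))
    set c := max b 0 with hc
    have hcx0 : c < x0 := max_lt hb hx00
    have hsubIcc : Icc c x0 ⊆ Icc 0 L := Icc_subset_Icc (le_max_right b 0) hx0.2
    have hwneg : ∀ t ∈ Ioo c x0, w' t < 0 := by
      intro t ht
      have hts : t ∈ Ioo b x0 := ⟨lt_of_le_of_lt (le_max_left b 0) ht.1, ht.2⟩
      have hsl : 0 < slope w' x0 t := hsub hts
      rw [slope_def_field, hder0] at hsl
      have htx : t - x0 < 0 := sub_neg.2 ht.2
      rw [div_pos_iff] at hsl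
      rcases hsl with ⟨_, h2⟩ | ⟨h1, _⟩
      · linarith
      · linarith
    have hanti : StrictAntiOn w (Icc c x0) := by
      apply strictAntiOn_of_deriv_neg (convex_Icc c x0) (hcw.mono hsubIcc)
      intro t ht
      rw [interior_Icc] at ht
      rw [(hwd t (hsubIcc (Ioo_subset_Icc_self ht))).deriv]
      exact hwneg t ht
    have hlt : w x0 < w c :=
      hanti (left_mem_Icc.2 hcx0.le) (right_mem_Icc.2 hcx0.le) hcx0
    exact absurd (hmax (hsubIcc (left_mem_Icc.2 hcx0.le))) (not_le.2 hlt)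

/-- bounds 0 ≤ v and lam * v ≤ mu * S for a Neumann solution. -/
lemma vbounds (lam mu L S : ℝ) (hlam : 0 < lam) (hmu : 0 ≤ mu) (hL : 0 < L)
    (u v v' v'' : ℝ → ℝ)
    (hvd : ∀ x ∈ Icc (0:ℝ) L, HasDerivAt v (v' x) x)
    (hvdd : ∀ x ∈ Icc (0:ℝ) L, HasDerivAt v' (v'' x) x)
    (heq : ∀ x ∈ Icc (0:ℝ) L, v'' x - lam * v x + mu * u x = 0)
    (hbc0 : v' 0 = 0) (hbcL : v' L = 0)
    (hu0 : ∀ x ∈ Icc (0:ℝ) L, 0 ≤ u x) (huS : ∀ x ∈ Icc (0:ℝ) L, u x ≤ S) :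
    ∀ x ∈ Icc (0:ℝ) L, 0 ≤ v x ∧ lam * v x ≤ mu * S := by
  have hupper := maxprin lam L (mu * S) hlam hL v v' v'' (fun x => mu * u x)
    hvd hvdd (fun x hx => by have := heq x hx; linarith)
    (fun x hx => mul_le_mul_of_nonneg_left (huS x hx) hmu) hbc0 hbcL
  have hlower := maxprin lam L 0 hlam hL (fun x => -v x) (fun x => -v' x)
    (fun x => -v'' x) (fun x => -(mu * u x))
    (fun x hx => (hvd x hx).neg) (fun x hx => (hvdd x hx).neg)
    (fun x hx => by have := heq x hx; linarith)
    (fun x hx => neg_nonpos.2 (mul_nonneg hmu (hu0 x hx)))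
    (by simp [hbc0]) (by simp [hbcL])
  intro x hx
  have h1 := hupper x hx
  have h2 := hlower x hx
  simp only [zero_div] at h2
  constructor
  · linarith
  · rw [le_div_iff₀ hlam] at h1
    linarith

lemma pp_ge (x : ℝ) : x ≤ pp x := le_max_left x 0
lemma pp_nonneg (x : ℝ) : 0 ≤ pp x := le_max_right x 0

/-- pointwise bound on χ2 λ2 v2 − χ1 λ1 v1 for Neumann solutions of the
elliptic equations on [0, L]. -/
theorem stmt4 (χ1 χ2 lam1 lam2 μ1 μ2 L : ℝ)
    (hχ1 : 0 ≤ χ1) (hχ2 : 0 ≤ χ2) (hμ1 : 0 ≤ μ1) (hμ2 : 0 ≤ μ2)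
    (hlam1 : 0 < lam1) (hlam2 : 0 < lam2) (hL : 0 < L)
    (u v1 v1' v1'' v2 v2' v2'' : ℝ → ℝ)
    (hu_cont : ContinuousOn u (Icc 0 L)) (hu_nonneg : ∀ x ∈ Icc 0 L, 0 ≤ u x)
    (hv1d : ∀ x ∈ Icc 0 L, HasDerivAt v1 (v1' x) x)
    (hv1dd : ∀ x ∈ Icc 0 L, HasDerivAt v1' (v1'' x) x)
    (hv1c : ContinuousOn v1'' (Icc 0 L))
    (heq1 : ∀ x ∈ Icc 0 L, v1'' x - lam1 * v1 x + μ1 * u x = 0)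
    (hbc1 : v1' 0 = 0 ∧ v1' L = 0)
    (hv2d : ∀ x ∈ Icc 0 L, HasDerivAt v2 (v2' x) x)
    (hv2dd : ∀ x ∈ Icc 0 L, HasDerivAt v2' (v2'' x) x)
    (hv2c : ContinuousOn v2'' (Icc 0 L))
    (heq2 : ∀ x ∈ Icc 0 L, v2'' x - lam2 * v2 x + μ2 * u x = 0)
    (hbc2 : v2' 0 = 0 ∧ v2' L = 0) :
    ∀ x ∈ Icc 0 L,
      χ2 * lam2 * v2 x - χ1 * lam1 * v1 x ≤ Mconst χ1 χ2 lam1 lam2 μ1 μ2 * sSup (u '' Icc 0 L) := by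
  set S := sSup (u '' Icc 0 L) with hSdef
  have hbdd : BddAbove (u '' Icc 0 L) := isCompact_Icc.bddAbove_image hu_cont
  have huS : ∀ x ∈ Icc (0:ℝ) L, u x ≤ S := fun x hx =>
    le_csSup hbdd (mem_image_of_mem u hx)
  have h0mem : (0:ℝ) ∈ Icc (0:ℝ) L := left_mem_Icc.2 hL.le
  have hS0 : 0 ≤ S := le_trans (hu_nonneg 0 h0mem) (huS 0 h0mem)
  -- bounds on v1, v2
  have hb1 := vbounds lam1 μ1 L S hlam1 hμ1 hL u v1 v1' v1'' hv1d hv1dd heq1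
    hbc1.1 hbc1.2 hu_nonneg huS
  have hb2 := vbounds lam2 μ2 L S hlam2 hμ2 hL u v2 v2' v2'' hv2d hv2dd heq2
    hbc2.1 hbc2.2 hu_nonneg huS
  -- derivatives of w
  have hwd : ∀ x ∈ Icc (0:ℝ) L,
      HasDerivAt (fun y => χ2 * lam2 * v2 y - χ1 * lam1 * v1 y)
        (χ2 * lam2 * v2' x - χ1 * lam1 * v1' x) x :=
    fun x hx => ((hv2d x hx).const_mul (χ2 * lam2)).sub ((hv1d x hx).const_mul (χ1 * lam1))
  have hwdd : ∀ x ∈ Icc (0:ℝ) L,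
      HasDerivAt (fun y => χ2 * lam2 * v2' y - χ1 * lam1 * v1' y)
        (χ2 * lam2 * v2'' x - χ1 * lam1 * v1'' x) x :=
    fun x hx => ((hv2dd x hx).const_mul (χ2 * lam2)).sub ((hv1dd x hx).const_mul (χ1 * lam1))
  set c := χ2 * μ2 * lam2 - χ1 * μ1 * lam1 with hcdef
  set d := lam1 - lam2 with hddef
  -- first bound, with lam2
  have hbound1 := maxprin lam2 L ((pp c + χ1 * μ1 * pp d) * S) hlam2 hL
    (fun y => χ2 * lam2 * v2 y - χ1 * lam1 * v1 y)
    (fun y => χ2 * lam2 * v2' y - χ1 * lam1 * v1' y)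
    (fun y => χ2 * lam2 * v2'' y - χ1 * lam1 * v1'' y)
    (fun y => c * u y + χ1 * lam1 * d * v1 y)
    hwd hwdd
    (fun x hx => by
      have e1 := heq1 x hx; have e2 := heq2 x hx
      show χ2 * lam2 * v2'' x - χ1 * lam1 * v1'' x =
        lam2 * (χ2 * lam2 * v2 x - χ1 * lam1 * v1 x) - (c * u x + χ1 * lam1 * d * v1 x)
      simp only [hcdef, hddef]
      linear_combination χ2 * lam2 * e2 - χ1 * lam1 * e1)
    (fun x hx => by
      have hu1 := hu_nonneg x hx; have hu2 := huS x hx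
      obtain ⟨hv0, hvu⟩ := hb1 x hx
      have t1 : c * u x ≤ pp c * S := by
        nlinarith [mul_nonneg (pp_nonneg c) (sub_nonneg.2 hu2),
          mul_nonneg (sub_nonneg.2 (pp_ge c)) hu1]
      have t2 : χ1 * lam1 * d * v1 x ≤ χ1 * μ1 * pp d * S := by
        nlinarith [mul_nonneg (mul_nonneg hχ1 (pp_nonneg d)) (sub_nonneg.2 hvu),
          mul_nonneg (mul_nonneg (mul_nonneg hχ1 hlam1.le) hv0) (sub_nonneg.2 (pp_ge d))]
      show c * u x + χ1 * lam1 * d * v1 x ≤ (pp c + χ1 * μ1 * pp d) * S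
      nlinarith [t1, t2])
    (by simp [hbc1.1, hbc2.1]) (by simp [hbc1.2, hbc2.2])
  -- second bound, with lam1
  have hbound2 := maxprin lam1 L ((pp c + χ2 * μ2 * pp d) * S) hlam1 hL
    (fun y => χ2 * lam2 * v2 y - χ1 * lam1 * v1 y)
    (fun y => χ2 * lam2 * v2' y - χ1 * lam1 * v1' y)
    (fun y => χ2 * lam2 * v2'' y - χ1 * lam1 * v1'' y)
    (fun y => c * u y + χ2 * lam2 * d * v2 y)
    hwd hwdd
    (fun x hx => by
      have e1 := heq1 x hx; have e2 := heq2 x hx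
      show χ2 * lam2 * v2'' x - χ1 * lam1 * v1'' x =
        lam1 * (χ2 * lam2 * v2 x - χ1 * lam1 * v1 x) - (c * u x + χ2 * lam2 * d * v2 x)
      simp only [hcdef, hddef]
      linear_combination χ2 * lam2 * e2 - χ1 * lam1 * e1)
    (fun x hx => by
      have hu1 := hu_nonneg x hx; have hu2 := huS x hx
      obtain ⟨hv0, hvu⟩ := hb2 x hx
      have t1 : c * u x ≤ pp c * S := by
        nlinarith [mul_nonneg (pp_nonneg c) (sub_nonneg.2 hu2),
          mul_nonneg (sub_nonneg.2 (pp_ge c)) hu1]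
      have t2 : χ2 * lam2 * d * v2 x ≤ χ2 * μ2 * pp d * S := by
        nlinarith [mul_nonneg (mul_nonneg hχ2 (pp_nonneg d)) (sub_nonneg.2 hvu),
          mul_nonneg (mul_nonneg (mul_nonneg hχ2 hlam2.le) hv0) (sub_nonneg.2 (pp_ge d))]
      show c * u x + χ2 * lam2 * d * v2 x ≤ (pp c + χ2 * μ2 * pp d) * S
      nlinarith [t1, t2])
    (by simp [hbc1.1, hbc2.1]) (by simp [hbc1.2, hbc2.2])
  intro x hx
  have h1 := hbound1 x hx
  have h2 := hbound2 x hx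
  rw [Mconst]
  rcases le_total ((1 / lam2) * (pp c + χ1 * μ1 * pp d)) ((1 / lam1) * (pp c + χ2 * μ2 * pp d))
    with h | h
  · rw [min_eq_left h]
    calc χ2 * lam2 * v2 x - χ1 * lam1 * v1 x ≤ (pp c + χ1 * μ1 * pp d) * S / lam2 := h1
    _ = 1 / lam2 * (pp c + χ1 * μ1 * pp d) * S := by ring
  · rw [min_eq_right h]
    calc χ2 * lam2 * v2 x - χ1 * lam1 * v1 x ≤ (pp c + χ2 * μ2 * pp d) * S / lam1 := h2
    _ = 1 / lam1 * (pp c + χ2 * μ2 * pp d) * S := by ring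
end

section
/- Let L > 0, let u : [0, L] → ℝ be continuous with u ≥ 0, and let v1, v2 ∈ C²([0, L]) satisfy v_i''(x) − λ_i v_i(x) + μ_i u(x) = 0 for all x ∈ [0, L] and v_i'(0) = v_i'(L) = 0, for i = 1, 2. Then for every x ∈ [0, L], |χ2 v2'(x) − χ1 v1'(x)| ≤ min{ |χ2μ2 − χ1μ1|/(2√λ2) + χ1μ1|√λ1 − √λ2|/(2√(λ1λ2)), |χ1μ1 − χ2μ2|/(2√λ1) + χ2μ2|√λ2 − √λ1|/(2√(λ1λ2)) } · sup_{[0,L]} u. -/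
open Set Real MeasureTheory

lemma one_sub_exp_pos {s L : ℝ} (hs : 0 < s) (hL : 0 < L) : (0:ℝ) < 1 - exp (-(2*s*L)) := by
  have : exp (-(2*s*L)) < 1 := exp_lt_one_iff.mpr (by nlinarith)
  linarith

lemma ker_eq {γ ρ L s : ℝ} (hs : 0 < s) (hL : 0 < L) :
    exp (s*γ) * cosh (s*ρ) / (2*sinh (s*L))
      = (exp (-(s*(L-γ-ρ))) + exp (-(s*(L-γ+ρ)))) / (2*(1 - exp (-(2*s*L)))) := by
  have hsL : 0 < sinh (s*L) := by positivity
  have hden : (0:ℝ) < 1 - exp (-(2*s*L)) := one_sub_exp_pos hs hL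
  have e1 : exp (-(s*(L-γ-ρ))) = exp (s*γ) * exp (s*ρ) * exp (-(s*L)) := by
    rw [← exp_add, ← exp_add]; congr 1; ring
  have e2 : exp (-(s*(L-γ+ρ))) = exp (s*γ) * exp (-(s*ρ)) * exp (-(s*L)) := by
    rw [← exp_add, ← exp_add]; congr 1; ring
  have e3 : exp (-(2*s*L)) = exp (-(s*L)) * exp (-(s*L)) := by
    rw [← exp_add]; congr 1; ring
  have e4 : exp (-(s*L)) * exp (s*L) = 1 := by rw [← exp_add]; simp
  rw [div_eq_div_iff (by positivity) (by positivity)]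
  rw [e1, e2, e3, Real.cosh_eq, Real.sinh_eq]
  ring_nf
  linear_combination (- exp (s*γ) * exp (s*ρ) - exp (s*γ) * exp (-(s*ρ))) * e4

lemma ker_mono {γ ρ L s₁ s₂ : ℝ} (hL : 0 < L) (h1 : 0 ≤ L-γ-ρ) (h2 : 0 ≤ L-γ+ρ)
    (hs₂ : 0 < s₂) (h : s₂ ≤ s₁) :
    exp (s₁*γ) * cosh (s₁*ρ) / (2*sinh (s₁*L)) ≤ exp (s₂*γ) * cosh (s₂*ρ) / (2*sinh (s₂*L)) := by
  have hs₁ : 0 < s₁ := lt_of_lt_of_le hs₂ h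
  rw [ker_eq hs₁ hL, ker_eq hs₂ hL]
  apply div_le_div₀ (by positivity)
  · have a1 : exp (-(s₁*(L-γ-ρ))) ≤ exp (-(s₂*(L-γ-ρ))) := by
      apply exp_le_exp.mpr; nlinarith
    have a2 : exp (-(s₁*(L-γ+ρ))) ≤ exp (-(s₂*(L-γ+ρ))) := by
      apply exp_le_exp.mpr; nlinarith
    linarith
  · exact mul_pos two_pos (one_sub_exp_pos hs₂ hL)
  · have : exp (-(2*s₁*L)) ≤ exp (-(2*s₂*L)) := by
      apply exp_le_exp.mpr; nlinarith
    linarith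
lemma int_cosh₁ {s : ℝ} (hs : s ≠ 0) (x : ℝ) :
    (∫ y in (0:ℝ)..x, cosh (s*y)) = sinh (s*x)/s := by
  have : ∀ y ∈ Set.uIcc (0:ℝ) x, HasDerivAt (fun t => sinh (s*t)/s) (cosh (s*y)) y := by
    intro y _
    have h := (((hasDerivAt_id y).const_mul s).sinh).div_const s
    simpa [mul_comm, mul_div_assoc, mul_div_cancel_left₀ _ hs] using h
  rw [intervalIntegral.integral_eq_sub_of_hasDerivAt this
    ((Real.continuous_cosh.comp (continuous_const.mul continuous_id)).continuousOn.intervalIntegrable)]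
  simp

lemma int_cosh₂ {s : ℝ} (hs : s ≠ 0) (L x : ℝ) :
    (∫ y in x..L, cosh (s*(L-y))) = sinh (s*(L-x))/s := by
  have : ∀ y ∈ Set.uIcc x L, HasDerivAt (fun t => -(sinh (s*(L-t))/s)) (cosh (s*(L-y))) y := by
    intro y _
    have h := ((((hasDerivAt_id y).const_sub L).const_mul s).sinh).div_const s
    have h2 := h.neg
    refine h2.congr_deriv ?_
    field_simp
    rfl
  rw [intervalIntegral.integral_eq_sub_of_hasDerivAt this
    ((Real.continuous_cosh.comp (continuous_const.mul (continuous_const.sub continuous_id))).continuousOn.intervalIntegrable)]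
  simp


lemma split1 (s L x : ℝ) :
    exp (s*x) * sinh (s*(L-x)) + exp (-(s*(L-x))) * sinh (s*x) = sinh (s*L) := by
  have p1 : exp (s*x) * exp (s*(L-x)) = exp (s*L) := by rw [← exp_add]; congr 1; ring
  have p2 : exp (-(s*(L-x))) * exp (-(s*x)) = exp (-(s*L)) := by rw [← exp_add]; congr 1; ring
  rw [sinh_eq, sinh_eq, sinh_eq]
  linear_combination (p1 - p2)/2

lemma split2 (s L x : ℝ) :
    exp (-(s*x)) * sinh (s*(L-x)) + exp (s*(L-x)) * sinh (s*x) = sinh (s*L) := by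
  have p1 : exp (s*(L-x)) * exp (s*x) = exp (s*L) := by rw [← exp_add]; congr 1; ring
  have p2 : exp (-(s*x)) * exp (-(s*(L-x))) = exp (-(s*L)) := by rw [← exp_add]; congr 1; ring
  rw [sinh_eq, sinh_eq, sinh_eq]
  linear_combination (p1 - p2)/2

lemma myrepr (lam μ L : ℝ) (hlam : 0 < lam) (hL : 0 < L) (u v v' v'' : ℝ → ℝ)
    (hu : ContinuousOn u (Icc 0 L))
    (hvd : ∀ y ∈ Icc 0 L, HasDerivAt v (v' y) y)
    (hvdd : ∀ y ∈ Icc 0 L, HasDerivAt v' (v'' y) y)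
    (heq : ∀ y ∈ Icc 0 L, v'' y - lam * v y + μ * u y = 0)
    (hb0 : v' 0 = 0) (hbL : v' L = 0)
    {x : ℝ} (hx : x ∈ Icc 0 L) :
    v' x * sinh (Real.sqrt lam * L)
      = μ * (sinh (Real.sqrt lam * x) * (∫ y in x..L, u y * cosh (Real.sqrt lam * (L-y)))
          - sinh (Real.sqrt lam * (L-x)) * (∫ y in (0:ℝ)..x, u y * cosh (Real.sqrt lam * y))) := by
  set s := Real.sqrt lam with hs_def
  have hs : 0 < s := Real.sqrt_pos.mpr hlam
  have hss : s * s = lam := Real.mul_self_sqrt hlam.le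
  obtain ⟨hx0, hxL⟩ := hx
  -- derivative of E
  have hE : ∀ y ∈ Icc (0:ℝ) L,
      HasDerivAt (fun t => v' t * cosh (s*t) - s * v t * sinh (s*t))
        (-(μ * (u y * cosh (s*y)))) y := by
    intro y hy
    have d1 : HasDerivAt (fun t => s*t) s y := by
      simpa using (hasDerivAt_id y).const_mul s
    have h := ((hvdd y hy).mul d1.cosh).sub (((hvd y hy).const_mul s).mul d1.sinh)
    refine h.congr_deriv ?_
    have hv : v'' y = lam * v y - μ * u y := by linarith [heq y hy]
    rw [hv, ← hss]; ring
  have hF : ∀ y ∈ Icc (0:ℝ) L,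
      HasDerivAt (fun t => v' t * cosh (s*(L-t)) + s * v t * sinh (s*(L-t)))
        (-(μ * (u y * cosh (s*(L-y))))) y := by
    intro y hy
    have d1 : HasDerivAt (fun t => s*(L-t)) (-s) y := by
      simpa using (((hasDerivAt_id y).const_sub L).const_mul s)
    have h := ((hvdd y hy).mul d1.cosh).add (((hvd y hy).const_mul s).mul d1.sinh)
    refine h.congr_deriv ?_
    have hv : v'' y = lam * v y - μ * u y := by linarith [heq y hy]
    rw [hv, ← hss]; ring
  have hsub1 : Set.uIcc (0:ℝ) x ⊆ Icc 0 L := by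
    rw [Set.uIcc_of_le hx0]; exact Icc_subset_Icc le_rfl hxL
  have hsub2 : Set.uIcc x L ⊆ Icc 0 L := by
    rw [Set.uIcc_of_le hxL]; exact Icc_subset_Icc hx0 le_rfl
  have hint1 : IntervalIntegrable (fun y => -(μ * (u y * cosh (s*y)))) MeasureTheory.volume 0 x := by
    apply ContinuousOn.intervalIntegrable
    exact (((hu.mono hsub1).mul ((Real.continuous_cosh.comp (continuous_const.mul continuous_id)).continuousOn)).const_smul μ).neg
  have hint2 : IntervalIntegrable (fun y => -(μ * (u y * cosh (s*(L-y))))) MeasureTheory.volume x L := by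
    apply ContinuousOn.intervalIntegrable
    exact (((hu.mono hsub2).mul ((Real.continuous_cosh.comp (continuous_const.mul (continuous_const.sub continuous_id))).continuousOn)).const_smul μ).neg
  have hI := intervalIntegral.integral_eq_sub_of_hasDerivAt (fun y hy => hE y (hsub1 hy)) hint1
  have hII := intervalIntegral.integral_eq_sub_of_hasDerivAt (fun y hy => hF y (hsub2 hy)) hint2
  simp only [hb0, hbL, mul_zero, Real.cosh_zero, Real.sinh_zero, zero_mul, mul_one,
    sub_zero, zero_sub, sub_self, zero_add] at hI hII
  -- pull constants out of integrals
  have hI' : -(μ * ∫ y in (0:ℝ)..x, u y * cosh (s*y))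
      = v' x * cosh (s*x) - s * v x * sinh (s*x) := by
    rw [← intervalIntegral.integral_const_mul, ← intervalIntegral.integral_neg]
    simpa using hI
  have hII' : -(μ * ∫ y in x..L, u y * cosh (s*(L-y)))
      = -(v' x * cosh (s*(L-x)) + s * v x * sinh (s*(L-x))) := by
    rw [← intervalIntegral.integral_const_mul, ← intervalIntegral.integral_neg]
    simpa using hII
  have hsinh : sinh (s*L) = sinh (s*x) * cosh (s*(L-x)) + cosh (s*x) * sinh (s*(L-x)) := by
    have : s*L = s*x + s*(L-x) := by ring
    rw [this, Real.sinh_add]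
  rw [hsinh]
  linear_combination (-(sinh (s*(L-x)))) * hI' + (sinh (s*x)) * hII'

noncomputable def Pint (u : ℝ → ℝ) (L x s γ₁ γ₂ : ℝ) : ℝ :=
  (∫ y in x..L, u y * (exp (s*γ₁) * cosh (s*(L-y)) / (2*sinh (s*L))))
  + ∫ y in (0:ℝ)..x, u y * (exp (s*γ₂) * cosh (s*y) / (2*sinh (s*L)))

section PintLemmas
variable {u : ℝ → ℝ} {L x s s₁ s₂ γ₁ γ₂ M : ℝ}

lemma cont_k1 (c : ℝ) : Continuous (fun y => exp (s*c) * cosh (s*(L-y)) / (2*sinh (s*L))) := by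
  apply Continuous.div_const
  exact continuous_const.mul (Real.continuous_cosh.comp (continuous_const.mul (continuous_const.sub continuous_id)))

lemma cont_k2 (c : ℝ) : Continuous (fun y => exp (s*c) * cosh (s*y) / (2*sinh (s*L))) := by
  apply Continuous.div_const
  exact continuous_const.mul (Real.continuous_cosh.comp (continuous_const.mul continuous_id))

lemma k_nonneg {c ρ : ℝ} (hs : 0 < s) (hL : 0 < L) : 0 ≤ exp (s*c) * cosh ρ / (2*sinh (s*L)) := by
  have hsL : 0 < sinh (s*L) := by positivity
  positivity

-- integrability of u * kernel on x..L
lemma intg1 (hL : 0 < L) (hx : x ∈ Icc 0 L) (hu : ContinuousOn u (Icc 0 L)) (c : ℝ) :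
    IntervalIntegrable (fun y => u y * (exp (s*c) * cosh (s*(L-y)) / (2*sinh (s*L)))) volume x L := by
  apply ContinuousOn.intervalIntegrable
  apply ContinuousOn.mul _ (cont_k1 c).continuousOn
  apply hu.mono
  rw [Set.uIcc_of_le hx.2]
  exact Icc_subset_Icc hx.1 le_rfl

lemma intg2 (hL : 0 < L) (hx : x ∈ Icc 0 L) (hu : ContinuousOn u (Icc 0 L)) (c : ℝ) :
    IntervalIntegrable (fun y => u y * (exp (s*c) * cosh (s*y) / (2*sinh (s*L)))) volume 0 x := by
  apply ContinuousOn.intervalIntegrable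
  apply ContinuousOn.mul _ (cont_k2 c).continuousOn
  apply hu.mono
  rw [Set.uIcc_of_le hx.1]
  exact Icc_subset_Icc le_rfl hx.2

lemma Pint_nonneg (hs : 0 < s) (hL : 0 < L) (hx : x ∈ Icc 0 L)
    (hu0 : ∀ y ∈ Icc 0 L, 0 ≤ u y) : 0 ≤ Pint u L x s γ₁ γ₂ := by
  have hsL : 0 < sinh (s*L) := by positivity
  apply add_nonneg
  · apply intervalIntegral.integral_nonneg hx.2
    intro y hy
    exact mul_nonneg (hu0 y ⟨le_trans hx.1 hy.1, hy.2⟩) (k_nonneg hs hL)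
  · apply intervalIntegral.integral_nonneg hx.1
    intro y hy
    exact mul_nonneg (hu0 y ⟨hy.1, le_trans hy.2 hx.2⟩) (k_nonneg hs hL)

lemma ker_total (hs : 0 < s) (hL : 0 < L) (hx : x ∈ Icc 0 L)
    (hid : exp (s*γ₁) * sinh (s*(L-x)) + exp (s*γ₂) * sinh (s*x) = sinh (s*L)) :
    (∫ y in x..L, exp (s*γ₁) * cosh (s*(L-y)) / (2*sinh (s*L)))
      + (∫ y in (0:ℝ)..x, exp (s*γ₂) * cosh (s*y) / (2*sinh (s*L))) = 1/(2*s) := by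
  have hsL : 0 < sinh (s*L) := by positivity
  have e1 : (∫ y in x..L, exp (s*γ₁) * cosh (s*(L-y)) / (2*sinh (s*L)))
      = (exp (s*γ₁) / (2*sinh (s*L))) * ∫ y in x..L, cosh (s*(L-y)) := by
    rw [← intervalIntegral.integral_const_mul]
    apply intervalIntegral.integral_congr
    intro y _; ring
  have e2 : (∫ y in (0:ℝ)..x, exp (s*γ₂) * cosh (s*y) / (2*sinh (s*L)))
      = (exp (s*γ₂) / (2*sinh (s*L))) * ∫ y in (0:ℝ)..x, cosh (s*y) := by
    rw [← intervalIntegral.integral_const_mul]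
    apply intervalIntegral.integral_congr
    intro y _; ring
  rw [e1, e2, int_cosh₁ hs.ne' x, int_cosh₂ hs.ne' L x]
  field_simp
  linear_combination hid
end PintLemmas

section Pint2
variable {u : ℝ → ℝ} {L x s s₁ s₂ γ₁ γ₂ M : ℝ}

lemma intgc1 (c : ℝ) : IntervalIntegrable (fun y => M * (exp (s*c) * cosh (s*(L-y)) / (2*sinh (s*L)))) volume x L :=
  (continuous_const.mul (cont_k1 c)).intervalIntegrable _ _

lemma intgc2 (c : ℝ) : IntervalIntegrable (fun y => M * (exp (s*c) * cosh (s*y) / (2*sinh (s*L)))) volume 0 x :=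
  (continuous_const.mul (cont_k2 c)).intervalIntegrable _ _

lemma Pint_le (hs : 0 < s) (hL : 0 < L) (hx : x ∈ Icc 0 L)
    (hu : ContinuousOn u (Icc 0 L)) (hM : ∀ y ∈ Icc 0 L, u y ≤ M)
    (hid : exp (s*γ₁) * sinh (s*(L-x)) + exp (s*γ₂) * sinh (s*x) = sinh (s*L)) :
    Pint u L x s γ₁ γ₂ ≤ M/(2*s) := by
  have hsL : 0 < sinh (s*L) := by positivity
  have h1 : (∫ y in x..L, u y * (exp (s*γ₁) * cosh (s*(L-y)) / (2*sinh (s*L))))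
      ≤ ∫ y in x..L, M * (exp (s*γ₁) * cosh (s*(L-y)) / (2*sinh (s*L))) := by
    apply intervalIntegral.integral_mono_on hx.2 (intg1 hL hx hu _) (intgc1 _)
    intro y hy
    exact mul_le_mul_of_nonneg_right (hM y ⟨le_trans hx.1 hy.1, hy.2⟩) (k_nonneg hs hL)
  have h2 : (∫ y in (0:ℝ)..x, u y * (exp (s*γ₂) * cosh (s*y) / (2*sinh (s*L))))
      ≤ ∫ y in (0:ℝ)..x, M * (exp (s*γ₂) * cosh (s*y) / (2*sinh (s*L))) := by
    apply intervalIntegral.integral_mono_on hx.1 (intg2 hL hx hu _) (intgc2 _)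
    intro y hy
    exact mul_le_mul_of_nonneg_right (hM y ⟨hy.1, le_trans hy.2 hx.2⟩) (k_nonneg hs hL)
  have htot := ker_total hs hL hx hid
  have e1 : (∫ y in x..L, M * (exp (s*γ₁) * cosh (s*(L-y)) / (2*sinh (s*L))))
      = M * ∫ y in x..L, exp (s*γ₁) * cosh (s*(L-y)) / (2*sinh (s*L)) :=
    intervalIntegral.integral_const_mul _ _
  have e2 : (∫ y in (0:ℝ)..x, M * (exp (s*γ₂) * cosh (s*y) / (2*sinh (s*L))))
      = M * ∫ y in (0:ℝ)..x, exp (s*γ₂) * cosh (s*y) / (2*sinh (s*L)) :=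
    intervalIntegral.integral_const_mul _ _
  have : Pint u L x s γ₁ γ₂ ≤ M * ((∫ y in x..L, exp (s*γ₁) * cosh (s*(L-y)) / (2*sinh (s*L)))
      + ∫ y in (0:ℝ)..x, exp (s*γ₂) * cosh (s*y) / (2*sinh (s*L))) := by
    unfold Pint
    rw [mul_add, ← e1, ← e2]
    exact add_le_add h1 h2
  rw [htot] at this
  calc Pint u L x s γ₁ γ₂ ≤ M * (1/(2*s)) := this
  _ = M/(2*s) := by ring

lemma Pint_mono (hs₂ : 0 < s₂) (h12 : s₂ ≤ s₁) (hL : 0 < L) (hx : x ∈ Icc 0 L)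
    (hγ₁ : γ₁ ≤ x) (hγ₂ : γ₂ ≤ L - x)
    (hu : ContinuousOn u (Icc 0 L)) (hu0 : ∀ y ∈ Icc 0 L, 0 ≤ u y) :
    Pint u L x s₁ γ₁ γ₂ ≤ Pint u L x s₂ γ₁ γ₂ := by
  apply add_le_add
  · apply intervalIntegral.integral_mono_on hx.2 (intg1 hL hx hu _) (intg1 hL hx hu _)
    intro y hy
    apply mul_le_mul_of_nonneg_left _ (hu0 y ⟨le_trans hx.1 hy.1, hy.2⟩)
    exact ker_mono hL (by linarith [hy.1, hy.2, hx.1, hx.2]) (by linarith [hy.1, hy.2, hx.1, hx.2]) hs₂ h12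
  · apply intervalIntegral.integral_mono_on hx.1 (intg2 hL hx hu _) (intg2 hL hx hu _)
    intro y hy
    apply mul_le_mul_of_nonneg_left _ (hu0 y ⟨hy.1, le_trans hy.2 hx.2⟩)
    exact ker_mono hL (by linarith [hy.1, hy.2, hx.1, hx.2]) (by linarith [hy.1, hy.2, hx.1, hx.2]) hs₂ h12

lemma Pint_diff (hs₂ : 0 < s₂) (h12 : s₂ ≤ s₁) (hL : 0 < L) (hx : x ∈ Icc 0 L)
    (hγ₁ : γ₁ ≤ x) (hγ₂ : γ₂ ≤ L - x)
    (hu : ContinuousOn u (Icc 0 L)) (hu0 : ∀ y ∈ Icc 0 L, 0 ≤ u y)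
    (hM : ∀ y ∈ Icc 0 L, u y ≤ M)
    (hid₁ : exp (s₁*γ₁) * sinh (s₁*(L-x)) + exp (s₁*γ₂) * sinh (s₁*x) = sinh (s₁*L))
    (hid₂ : exp (s₂*γ₁) * sinh (s₂*(L-x)) + exp (s₂*γ₂) * sinh (s₂*x) = sinh (s₂*L)) :
    Pint u L x s₂ γ₁ γ₂ - Pint u L x s₁ γ₁ γ₂ ≤ M/(2*s₂) - M/(2*s₁) := by
  have hs₁ : 0 < s₁ := lt_of_lt_of_le hs₂ h12
  have key1 : (∫ y in x..L, (u y * (exp (s₂*γ₁) * cosh (s₂*(L-y)) / (2*sinh (s₂*L)))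
        + M * (exp (s₁*γ₁) * cosh (s₁*(L-y)) / (2*sinh (s₁*L)))))
      ≤ ∫ y in x..L, (u y * (exp (s₁*γ₁) * cosh (s₁*(L-y)) / (2*sinh (s₁*L)))
        + M * (exp (s₂*γ₁) * cosh (s₂*(L-y)) / (2*sinh (s₂*L)))) := by
    apply intervalIntegral.integral_mono_on hx.2 ((intg1 hL hx hu _).add (intgc1 _))
      ((intg1 hL hx hu _).add (intgc1 _))
    intro y hy
    have hk := ker_mono (γ := γ₁) (ρ := L - y) hL (by linarith [hy.1, hy.2, hx.1, hx.2]) (by linarith [hy.1, hy.2, hx.1, hx.2]) hs₂ h12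
    have hu' := hu0 y ⟨le_trans hx.1 hy.1, hy.2⟩
    have hM' := hM y ⟨le_trans hx.1 hy.1, hy.2⟩
    nlinarith
  have key2 : (∫ y in (0:ℝ)..x, (u y * (exp (s₂*γ₂) * cosh (s₂*y) / (2*sinh (s₂*L)))
        + M * (exp (s₁*γ₂) * cosh (s₁*y) / (2*sinh (s₁*L)))))
      ≤ ∫ y in (0:ℝ)..x, (u y * (exp (s₁*γ₂) * cosh (s₁*y) / (2*sinh (s₁*L)))
        + M * (exp (s₂*γ₂) * cosh (s₂*y) / (2*sinh (s₂*L)))) := by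
    apply intervalIntegral.integral_mono_on hx.1 ((intg2 hL hx hu _).add (intgc2 _))
      ((intg2 hL hx hu _).add (intgc2 _))
    intro y hy
    have hk := ker_mono (γ := γ₂) (ρ := y) hL (by linarith [hy.1, hy.2, hx.1, hx.2]) (by linarith [hy.1, hy.2, hx.1, hx.2]) hs₂ h12
    have hu' := hu0 y ⟨hy.1, le_trans hy.2 hx.2⟩
    have hM' := hM y ⟨hy.1, le_trans hy.2 hx.2⟩
    nlinarith
  rw [intervalIntegral.integral_add (intg1 hL hx hu _) (intgc1 _),
      intervalIntegral.integral_add (intg1 hL hx hu _) (intgc1 _)] at key1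
  rw [intervalIntegral.integral_add (intg2 hL hx hu _) (intgc2 _),
      intervalIntegral.integral_add (intg2 hL hx hu _) (intgc2 _)] at key2
  have t1 := ker_total hs₁ hL hx hid₁
  have t2 := ker_total hs₂ hL hx hid₂
  have e11 := intervalIntegral.integral_const_mul (a := x) (b := L) (μ := volume) M
    (fun y => exp (s₁*γ₁) * cosh (s₁*(L-y)) / (2*sinh (s₁*L)))
  have e12 := intervalIntegral.integral_const_mul (a := x) (b := L) (μ := volume) M
    (fun y => exp (s₂*γ₁) * cosh (s₂*(L-y)) / (2*sinh (s₂*L)))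
  have e21 := intervalIntegral.integral_const_mul (a := (0:ℝ)) (b := x) (μ := volume) M
    (fun y => exp (s₁*γ₂) * cosh (s₁*y) / (2*sinh (s₁*L)))
  have e22 := intervalIntegral.integral_const_mul (a := (0:ℝ)) (b := x) (μ := volume) M
    (fun y => exp (s₂*γ₂) * cosh (s₂*y) / (2*sinh (s₂*L)))
  unfold Pint
  have hq1 : M/(2*s₁) = M * (1/(2*s₁)) := by ring
  have hq2 : M/(2*s₂) = M * (1/(2*s₂)) := by ring
  rw [hq1, hq2, ← t1, ← t2]
  nlinarith [key1, key2, e11, e12, e21, e22]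
end Pint2

lemma Pint_sub {u : ℝ → ℝ} {L x s : ℝ} (hs : 0 < s) (hL : 0 < L) :
    Pint u L x s x (x-L) - Pint u L x s (-x) (L-x)
      = (sinh (s*x) * (∫ y in x..L, u y * cosh (s*(L-y)))
          - sinh (s*(L-x)) * (∫ y in (0:ℝ)..x, u y * cosh (s*y))) / sinh (s*L) := by
  have hsL : 0 < sinh (s*L) := by positivity
  have pull1 : ∀ c : ℝ, (∫ y in x..L, u y * (exp (s*c) * cosh (s*(L-y)) / (2*sinh (s*L))))
      = (exp (s*c)/(2*sinh (s*L))) * ∫ y in x..L, u y * cosh (s*(L-y)) := by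
    intro c
    rw [← intervalIntegral.integral_const_mul]
    apply intervalIntegral.integral_congr
    intro y _; ring
  have pull2 : ∀ c : ℝ, (∫ y in (0:ℝ)..x, u y * (exp (s*c) * cosh (s*y) / (2*sinh (s*L))))
      = (exp (s*c)/(2*sinh (s*L))) * ∫ y in (0:ℝ)..x, u y * cosh (s*y) := by
    intro c
    rw [← intervalIntegral.integral_const_mul]
    apply intervalIntegral.integral_congr
    intro y _; ring
  unfold Pint
  rw [pull1, pull1, pull2, pull2, show s*(-x) = -(s*x) by ring, show s*(x-L) = -(s*(L-x)) by ring]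
  have eA : exp (s*x) - exp (-(s*x)) = 2 * sinh (s*x) := by
    rw [Real.sinh_eq]; ring
  have eB : exp (s*(L-x)) - exp (-(s*(L-x))) = 2 * sinh (s*(L-x)) := by
    rw [Real.sinh_eq]; ring
  field_simp
  linear_combination (∫ y in x..L, u y * cosh (s*(L-y))) * eA
    - (∫ y in (0:ℝ)..x, u y * cosh (s*y)) * eB


/-- pointwise gradient bound on χ2 v2' − χ1 v1' for Neumann solutions of the
elliptic equations on [0, L]. -/
theorem stmt5 (χ1 χ2 lam1 lam2 μ1 μ2 L : ℝ)
    (hχ1 : 0 ≤ χ1) (hχ2 : 0 ≤ χ2) (hμ1 : 0 ≤ μ1) (hμ2 : 0 ≤ μ2)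
    (hlam1 : 0 < lam1) (hlam2 : 0 < lam2) (hL : 0 < L)
    (u v1 v1' v1'' v2 v2' v2'' : ℝ → ℝ)
    (hu_cont : ContinuousOn u (Icc 0 L)) (hu_nonneg : ∀ x ∈ Icc 0 L, 0 ≤ u x)
    (hv1d : ∀ x ∈ Icc 0 L, HasDerivAt v1 (v1' x) x)
    (hv1dd : ∀ x ∈ Icc 0 L, HasDerivAt v1' (v1'' x) x)
    (hv1c : ContinuousOn v1'' (Icc 0 L))
    (heq1 : ∀ x ∈ Icc 0 L, v1'' x - lam1 * v1 x + μ1 * u x = 0)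
    (hbc1 : v1' 0 = 0 ∧ v1' L = 0)
    (hv2d : ∀ x ∈ Icc 0 L, HasDerivAt v2 (v2' x) x)
    (hv2dd : ∀ x ∈ Icc 0 L, HasDerivAt v2' (v2'' x) x)
    (hv2c : ContinuousOn v2'' (Icc 0 L))
    (heq2 : ∀ x ∈ Icc 0 L, v2'' x - lam2 * v2 x + μ2 * u x = 0)
    (hbc2 : v2' 0 = 0 ∧ v2' L = 0) :
    ∀ x ∈ Icc 0 L,
      |χ2 * v2' x - χ1 * v1' x| ≤
        min (|χ2 * μ2 - χ1 * μ1| / (2 * Real.sqrt lam2)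
              + χ1 * μ1 * |Real.sqrt lam1 - Real.sqrt lam2| / (2 * Real.sqrt (lam1 * lam2)))
            (|χ1 * μ1 - χ2 * μ2| / (2 * Real.sqrt lam1)
              + χ2 * μ2 * |Real.sqrt lam2 - Real.sqrt lam1| / (2 * Real.sqrt (lam1 * lam2)))
          * sSup (u '' Icc 0 L) := by
  intro x hx
  rw [Real.sqrt_mul hlam1.le]
  set s₁ := Real.sqrt lam1 with hs₁_def
  set s₂ := Real.sqrt lam2 with hs₂_def
  have hs₁ : 0 < s₁ := Real.sqrt_pos.mpr hlam1
  have hs₂ : 0 < s₂ := Real.sqrt_pos.mpr hlam2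
  set M := sSup (u '' Icc 0 L) with hM_def
  have hMub : ∀ y ∈ Icc 0 L, u y ≤ M := fun y hy =>
    le_csSup (isCompact_Icc.image_of_continuousOn hu_cont).bddAbove (mem_image_of_mem u hy)
  have hx0 : (0:ℝ) ∈ Icc (0:ℝ) L := ⟨le_rfl, hL.le⟩
  have hM0 : 0 ≤ M := le_trans (hu_nonneg 0 hx0) (hMub 0 hx0)
  have hidφ : ∀ t : ℝ, exp (t*x) * sinh (t*(L-x)) + exp (t*(x-L)) * sinh (t*x) = sinh (t*L) := by
    intro t
    rw [show t*(x-L) = -(t*(L-x)) by ring]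
    exact split1 t L x
  have hidψ : ∀ t : ℝ, exp (t*(-x)) * sinh (t*(L-x)) + exp (t*(L-x)) * sinh (t*x) = sinh (t*L) := by
    intro t
    rw [show t*(-x) = -(t*x) by ring]
    exact split2 t L x
  -- representations
  have hrep : ∀ s lam μ (v v' v'' : ℝ → ℝ), s = Real.sqrt lam → 0 < lam →
      (∀ y ∈ Icc 0 L, HasDerivAt v (v' y) y) →
      (∀ y ∈ Icc 0 L, HasDerivAt v' (v'' y) y) →
      (∀ y ∈ Icc 0 L, v'' y - lam * v y + μ * u y = 0) →
      v' 0 = 0 → v' L = 0 →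
      v' x = μ * (Pint u L x s x (x-L) - Pint u L x s (-x) (L-x)) := by
    intro s lam μ v v' v'' hsdef hlam hvd hvdd heq hb0 hbL
    have hs : 0 < s := hsdef ▸ Real.sqrt_pos.mpr hlam
    have h0 := myrepr lam μ L hlam hL u v v' v'' hu_cont hvd hvdd heq hb0 hbL hx
    rw [← hsdef] at h0
    have hsub := Pint_sub (u := u) (L := L) (x := x) hs hL
    have hS : sinh (s*L) ≠ 0 := ne_of_gt (by positivity)
    rw [hsub, mul_div_assoc']
    rw [eq_div_iff hS]
    linarith [h0]
  have hrep1 := hrep s₁ lam1 μ1 v1 v1' v1'' hs₁_def hlam1 hv1d hv1dd heq1 hbc1.1 hbc1.2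
  have hrep2 := hrep s₂ lam2 μ2 v2 v2' v2'' hs₂_def hlam2 hv2d hv2dd heq2 hbc2.1 hbc2.2
  -- bounds
  have hxL : x - L ≤ L - x := by linarith [hx.2]
  have hnx : -x ≤ x := by linarith [hx.1]
  have hφ1_0 : 0 ≤ Pint u L x s₁ x (x-L) := Pint_nonneg hs₁ hL hx hu_nonneg
  have hφ2_0 : 0 ≤ Pint u L x s₂ x (x-L) := Pint_nonneg hs₂ hL hx hu_nonneg
  have hψ1_0 : 0 ≤ Pint u L x s₁ (-x) (L-x) := Pint_nonneg hs₁ hL hx hu_nonneg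
  have hψ2_0 : 0 ≤ Pint u L x s₂ (-x) (L-x) := Pint_nonneg hs₂ hL hx hu_nonneg
  have hφ1_u : Pint u L x s₁ x (x-L) ≤ M/(2*s₁) := Pint_le hs₁ hL hx hu_cont hMub (hidφ s₁)
  have hφ2_u : Pint u L x s₂ x (x-L) ≤ M/(2*s₂) := Pint_le hs₂ hL hx hu_cont hMub (hidφ s₂)
  have hψ1_u : Pint u L x s₁ (-x) (L-x) ≤ M/(2*s₁) := Pint_le hs₁ hL hx hu_cont hMub (hidψ s₁)
  have hψ2_u : Pint u L x s₂ (-x) (L-x) ≤ M/(2*s₂) := Pint_le hs₂ hL hx hu_cont hMub (hidψ s₂)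
  have habs : |(Pint u L x s₂ x (x-L) - Pint u L x s₁ x (x-L))
      - (Pint u L x s₂ (-x) (L-x) - Pint u L x s₁ (-x) (L-x))| ≤ M * |s₁ - s₂| / (2*(s₁*s₂)) := by
    rcases le_total s₂ s₁ with h12 | h21
    · have dφl := Pint_mono (γ₁ := x) (γ₂ := x-L) hs₂ h12 hL hx le_rfl hxL hu_cont hu_nonneg
      have dψl := Pint_mono (γ₁ := -x) (γ₂ := L-x) hs₂ h12 hL hx hnx le_rfl hu_cont hu_nonneg
      have dφu := Pint_diff (γ₁ := x) (γ₂ := x-L) hs₂ h12 hL hx le_rfl hxL hu_cont hu_nonneg hMub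
        (hidφ s₁) (hidφ s₂)
      have dψu := Pint_diff (γ₁ := -x) (γ₂ := L-x) hs₂ h12 hL hx hnx le_rfl hu_cont hu_nonneg hMub
        (hidψ s₁) (hidψ s₂)
      have heq' : M * |s₁ - s₂| / (2*(s₁*s₂)) = M/(2*s₂) - M/(2*s₁) := by
        rw [abs_of_nonneg (by linarith : (0:ℝ) ≤ s₁ - s₂)]
        field_simp
      rw [heq']
      apply abs_le.mpr
      constructor <;> linarith
    · have dφl := Pint_mono (γ₁ := x) (γ₂ := x-L) hs₁ h21 hL hx le_rfl hxL hu_cont hu_nonneg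
      have dψl := Pint_mono (γ₁ := -x) (γ₂ := L-x) hs₁ h21 hL hx hnx le_rfl hu_cont hu_nonneg
      have dφu := Pint_diff (γ₁ := x) (γ₂ := x-L) hs₁ h21 hL hx le_rfl hxL hu_cont hu_nonneg hMub
        (hidφ s₂) (hidφ s₁)
      have dψu := Pint_diff (γ₁ := -x) (γ₂ := L-x) hs₁ h21 hL hx hnx le_rfl hu_cont hu_nonneg hMub
        (hidψ s₂) (hidψ s₁)
      have heq' : M * |s₁ - s₂| / (2*(s₁*s₂)) = M/(2*s₁) - M/(2*s₂) := by
        rw [abs_of_nonpos (by linarith : s₁ - s₂ ≤ 0)]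
        field_simp
        ring
      rw [heq']
      apply abs_le.mpr
      constructor <;> linarith
  have hd2 : |Pint u L x s₂ x (x-L) - Pint u L x s₂ (-x) (L-x)| ≤ M/(2*s₂) :=
    abs_le.mpr ⟨by linarith, by linarith⟩
  have hd1 : |Pint u L x s₁ x (x-L) - Pint u L x s₁ (-x) (L-x)| ≤ M/(2*s₁) :=
    abs_le.mpr ⟨by linarith, by linarith⟩
  have est1 : |χ2 * v2' x - χ1 * v1' x|
      ≤ (|χ2*μ2 - χ1*μ1|/(2*s₂) + χ1*μ1*|s₁-s₂|/(2*(s₁*s₂))) * M := by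
    have hw : χ2 * v2' x - χ1 * v1' x
        = (χ2*μ2 - χ1*μ1) * (Pint u L x s₂ x (x-L) - Pint u L x s₂ (-x) (L-x))
          + (χ1*μ1) * ((Pint u L x s₂ x (x-L) - Pint u L x s₁ x (x-L))
              - (Pint u L x s₂ (-x) (L-x) - Pint u L x s₁ (-x) (L-x))) := by
      rw [hrep1, hrep2]; ring
    rw [hw]
    calc |_| ≤ |(χ2*μ2 - χ1*μ1) * (Pint u L x s₂ x (x-L) - Pint u L x s₂ (-x) (L-x))|
          + |(χ1*μ1) * ((Pint u L x s₂ x (x-L) - Pint u L x s₁ x (x-L))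
              - (Pint u L x s₂ (-x) (L-x) - Pint u L x s₁ (-x) (L-x)))| := abs_add_le _ _
      _ ≤ |χ2*μ2 - χ1*μ1| * (M/(2*s₂)) + (χ1*μ1) * (M * |s₁-s₂| / (2*(s₁*s₂))) := by
          rw [abs_mul, abs_mul, abs_of_nonneg (mul_nonneg hχ1 hμ1)]
          exact add_le_add (mul_le_mul_of_nonneg_left hd2 (abs_nonneg _))
            (mul_le_mul_of_nonneg_left habs (mul_nonneg hχ1 hμ1))
      _ = (|χ2*μ2 - χ1*μ1|/(2*s₂) + χ1*μ1*|s₁-s₂|/(2*(s₁*s₂))) * M := by ring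
  have est2 : |χ2 * v2' x - χ1 * v1' x|
      ≤ (|χ1*μ1 - χ2*μ2|/(2*s₁) + χ2*μ2*|s₂-s₁|/(2*(s₁*s₂))) * M := by
    have hw : χ2 * v2' x - χ1 * v1' x
        = (χ2*μ2 - χ1*μ1) * (Pint u L x s₁ x (x-L) - Pint u L x s₁ (-x) (L-x))
          + (χ2*μ2) * ((Pint u L x s₂ x (x-L) - Pint u L x s₁ x (x-L))
              - (Pint u L x s₂ (-x) (L-x) - Pint u L x s₁ (-x) (L-x))) := by
      rw [hrep1, hrep2]; ring
    rw [hw]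
    calc |_| ≤ |(χ2*μ2 - χ1*μ1) * (Pint u L x s₁ x (x-L) - Pint u L x s₁ (-x) (L-x))|
          + |(χ2*μ2) * ((Pint u L x s₂ x (x-L) - Pint u L x s₁ x (x-L))
              - (Pint u L x s₂ (-x) (L-x) - Pint u L x s₁ (-x) (L-x)))| := abs_add_le _ _
      _ ≤ |χ2*μ2 - χ1*μ1| * (M/(2*s₁)) + (χ2*μ2) * (M * |s₁-s₂| / (2*(s₁*s₂))) := by
          rw [abs_mul, abs_mul, abs_of_nonneg (mul_nonneg hχ2 hμ2)]
          exact add_le_add (mul_le_mul_of_nonneg_left hd1 (abs_nonneg _))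
            (mul_le_mul_of_nonneg_left habs (mul_nonneg hχ2 hμ2))
      _ = (|χ1*μ1 - χ2*μ2|/(2*s₁) + χ2*μ2*|s₂-s₁|/(2*(s₁*s₂))) * M := by
          rw [abs_sub_comm (χ1*μ1) (χ2*μ2), abs_sub_comm s₂ s₁]; ring
  rw [min_mul_of_nonneg _ _ hM0]
  exact le_min est1 est2
end

section
/- Let λ > 0 and μ ≥ 0. For every ε > 0 there exists R0 > 0 such that for every R ≥ R0 there exists C > 0 with the following property: for every L > R, every continuous u : [0, L] → ℝ with u ≥ 0, and every v ∈ C²([0, L]) satisfying v'' − λ v + μ u = 0 on [0, L] with v'(0) = v'(L) = 0, one has |v'(x)| + λ v(x) ≤ C · sup_{[0,R]} u + ε · sup_{[0,L]} u for all x ∈ [0, R/2]. -/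
open Set
set_option maxHeartbeats 1000000

/-- Monotonicity from a nonnegative derivative on a closed interval. -/
lemma myMono (a b : ℝ) (f f' : ℝ → ℝ)
    (hf : ∀ x ∈ Icc a b, HasDerivAt f (f' x) x)
    (h0 : ∀ x ∈ Icc a b, 0 ≤ f' x) : MonotoneOn f (Icc a b) := by
  apply monotoneOn_of_deriv_nonneg (convex_Icc a b)
  · exact fun x hx => (hf x hx).continuousAt.continuousWithinAt
  · intro x hx
    exact (hf x (interior_subset hx)).differentiableAt.differentiableWithinAt
  · intro x hx
    rw [(hf x (interior_subset hx)).deriv]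
    exact h0 x (interior_subset hx)

/-- Maximum principle: if h'' ≥ λ h on [0,L], h'(0) ≥ 0 ≥ h'(L), then h ≤ 0. -/
lemma myMP (L lam : ℝ) (hL : 0 < L) (hlam : 0 < lam) (h h' h'' : ℝ → ℝ)
    (hd1 : ∀ x ∈ Icc 0 L, HasDerivAt h (h' x) x)
    (hd2 : ∀ x ∈ Icc 0 L, HasDerivAt h' (h'' x) x)
    (hineq : ∀ x ∈ Icc 0 L, lam * h x ≤ h'' x)
    (hb0 : 0 ≤ h' 0) (hbL : h' L ≤ 0) :
    ∀ x ∈ Icc 0 L, h x ≤ 0 := by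
  set s := Real.sqrt lam with hsdef
  have hs : 0 < s := Real.sqrt_pos.2 hlam
  have hs2 : s ^ 2 = lam := Real.sq_sqrt hlam.le
  have hsx : ∀ x : ℝ, HasDerivAt (fun y : ℝ => s * y) s x := fun x => by
    simpa using (hasDerivAt_id x).const_mul s
  have hsLx : ∀ x : ℝ, HasDerivAt (fun y : ℝ => s * (L - y)) (-s) x := fun x => by
    simpa using ((hasDerivAt_id x).const_sub L).const_mul s
  set q : ℝ → ℝ := fun x => h' x * Real.cosh (s * x) - s * (h x * Real.sinh (s * x))
    with hqdef
  set p : ℝ → ℝ := fun x => h' x * Real.cosh (s * (L - x)) + s * (h x * Real.sinh (s * (L - x)))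
    with hpdef
  have hq : ∀ x ∈ Icc 0 L, HasDerivAt q ((h'' x - lam * h x) * Real.cosh (s * x)) x := by
    intro x hx
    have d1 := (hd2 x hx).mul ((hsx x).cosh)
    have d2 := ((hd1 x hx).mul ((hsx x).sinh)).const_mul s
    have := d1.sub d2
    refine this.congr_deriv ?_
    rw [← hs2]; ring
  have hp : ∀ x ∈ Icc 0 L, HasDerivAt p ((h'' x - lam * h x) * Real.cosh (s * (L - x))) x := by
    intro x hx
    have d1 := (hd2 x hx).mul ((hsLx x).cosh)
    have d2 := ((hd1 x hx).mul ((hsLx x).sinh)).const_mul s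
    have := d1.add d2
    refine this.congr_deriv ?_
    rw [← hs2]; ring
  have hqmono : MonotoneOn q (Icc 0 L) :=
    myMono 0 L q _ hq (fun x hx =>
      mul_nonneg (by linarith [hineq x hx]) (Real.cosh_pos _).le)
  have hpmono : MonotoneOn p (Icc 0 L) :=
    myMono 0 L p _ hp (fun x hx =>
      mul_nonneg (by linarith [hineq x hx]) (Real.cosh_pos _).le)
  intro x hx
  have h0mem : (0:ℝ) ∈ Icc (0:ℝ) L := ⟨le_rfl, hL.le⟩
  have hLmem : L ∈ Icc (0:ℝ) L := ⟨hL.le, le_rfl⟩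
  have hq0 : 0 ≤ q 0 := by simp [hqdef, hb0]
  have hpL : p L ≤ 0 := by simp [hpdef, hbL]
  have hqx : 0 ≤ q x := le_trans hq0 (hqmono h0mem hx hx.1)
  have hpx : p x ≤ 0 := le_trans (hpmono hx hLmem hx.2) hpL
  have hident : Real.cosh (s * x) * p x - Real.cosh (s * (L - x)) * q x
      = s * (h x * Real.sinh (s * L)) := by
    have harg : s * L = s * x + s * (L - x) := by ring
    rw [harg, Real.sinh_add, hqdef, hpdef]; ring
  have hsinh : 0 < Real.sinh (s * L) := Real.sinh_pos_iff.2 (mul_pos hs hL)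
  have hA : 0 ≤ Real.cosh (s * (L - x)) * q x :=
    mul_nonneg (Real.cosh_pos _).le hqx
  have hB : Real.cosh (s * x) * p x ≤ 0 :=
    mul_nonpos_of_nonneg_of_nonpos (Real.cosh_pos _).le hpx
  have key : s * (h x * Real.sinh (s * L)) ≤ 0 := by linarith
  nlinarith [mul_pos hs hsinh]

/-- near the left end, v' and λv are controlled by the sup of u on [0,R]
plus a small multiple of the global sup of u. -/
theorem stmt8 (lam μ : ℝ) (hlam : 0 < lam) (hμ : 0 ≤ μ) :
    ∀ ε > (0:ℝ), ∃ R0 > (0:ℝ), ∀ R ≥ R0, ∃ C > (0:ℝ),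
      ∀ L > R, ∀ u v v' v'' : ℝ → ℝ,
        ContinuousOn u (Icc 0 L) → (∀ x ∈ Icc 0 L, 0 ≤ u x) →
        (∀ x ∈ Icc 0 L, HasDerivAt v (v' x) x) →
        (∀ x ∈ Icc 0 L, HasDerivAt v' (v'' x) x) →
        ContinuousOn v'' (Icc 0 L) →
        (∀ x ∈ Icc 0 L, v'' x - lam * v x + μ * u x = 0) →
        v' 0 = 0 → v' L = 0 →
        ∀ x ∈ Icc 0 (R / 2),
          |v' x| + lam * v x ≤ C * sSup (u '' Icc 0 R) + ε * sSup (u '' Icc 0 L) := by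
  intro ε hε
  set s := Real.sqrt (lam / 2) with hsdef
  have hs : 0 < s := Real.sqrt_pos.2 (by linarith)
  have hs2 : s ^ 2 = lam / 2 := Real.sq_sqrt (by linarith)
  clear_value s
  refine ⟨max 1 (192 * (μ + 1) / (lam * ε)), lt_of_lt_of_le one_pos (le_max_left _ _), ?_⟩
  intro R hR
  have hR1 : (1:ℝ) ≤ R := le_trans (le_max_left _ _) hR
  have hRpos : 0 < R := by linarith
  have hRtail : 192 * μ / (lam * R) ≤ ε := by
    have h2 : 192 * (μ + 1) / (lam * ε) ≤ R := le_trans (le_max_right _ _) hR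
    rw [div_le_iff₀ (by positivity)] at h2
    rw [div_le_iff₀ (by positivity)]
    nlinarith
  have hCpos : 0 < μ * (R + 1) + 1 := by nlinarith
  refine ⟨μ * (R + 1) + 1, hCpos, ?_⟩
  intro L hL u v v' v'' hu hu0 hv1 hv2 hv''c hode hb0 hbL
  have hLpos : 0 < L := lt_trans hRpos hL
  set MR := sSup (u '' Icc 0 R) with hMRdef
  set M := sSup (u '' Icc 0 L) with hMdef
  have hsubR : Icc (0:ℝ) R ⊆ Icc 0 L := Icc_subset_Icc le_rfl hL.le
  have hbddL : BddAbove (u '' Icc 0 L) := (isCompact_Icc.image_of_continuousOn hu).bddAbove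
  have hbddR : BddAbove (u '' Icc 0 R) :=
    (isCompact_Icc.image_of_continuousOn (hu.mono hsubR)).bddAbove
  have huMR : ∀ t ∈ Icc (0:ℝ) R, u t ≤ MR := fun t ht => le_csSup hbddR ⟨t, ht, rfl⟩
  have huM : ∀ t ∈ Icc (0:ℝ) L, u t ≤ M := fun t ht => le_csSup hbddL ⟨t, ht, rfl⟩
  have hMR0 : 0 ≤ MR :=
    le_trans (hu0 0 ⟨le_rfl, hLpos.le⟩) (huMR 0 ⟨le_rfl, hRpos.le⟩)
  have hM0 : 0 ≤ M := le_trans (hu0 0 ⟨le_rfl, hLpos.le⟩) (huM 0 ⟨le_rfl, hLpos.le⟩)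
  clear_value MR M
  -- Step 1: v ≥ 0 on [0,L]
  have hvpos : ∀ x ∈ Icc (0:ℝ) L, 0 ≤ v x := by
    have := myMP L lam hLpos hlam (fun x => -v x) (fun x => -v' x) (fun x => -v'' x)
      (fun x hx => (hv1 x hx).neg) (fun x hx => (hv2 x hx).neg)
      (fun x hx => by
        have h1 := hode x hx
        have h2 := mul_nonneg hμ (hu0 x hx)
        linarith)
      (by simp [hb0]) (by simp [hbL])
    intro x hx
    have := this x hx
    linarith
  -- barrier
  set cR := Real.cosh (s * R) with hcRdef
  have hcR : 0 < cR := Real.cosh_pos _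
  set K := 2 * μ / lam * M / cR with hKdef
  have hKnn : 0 ≤ K :=
    div_nonneg (mul_nonneg (div_nonneg (by linarith) hlam.le) hM0) hcR.le
  have hKc : lam * (K * cR) = 2 * μ * M := by
    rw [hKdef]; field_simp [hcR.ne', hlam.ne']
  clear_value K cR
  have hsx : ∀ x : ℝ, HasDerivAt (fun y : ℝ => s * y) s x := fun x => by
    simpa using (hasDerivAt_id x).const_mul s
  -- Step 2: lam * v ≤ μ MR + lam K cosh(s x) on [0,L]
  have hvb : ∀ x ∈ Icc (0:ℝ) L, lam * v x ≤ μ * MR + lam * (K * Real.cosh (s * x)) := by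
    have := myMP L lam hLpos hlam
      (fun x => v x - (μ / lam * MR + K * Real.cosh (s * x)))
      (fun x => v' x - K * (Real.sinh (s * x) * s))
      (fun x => v'' x - K * (Real.cosh (s * x) * s * s))
      (fun x hx => (hv1 x hx).sub ((((hsx x).cosh).const_mul K).const_add (μ / lam * MR)))
      (fun x hx => by
        have d := (((hsx x).sinh).mul_const s).const_mul K
        exact (hv2 x hx).sub d)
      (fun x hx => by
        -- need: lam * (v x - (μ/lam * MR + K cosh)) ≤ v'' x - K cosh s s
        have h1 := hode x hx
        have hss : Real.cosh (s * x) * s * s = Real.cosh (s * x) * (lam / 2) := by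
          rw [← hs2]; ring
        have hml : lam * (μ / lam * MR) = μ * MR := by field_simp
        rcases le_total x R with hxR | hxR
        · have hu1 : μ * u x ≤ μ * MR :=
            mul_le_mul_of_nonneg_left (huMR x ⟨hx.1, hxR⟩) hμ
          have hpos : 0 ≤ K * Real.cosh (s * x) :=
            mul_nonneg hKnn (Real.cosh_pos _).le
          nlinarith [mul_nonneg hlam.le hpos]
        · have hu1 : μ * u x ≤ μ * M := mul_le_mul_of_nonneg_left (huM x hx) hμ
          have hmono : cR ≤ Real.cosh (s * x) := by
            rw [hcRdef]
            apply Real.cosh_le_cosh.2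
            rw [abs_of_nonneg (mul_nonneg hs.le hRpos.le),
              abs_of_nonneg (mul_nonneg hs.le hx.1)]
            exact mul_le_mul_of_nonneg_left hxR hs.le
          have h3 : 2 * μ * M ≤ lam * (K * Real.cosh (s * x)) := by
            rw [← hKc]
            exact mul_le_mul_of_nonneg_left (mul_le_mul_of_nonneg_left hmono hKnn) hlam.le
          have h4 : 0 ≤ μ * MR := mul_nonneg hμ hMR0
          nlinarith)
      (by simp [hb0]) (by
        simp only [hbL]
        have h1 : 0 ≤ Real.sinh (s * L) := by
          have := Real.sinh_pos_iff.2 (mul_pos hs hLpos); linarith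
        nlinarith [mul_nonneg hKnn (mul_nonneg h1 hs.le)])
    intro x hx
    have h5 := this x hx
    have h6 : lam * (v x - (μ / lam * MR + K * Real.cosh (s * x))) ≤ 0 :=
      mul_nonpos_of_nonneg_of_nonpos hlam.le h5
    have hml : lam * (μ / lam * MR) = μ * MR := by field_simp
    linarith
  -- decay estimate on [0, R/2]
  have hdecay : ∀ t ∈ Icc (0:ℝ) (R / 2),
      lam * v t ≤ μ * MR + 128 * μ * M / (lam * R ^ 2) := by
    intro t ht
    have htL : t ∈ Icc (0:ℝ) L := ⟨ht.1, by linarith [ht.2]⟩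
    have h5 := hvb t htL
    set E := Real.exp (s * (R / 2)) with hEdef
    have hEpos : 0 < E := Real.exp_pos _
    clear_value E
    have h1 : Real.cosh (s * t) ≤ Real.cosh (s * (R / 2)) := by
      apply Real.cosh_le_cosh.2
      rw [abs_of_nonneg (mul_nonneg hs.le ht.1),
        abs_of_nonneg (mul_nonneg hs.le (by linarith : (0:ℝ) ≤ R / 2))]
      exact mul_le_mul_of_nonneg_left ht.2 hs.le
    have h2 : Real.cosh (s * (R / 2)) ≤ E := by
      rw [Real.cosh_eq, hEdef]
      have hnn : 0 ≤ s * (R / 2) := by positivity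
      have := Real.exp_le_exp.2 (show -(s * (R / 2)) ≤ s * (R / 2) by linarith)
      linarith
    have h3 : E * E / 2 ≤ cR := by
      rw [hcRdef, Real.cosh_eq, hEdef, ← Real.exp_add]
      have harg : s * (R / 2) + s * (R / 2) = s * R := by ring
      rw [harg]
      linarith [Real.exp_pos (-(s * R))]
    have h4 : lam * R ^ 2 / 32 ≤ E := by
      have he2 : E = Real.exp (s * R / 4) * Real.exp (s * R / 4) := by
        rw [hEdef, ← Real.exp_add]; congr 1; ring
      have he3 := Real.add_one_le_exp (s * R / 4)
      have he4 : 0 ≤ s * R / 4 := by positivity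
      have he5 : s * R / 4 ≤ Real.exp (s * R / 4) := by linarith
      have he6 : s * R / 4 * (s * R / 4) ≤ Real.exp (s * R / 4) * Real.exp (s * R / 4) :=
        mul_le_mul he5 he5 he4 (le_trans he4 he5)
      have he7 : s * R / 4 * (s * R / 4) = s ^ 2 * R ^ 2 / 16 := by ring
      rw [he7, hs2] at he6
      rw [he2]
      linarith
    -- from these: cosh(s t) ≤ E, and lam*R^2 * E ≤ 32*E ... derive
    have hKE : lam * (K * Real.cosh (s * t)) * (lam * R ^ 2) ≤ 128 * μ * M := by
      have hlK : 0 ≤ lam * K := mul_nonneg hlam.le hKnn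
      have t1 : lam * (K * Real.cosh (s * t)) ≤ lam * K * E := by
        calc lam * (K * Real.cosh (s * t)) = lam * K * Real.cosh (s * t) := by ring
          _ ≤ lam * K * E := mul_le_mul_of_nonneg_left (le_trans h1 h2) hlK
      have t2 : lam * R ^ 2 * E ≤ 32 * (E * E) := by
        have : lam * R ^ 2 ≤ 32 * E := by linarith
        calc lam * R ^ 2 * E ≤ 32 * E * E := mul_le_mul_of_nonneg_right this hEpos.le
          _ = 32 * (E * E) := by ring
      have t3 : lam * R ^ 2 * E ≤ 64 * cR := by linarith
      have u1 : lam * (K * Real.cosh (s * t)) * (lam * R ^ 2)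
          ≤ lam * K * E * (lam * R ^ 2) :=
        mul_le_mul_of_nonneg_right t1 (by positivity)
      have u2 : lam * K * (lam * R ^ 2 * E) ≤ lam * K * (64 * cR) :=
        mul_le_mul_of_nonneg_left t3 hlK
      have u3 : lam * K * E * (lam * R ^ 2) = lam * K * (lam * R ^ 2 * E) := by ring
      have u4 : lam * K * (64 * cR) = 64 * (lam * (K * cR)) := by ring
      linarith [u1, u2, u3, u4, hKc]
    have hdiv : lam * (K * Real.cosh (s * t)) ≤ 128 * μ * M / (lam * R ^ 2) := by
      rw [le_div_iff₀ (by positivity)]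
      linarith
    linarith
  -- bound on |v''| on [0, R/2]
  set B := 2 * (μ * MR) + 128 * μ * M / (lam * R ^ 2) with hBdef
  have hvpp : ∀ t ∈ Icc (0:ℝ) (R / 2), |v'' t| ≤ B := by
    intro t ht
    have htL : t ∈ Icc (0:ℝ) L := ⟨ht.1, by linarith [ht.2]⟩
    have h1 := hode t htL
    have h2 := hdecay t ht
    have h3 : μ * u t ≤ μ * MR :=
      mul_le_mul_of_nonneg_left (huMR t ⟨ht.1, by linarith [ht.2]⟩) hμ
    have h4 : 0 ≤ μ * u t := mul_nonneg hμ (hu0 t htL)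
    have h5 : 0 ≤ lam * v t := mul_nonneg hlam.le (hvpos t htL)
    have hX : 0 ≤ 128 * μ * M / (lam * R ^ 2) :=
      div_nonneg (mul_nonneg (mul_nonneg (by norm_num) hμ) hM0) (by positivity)
    rw [abs_le, hBdef]
    constructor <;> nlinarith
  -- FTC bound for v'
  intro x hx
  have hx2 : x ∈ Icc (0:ℝ) L := ⟨hx.1, by linarith [hx.2]⟩
  have hsubxL : Icc (0:ℝ) x ⊆ Icc 0 L := Icc_subset_Icc le_rfl hx2.2
  have hftc : ∫ t in (0:ℝ)..x, v'' t = v' x - v' 0 := by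
    apply intervalIntegral.integral_eq_sub_of_hasDerivAt
    · intro t ht
      rw [uIcc_of_le hx.1] at ht
      exact hv2 t (hsubxL ht)
    · apply ContinuousOn.intervalIntegrable
      rw [uIcc_of_le hx.1]
      exact hv''c.mono hsubxL
  have hbnd : ‖∫ t in (0:ℝ)..x, v'' t‖ ≤ B * |x - 0| := by
    apply intervalIntegral.norm_integral_le_of_norm_le_const
    intro t ht
    rw [uIoc_of_le hx.1] at ht
    rw [Real.norm_eq_abs]
    exact hvpp t ⟨ht.1.le, le_trans ht.2 hx.2⟩
  have hv'B : |v' x| ≤ B * (R / 2) := by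
    rw [Real.norm_eq_abs, hftc, hb0] at hbnd
    simp only [sub_zero] at hbnd
    rw [abs_of_nonneg hx.1] at hbnd
    have hBnn : 0 ≤ B := le_trans (abs_nonneg _) (hvpp 0 ⟨le_rfl, by linarith⟩)
    calc |v' x| ≤ B * x := hbnd
      _ ≤ B * (R / 2) := mul_le_mul_of_nonneg_left hx.2 hBnn
  -- assemble
  have hlamv := hdecay x hx
  have hchain : 128 * μ * M / (lam * R ^ 2) ≤ 128 * μ * M / (lam * R) := by
    have hnum : 0 ≤ 128 * μ * M := mul_nonneg (mul_nonneg (by norm_num) hμ) hM0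
    have hd : lam * R ≤ lam * R ^ 2 := by
      have h9 := mul_le_mul_of_nonneg_left hR1 (mul_nonneg hlam.le hRpos.le)
      nlinarith [h9]
    rw [div_le_div_iff₀ (by positivity) (by positivity)]
    nlinarith [mul_le_mul_of_nonneg_left hd hnum]
  have hBsplit : B * (R / 2) = μ * MR * R + 64 * μ * M / (lam * R) := by
    rw [hBdef]; field_simp; ring
  have htail : 64 * μ * M / (lam * R) + 128 * μ * M / (lam * R) ≤ ε * M := by
    have heq : 64 * μ * M / (lam * R) + 128 * μ * M / (lam * R)
        = (192 * μ / (lam * R)) * M := by ring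
    rw [heq]
    exact mul_le_mul_of_nonneg_right hRtail hM0
  have hMRterm : μ * MR * R + μ * MR ≤ (μ * (R + 1) + 1) * MR := by nlinarith
  calc |v' x| + lam * v x
      ≤ (μ * MR * R + 64 * μ * M / (lam * R)) + (μ * MR + 128 * μ * M / (lam * R ^ 2)) := by
        rw [← hBsplit]; linarith
    _ ≤ (μ * MR * R + μ * MR) + (64 * μ * M / (lam * R) + 128 * μ * M / (lam * R)) := by
        linarith
    _ ≤ (μ * (R + 1) + 1) * MR + ε * M := by linarith
end

section
/- Let λ > 0 and μ ≥ 0. For every ε > 0 there exists R0 > 0 such that for every R ≥ R0 there exists C > 0 with the following property: for every L > 2R, every x0 ∈ (R, L − R), every continuous u : [0, L] → ℝ with u ≥ 0, and every v ∈ C²([0, L]) satisfying v'' − λ v + μ u = 0 on [0, L] with v'(0) = v'(L) = 0, one has |v'(x)| + λ v(x) ≤ C · sup_{[x0−R, x0+R]} u + ε · sup_{[0,L]} u for all x ∈ [x0 − R/2, x0 + R/2]. -/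
open Set Filter Topology

/-- If f c = 0 and f has positive derivative at c, then f is positive just right of c
and negative just left of c. -/
lemma sign_near (f : ℝ → ℝ) (c q : ℝ) (hf : HasDerivAt f q c) (hfc : f c = 0)
    (hq : 0 < q) :
    ∃ δ > 0, (∀ x, c < x → x < c + δ → 0 < f x) ∧ (∀ x, c - δ < x → x < c → f x < 0) := by
  have h := hasDerivAt_iff_tendsto_slope.mp hf
  have h2 : ∀ᶠ x in nhdsWithin c {c}ᶜ, 0 < slope f c x := h.eventually (eventually_gt_nhds hq)
  rw [eventually_nhdsWithin_iff] at h2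
  rcases Metric.eventually_nhds_iff.mp h2 with ⟨δ, hδ, hδ'⟩
  have key : ∀ x, x ≠ c → |x - c| < δ → 0 < (f x) / (x - c) := by
    intro x hx hxd
    have := hδ' (show dist x c < δ by rwa [Real.dist_eq]) hx
    rwa [slope_def_field, hfc, sub_zero] at this
  refine ⟨δ, hδ, ?_, ?_⟩
  · intro x h1 h2'
    have := key x (by linarith) (by rw [abs_of_pos] <;> linarith)
    have hd : 0 < x - c := by linarith
    nlinarith [mul_pos this hd, div_mul_cancel₀ (f x) (ne_of_gt hd)]
  · intro x h1 h2'
    have := key x (by intro h; linarith [h ▸ h1]) (by rw [abs_of_neg] <;> linarith)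
    have hd : x - c < 0 := by linarith
    nlinarith [div_mul_cancel₀ (f x) (ne_of_lt hd)]

/-- Second derivative test: at a point c of Icc a b where v attains its max over Icc a b
and v' c = 0, the second derivative is ≤ 0. -/
lemma max_snd_deriv_nonpos (a b c : ℝ) (v v' : ℝ → ℝ) (q : ℝ)
    (hab : a < b) (hc : c ∈ Icc a b)
    (hv : ∀ x ∈ Icc a b, HasDerivAt v (v' x) x)
    (hq : HasDerivAt v' q c) (hv'c : v' c = 0)
    (hmax : ∀ x ∈ Icc a b, v x ≤ v c) : q ≤ 0 := by
  by_contra hq0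
  push_neg at hq0
  obtain ⟨δ, hδ, hR, hL⟩ := sign_near v' c q hq hv'c hq0
  rcases lt_or_eq_of_le hc.2 with hcb | hcb
  · -- c < b : v strictly increasing just right of c
    set d := min b (c + δ/2) with hd
    have hcd : c < d := lt_min hcb (by linarith)
    have hdb : d ≤ b := min_le_left _ _
    have hsub : Icc c d ⊆ Icc a b := Icc_subset_Icc hc.1 hdb
    have hmono : StrictMonoOn v (Icc c d) := by
      apply strictMonoOn_of_deriv_pos (convex_Icc c d)
      · exact fun x hx => (hv x (hsub hx)).continuousAt.continuousWithinAt
      · intro x hx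
        rw [interior_Icc] at hx
        rw [(hv x (hsub ⟨le_of_lt hx.1, le_of_lt hx.2⟩)).deriv]
        exact hR x hx.1 (by have := hx.2; have : d ≤ c + δ/2 := min_le_right _ _; linarith)
    have := hmono (left_mem_Icc.mpr hcd.le) (right_mem_Icc.mpr hcd.le) hcd
    exact absurd (hmax d (hsub (right_mem_Icc.mpr hcd.le))) (by linarith)
  · -- c = b : v strictly decreasing just left of c
    have hac : a < c := hcb ▸ hab
    set d := max a (c - δ/2) with hd
    have hcd : d < c := max_lt hac (by linarith)
    have hda : a ≤ d := le_max_left _ _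
    have hsub : Icc d c ⊆ Icc a b := Icc_subset_Icc hda hc.2
    have hanti : StrictAntiOn v (Icc d c) := by
      apply strictAntiOn_of_deriv_neg (convex_Icc d c)
      · exact fun x hx => (hv x (hsub hx)).continuousAt.continuousWithinAt
      · intro x hx
        rw [interior_Icc] at hx
        rw [(hv x (hsub ⟨le_of_lt hx.1, le_of_lt hx.2⟩)).deriv]
        exact hL x (by have := hx.1; have : c - δ/2 ≤ d := le_max_right _ _; linarith) hx.2
    have := hanti (left_mem_Icc.mpr hcd.le) (right_mem_Icc.mpr hcd.le) hcd
    exact absurd (hmax d (hsub (left_mem_Icc.mpr hcd.le))) (by linarith)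

/-- Min version. -/
lemma min_snd_deriv_nonneg (a b c : ℝ) (v v' : ℝ → ℝ) (q : ℝ)
    (hab : a < b) (hc : c ∈ Icc a b)
    (hv : ∀ x ∈ Icc a b, HasDerivAt v (v' x) x)
    (hq : HasDerivAt v' q c) (hv'c : v' c = 0)
    (hmin : ∀ x ∈ Icc a b, v c ≤ v x) : 0 ≤ q := by
  have := max_snd_deriv_nonpos a b c (fun y => -v y) (fun y => -v' y) (-q) hab hc
    (fun x hx => (hv x hx).neg) hq.neg (by simp [hv'c])
    (fun x hx => by simpa using hmin x hx)
  linarith [this]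

/-- Global bounds from the Neumann problem: 0 ≤ v and lam * v ≤ μ * M. -/
lemma global_bounds (lam μ L : ℝ) (hlam : 0 < lam) (hμ : 0 ≤ μ) (hL : 0 < L)
    (u v v' v'' : ℝ → ℝ)
    (hu0 : ∀ x ∈ Icc 0 L, 0 ≤ u x)
    (hv : ∀ x ∈ Icc 0 L, HasDerivAt v (v' x) x)
    (hv' : ∀ x ∈ Icc 0 L, HasDerivAt v' (v'' x) x)
    (heq : ∀ x ∈ Icc 0 L, v'' x - lam * v x + μ * u x = 0)
    (hb0 : v' 0 = 0) (hbL : v' L = 0)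
    (M : ℝ) (hM : ∀ x ∈ Icc 0 L, u x ≤ M) :
    (∀ x ∈ Icc 0 L, 0 ≤ v x) ∧ (∀ x ∈ Icc 0 L, lam * v x ≤ μ * M) := by
  have hvc : ContinuousOn v (Icc 0 L) :=
    fun x hx => (hv x hx).continuousAt.continuousWithinAt
  have hne : (Icc (0:ℝ) L).Nonempty := ⟨0, left_mem_Icc.mpr hL.le⟩
  constructor
  · obtain ⟨c, hc, hmin⟩ := isCompact_Icc.exists_isMinOn hne hvc
    have hmin' : ∀ x ∈ Icc 0 L, v c ≤ v x := fun x hx => hmin hx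
    have hd0 : v' c = 0 := by
      rcases eq_or_lt_of_le hc.1 with h0 | h0
      · exact h0 ▸ hb0
      rcases eq_or_lt_of_le hc.2 with hL' | hL'
      · exact hL' ▸ hbL
      exact (hmin.isLocalMin (Icc_mem_nhds h0 hL')).hasDerivAt_eq_zero (hv c hc)
    have hq : 0 ≤ v'' c :=
      min_snd_deriv_nonneg 0 L c v v' (v'' c) hL hc hv (hv' c hc) hd0 hmin'
    have := heq c hc
    have hvc0 : 0 ≤ v c := by nlinarith [hu0 c hc]
    exact fun x hx => le_trans hvc0 (hmin' x hx)
  · obtain ⟨c, hc, hmax⟩ := isCompact_Icc.exists_isMaxOn hne hvc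
    have hmax' : ∀ x ∈ Icc 0 L, v x ≤ v c := fun x hx => hmax hx
    have hd0 : v' c = 0 := by
      rcases eq_or_lt_of_le hc.1 with h0 | h0
      · exact h0 ▸ hb0
      rcases eq_or_lt_of_le hc.2 with hL' | hL'
      · exact hL' ▸ hbL
      exact (hmax.isLocalMax (Icc_mem_nhds h0 hL')).hasDerivAt_eq_zero (hv c hc)
    have hq : v'' c ≤ 0 :=
      max_snd_deriv_nonpos 0 L c v v' (v'' c) hL hc hv (hv' c hc) hd0 hmax'
    have heqc := heq c hc
    have hcu : u c ≤ M := hM c hc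
    intro x hx
    have : lam * v c ≤ μ * M := by nlinarith [mul_le_mul_of_nonneg_left hcu hμ]
    nlinarith [hmax' x hx]

/-- Comparison principle: if z'' ≥ lam·z on [m,p] and z ≤ 0 at endpoints, then z ≤ 0. -/
lemma comparison (lam m p : ℝ) (hlam : 0 < lam) (hmp : m < p)
    (z z' z'' : ℝ → ℝ)
    (hz : ∀ x ∈ Icc m p, HasDerivAt z (z' x) x)
    (hz' : ∀ x ∈ Icc m p, HasDerivAt z' (z'' x) x)
    (hineq : ∀ x ∈ Icc m p, lam * z x ≤ z'' x)
    (hm : z m ≤ 0) (hp : z p ≤ 0) : ∀ x ∈ Icc m p, z x ≤ 0 := by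
  have hzc : ContinuousOn z (Icc m p) :=
    fun x hx => (hz x hx).continuousAt.continuousWithinAt
  obtain ⟨c, hc, hmax⟩ := isCompact_Icc.exists_isMaxOn (nonempty_Icc.mpr hmp.le) hzc
  have hmax' : ∀ x ∈ Icc m p, z x ≤ z c := fun x hx => hmax hx
  rcases le_or_gt (z c) 0 with h | h
  · exact fun x hx => le_trans (hmax' x hx) h
  exfalso
  have hcm : m < c := by
    rcases eq_or_lt_of_le hc.1 with h0 | h0
    · exact absurd (h0 ▸ h) (by simpa using not_lt.mpr hm)
    · exact h0
  have hcp : c < p := by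
    rcases eq_or_lt_of_le hc.2 with h0 | h0
    · rw [h0] at h; linarith
    · exact h0
  have hd0 : z' c = 0 :=
    (hmax.isLocalMax (Icc_mem_nhds hcm hcp)).hasDerivAt_eq_zero (hz c hc)
  have hq : z'' c ≤ 0 :=
    max_snd_deriv_nonpos m p c z z' (z'' c) hmp hc hz (hz' c hc) hd0 hmax'
  nlinarith [hineq c hc]


set_option maxHeartbeats 1000000 in
/-- interior version of the estimate: near x0, v' and λv are controlled by
the sup of u on [x0−R, x0+R] plus a small multiple of the global sup of u. -/
theorem stmt9 (lam μ : ℝ) (hlam : 0 < lam) (hμ : 0 ≤ μ) :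
    ∀ ε > (0:ℝ), ∃ R0 > (0:ℝ), ∀ R ≥ R0, ∃ C > (0:ℝ),
      ∀ L > 2 * R, ∀ x0 ∈ Ioo R (L - R), ∀ u v v' v'' : ℝ → ℝ,
        ContinuousOn u (Icc 0 L) → (∀ x ∈ Icc 0 L, 0 ≤ u x) →
        (∀ x ∈ Icc 0 L, HasDerivAt v (v' x) x) →
        (∀ x ∈ Icc 0 L, HasDerivAt v' (v'' x) x) →
        ContinuousOn v'' (Icc 0 L) →
        (∀ x ∈ Icc 0 L, v'' x - lam * v x + μ * u x = 0) →
        v' 0 = 0 → v' L = 0 →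
        ∀ x ∈ Icc (x0 - R / 2) (x0 + R / 2),
          |v' x| + lam * v x ≤ C * sSup (u '' Icc (x0 - R) (x0 + R)) + ε * sSup (u '' Icc 0 L) := by
  intro ε hε
  obtain ⟨s, hs_def⟩ : ∃ a : ℝ, a = Real.sqrt lam := ⟨_, rfl⟩
  have hs : 0 < s := hs_def ▸ Real.sqrt_pos.mpr hlam
  have hs2 : s ^ 2 = lam := by rw [hs_def]; exact Real.sq_sqrt hlam.le
  -- the coefficient of the global sup tends to 0 as R → ∞
  have t0 : Tendsto (fun R : ℝ => Real.exp (-(s/4)*R)) atTop (nhds 0) := by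
    apply Real.tendsto_exp_atBot.comp
    exact Tendsto.const_mul_atTop_of_neg (by linarith : -(s/4) < 0) tendsto_id
  have t1 : Tendsto (fun R : ℝ => R * Real.exp (-(s/4)*R)) atTop (nhds 0) := by
    have h := (Real.tendsto_pow_mul_exp_neg_atTop_nhds_zero 1).comp
      (Tendsto.const_mul_atTop (show (0:ℝ) < s/4 by linarith) tendsto_id)
    have h2 := h.const_mul (4/s)
    rw [mul_zero] at h2
    apply h2.congr
    intro R
    simp only [Function.comp, pow_one, id]
    field_simp
  have ta : Tendsto (fun R : ℝ => Real.exp (-(s/4)*R) * R⁻¹) atTop (nhds 0) := by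
    have := t0.mul tendsto_inv_atTop_zero
    simpa using this
  have hlim : Tendsto (fun R : ℝ =>
      2*(μ/lam) * Real.exp (-(s/4)*R) * (4/R + 5*R*lam/4 + lam)) atTop (nhds 0) := by
    have comb := ((ta.const_mul 4).add ((t1.const_mul (5*lam/4)).add (t0.const_mul lam))).const_mul
      (2*(μ/lam))
    simp only [mul_zero, add_zero] at comb
    apply comb.congr
    intro R
    ring
  have hev : ∀ᶠ R in atTop, 2*(μ/lam) * Real.exp (-(s/4)*R) * (4/R + 5*R*lam/4 + lam) ≤ ε :=
    hlim.eventually (eventually_le_nhds hε)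
  obtain ⟨N, hN⟩ := eventually_atTop.mp hev
  refine ⟨max N 1, lt_of_lt_of_le one_pos (le_max_right N 1), ?_⟩
  intro R hR
  have hR1 : (1:ℝ) ≤ R := le_trans (le_max_right N 1) hR
  have hRN : N ≤ R := le_trans (le_max_left N 1) hR
  have hR0 : (0:ℝ) < R := by linarith
  obtain ⟨E, hE_def⟩ : ∃ a : ℝ, a = Real.exp (-(s/4)*R) := ⟨_, rfl⟩
  have hE0 : 0 < E := hE_def ▸ Real.exp_pos _
  obtain ⟨P, hP_def⟩ : ∃ a : ℝ, a = 4/R + 5*R*lam/4 + lam := ⟨_, rfl⟩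
  have hPpos : 0 < P := by rw [hP_def]; positivity
  obtain ⟨C, hC_def⟩ : ∃ a : ℝ, a = P*(μ/lam) + 5*R*μ/4 + 1 := ⟨_, rfl⟩
  have hC0 : 0 < C := by
    have h1 : 0 ≤ P*(μ/lam) := mul_nonneg hPpos.le (div_nonneg hμ hlam.le)
    have h2 : 0 ≤ R*μ := mul_nonneg hR0.le hμ
    rw [hC_def]; nlinarith
  refine ⟨C, hC0, ?_⟩
  intro L hL x0 hx0 u v v' v'' hu hu0 hv hv' hv''c heq hb0 hbL x hx
  obtain ⟨hx0R, hx0L⟩ := hx0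
  have hL0 : 0 < L := by linarith
  obtain ⟨m, hm_def⟩ : ∃ a : ℝ, a = x0 - R := ⟨_, rfl⟩
  obtain ⟨p, hp_def⟩ : ∃ a : ℝ, a = x0 + R := ⟨_, rfl⟩
  have hsub : Icc m p ⊆ Icc 0 L := Icc_subset_Icc (by simp [hm_def]; linarith) (by simp [hp_def]; linarith)
  obtain ⟨M, hM_def⟩ : ∃ a : ℝ, a = sSup (u '' Icc 0 L) := ⟨_, rfl⟩
  obtain ⟨Mloc, hMloc_def⟩ : ∃ a : ℝ, a = sSup (u '' Icc m p) := ⟨_, rfl⟩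
  rw [show Icc (x0 - R) (x0 + R) = Icc m p by rw [hm_def, hp_def], ← hM_def, ← hMloc_def]
  have hbddG : BddAbove (u '' Icc 0 L) := (isCompact_Icc.image_of_continuousOn hu).bddAbove
  have hbddL : BddAbove (u '' Icc m p) :=
    (isCompact_Icc.image_of_continuousOn (hu.mono hsub)).bddAbove
  have hMb : ∀ t ∈ Icc 0 L, u t ≤ M := fun t ht => by rw [hM_def]; exact le_csSup hbddG (mem_image_of_mem u ht)
  have hMlocb : ∀ t ∈ Icc m p, u t ≤ Mloc := fun t ht => by rw [hMloc_def]; exact le_csSup hbddL (mem_image_of_mem u ht)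
  have hx0mem : x0 ∈ Icc m p := by constructor <;> simp [hm_def, hp_def] <;> linarith
  have hMloc0 : 0 ≤ Mloc := le_trans (hu0 x0 (hsub hx0mem)) (hMlocb x0 hx0mem)
  have hM0 : 0 ≤ M := le_trans (hu0 x0 (hsub hx0mem)) (hMb x0 (hsub hx0mem))
  obtain ⟨hv0, hvM⟩ := global_bounds lam μ L hlam hμ hL0 u v v' v'' hu0 hv hv' heq hb0 hbL M hMb
  -- the barrier
  obtain ⟨A, hA_def⟩ : ∃ a : ℝ, a = (μ/lam)*Mloc := ⟨_, rfl⟩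
  obtain ⟨B, hB_def⟩ : ∃ a : ℝ, a = (μ/lam)*M := ⟨_, rfl⟩
  have hA0 : 0 ≤ A := hA_def ▸ mul_nonneg (div_nonneg hμ hlam.le) hMloc0
  have hB0 : 0 ≤ B := hB_def ▸ mul_nonneg (div_nonneg hμ hlam.le) hM0
  obtain ⟨w, hw_def⟩ : ∃ a : ℝ → ℝ, a = fun y => A + B*(Real.exp (s*(y-p)) + Real.exp (-(s*(y-m)))) := ⟨_, rfl⟩
  obtain ⟨w', hw'_def⟩ : ∃ a : ℝ → ℝ, a = fun y => B*(s*Real.exp (s*(y-p)) - s*Real.exp (-(s*(y-m)))) := ⟨_, rfl⟩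
  obtain ⟨w'', hw''_def⟩ : ∃ a : ℝ → ℝ, a = fun y => B*(s^2*Real.exp (s*(y-p)) + s^2*Real.exp (-(s*(y-m)))) := ⟨_, rfl⟩
  have hw : ∀ y : ℝ, HasDerivAt w (w' y) y := by
    intro y
    have h1 : HasDerivAt (fun y : ℝ => s*(y-p)) s y := by
      simpa using ((hasDerivAt_id y).sub_const p).const_mul s
    have h2 : HasDerivAt (fun y : ℝ => -(s*(y-m))) (-s) y := by
      simpa using (((hasDerivAt_id y).sub_const m).const_mul s).fun_neg
    have e1 := h1.exp
    have e2 := h2.exp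
    have hder := ((e1.add e2).const_mul B).const_add A
    have hval : w' y = B * (Real.exp (s*(y-p)) * s + Real.exp (-(s*(y-m))) * (-s)) := by
      simp only [hw'_def]; ring
    rw [hval, hw_def]; exact hder
  have hw' : ∀ y : ℝ, HasDerivAt w' (w'' y) y := by
    intro y
    have h1 : HasDerivAt (fun y : ℝ => s*(y-p)) s y := by
      simpa using ((hasDerivAt_id y).sub_const p).const_mul s
    have h2 : HasDerivAt (fun y : ℝ => -(s*(y-m))) (-s) y := by
      simpa using (((hasDerivAt_id y).sub_const m).const_mul s).fun_neg
    have hder := (((h1.exp.const_mul s).sub (h2.exp.const_mul s)).const_mul B)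
    have hval : w'' y = B * (s * (Real.exp (s*(y-p)) * s) - s * (Real.exp (-(s*(y-m))) * (-s))) := by
      simp only [hw''_def]; ring
    rw [hval, hw'_def]; exact hder
  have hlamA : lam * A = μ * Mloc := by
    rw [hA_def]; field_simp
  have hmp : m < p := by simp [hm_def, hp_def]; linarith
  -- comparison on [m, p]
  have hcomp : ∀ t ∈ Icc m p, v t - w t ≤ 0 := by
    apply comparison lam m p hlam hmp (fun y => v y - w y) (fun y => v' y - w' y)
      (fun y => v'' y - w'' y)
    · exact fun t ht => (hv t (hsub ht)).sub (hw t)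
    · exact fun t ht => (hv' t (hsub ht)).sub (hw' t)
    · intro t ht
      have heqt := heq t (hsub ht)
      have hwt : w'' t = lam * (w t - A) := by
        simp only [hw''_def, hw_def, hs2]
        ring
      have hut : μ * u t ≤ μ * Mloc := mul_le_mul_of_nonneg_left (hMlocb t ht) hμ
      show lam * (v t - w t) ≤ v'' t - w'' t
      rw [hwt]
      nlinarith
    · -- at m
      have h1 : v m ≤ B := by
        have := hvM m (hsub (left_mem_Icc.mpr hmp.le))
        rw [hB_def]
        rw [div_mul_eq_mul_div, le_div_iff₀ hlam]
        linarith
      have h2 : B ≤ w m := by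
        simp only [hw_def]
        have : Real.exp (-(s*(m-m))) = 1 := by simp
        rw [this]
        nlinarith [Real.exp_pos (s*(m-p))]
      linarith
    · -- at p
      have h1 : v p ≤ B := by
        have := hvM p (hsub (right_mem_Icc.mpr hmp.le))
        rw [hB_def]
        rw [div_mul_eq_mul_div, le_div_iff₀ hlam]
        linarith
      have h2 : B ≤ w p := by
        simp only [hw_def]
        have : Real.exp (s*(p-p)) = 1 := by simp
        rw [this]
        nlinarith [Real.exp_pos (-(s*(p-m)))]
      linarith
  -- bound for v on the inner interval I3
  obtain ⟨V, hV_def⟩ : ∃ a : ℝ, a = A + 2*B*E := ⟨_, rfl⟩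
  have hV0 : 0 ≤ V := by
    have := mul_nonneg hB0 hE0.le
    rw [hV_def]; linarith
  obtain ⟨a1, ha1_def⟩ : ∃ a : ℝ, a = x0 - 3*R/4 := ⟨_, rfl⟩
  obtain ⟨b1, hb1_def⟩ : ∃ a : ℝ, a = x0 - R/2 := ⟨_, rfl⟩
  have hI3sub : Icc a1 (x0+3*R/4) ⊆ Icc m p :=
    Icc_subset_Icc (by rw [ha1_def, hm_def]; linarith) (by rw [hp_def]; linarith)
  have hVb : ∀ t ∈ Icc a1 (x0+3*R/4), v t ≤ V := by
    intro t ht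
    have h1 := hcomp t (hI3sub ht)
    have he1 : Real.exp (s*(t-p)) ≤ E := by
      rw [hE_def]
      apply Real.exp_le_exp.mpr
      have : t - p ≤ -(R/4) := by simp [hp_def] at ht ⊢; linarith [ht.2]
      nlinarith
    have he2 : Real.exp (-(s*(t-m))) ≤ E := by
      rw [hE_def]
      apply Real.exp_le_exp.mpr
      have : R/4 ≤ t - m := by simp [hm_def] at ht ⊢; linarith [ht.1]
      nlinarith
    have : w t ≤ V := by
      simp only [hw_def, hV_def]
      nlinarith
    linarith
  -- bound for |v''| on I3
  have hDb : ∀ t ∈ Icc a1 (x0+3*R/4), |v'' t| ≤ lam*V + μ*Mloc := by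
    intro t ht
    have htL : t ∈ Icc 0 L := hsub (hI3sub ht)
    have heqt := heq t htL
    have h1 : lam * v t ≤ lam * V := mul_le_mul_of_nonneg_left (hVb t ht) hlam.le
    have h2 : 0 ≤ lam * v t := mul_nonneg hlam.le (hv0 t htL)
    have h3 : 0 ≤ μ * u t := mul_nonneg hμ (hu0 t htL)
    have h4 : μ * u t ≤ μ * Mloc := mul_le_mul_of_nonneg_left (hMlocb t (hI3sub ht)) hμ
    rw [abs_le]
    constructor <;> nlinarith
  -- mean value point ξ
  have hab1 : a1 < b1 := by rw [ha1_def, hb1_def]; linarith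
  have hIab : Icc a1 b1 ⊆ Icc 0 L := by
    intro t ht
    exact hsub (hI3sub (Icc_subset_Icc (le_refl _) (by rw [hb1_def]; linarith) ht))
  obtain ⟨ξ, hξ, hξv⟩ := exists_hasDerivAt_eq_slope v v' hab1
    (fun t ht => (hv t (hIab ht)).continuousAt.continuousWithinAt)
    (fun t ht => hv t (hIab ⟨ht.1.le, ht.2.le⟩))
  have hmema1 : a1 ∈ Icc a1 (x0+3*R/4) := left_mem_Icc.mpr (by rw [ha1_def]; linarith)
  have hmemb1 : b1 ∈ Icc a1 (x0+3*R/4) := ⟨hab1.le, by rw [hb1_def]; linarith⟩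
  have habsv : |v b1 - v a1| ≤ V := by
    rw [abs_le]
    constructor
    · have h1 := hv0 b1 (hsub (hI3sub hmemb1)); have h2 := hVb a1 hmema1; linarith
    · have h1 := hv0 a1 (hsub (hI3sub hmema1)); have h2 := hVb b1 hmemb1; linarith
  have hξabs : |v' ξ| ≤ V / (R/4) := by
    rw [hξv, show b1 - a1 = R/4 by rw [hb1_def, ha1_def]; ring, abs_div,
      abs_of_pos (by linarith : (0:ℝ) < R/4)]
    rw [div_le_div_iff_of_pos_right (by linarith : (0:ℝ) < R/4)]
    exact habsv
  obtain ⟨hxl, hxr⟩ := hx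
  have hxI3 : x ∈ Icc a1 (x0+3*R/4) := ⟨by rw [ha1_def]; linarith, by linarith⟩
  have hseg : ∀ t ∈ Icc ξ (x0 + R/2), HasDerivWithinAt v' (v'' t) (Icc ξ (x0 + R/2)) t := by
    intro t ht
    have htI3 : t ∈ Icc a1 (x0+3*R/4) := ⟨by linarith [ht.1, hξ.1.le], by linarith [ht.2]⟩
    exact (hv' t (hsub (hI3sub htI3))).hasDerivWithinAt
  have hbound : ∀ t ∈ Ico ξ (x0 + R/2), ‖v'' t‖ ≤ lam*V + μ*Mloc := by
    intro t ht
    rw [Real.norm_eq_abs]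
    exact hDb t ⟨by linarith [ht.1, hξ.1.le], by linarith [ht.2.le]⟩
  have hξb1 : ξ ≤ b1 := hξ.2.le
  have hξb1' : ξ ≤ x0 - R/2 := by rw [hb1_def] at hξb1; exact hξb1
  have hξa1 : a1 ≤ ξ := hξ.1.le
  have hξa1' : x0 - 3*R/4 ≤ ξ := by rw [ha1_def] at hξa1; exact hξa1
  have hxmem : x ∈ Icc ξ (x0 + R/2) := ⟨by linarith, hxr⟩
  have hsegx := norm_image_sub_le_of_norm_deriv_le_segment' hseg hbound x hxmem
  rw [Real.norm_eq_abs] at hsegx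
  have hDpos : 0 ≤ lam*V + μ*Mloc := add_nonneg (mul_nonneg hlam.le hV0) (mul_nonneg hμ hMloc0)
  have hstep : |v' x - v' ξ| ≤ (lam*V + μ*Mloc) * (5*R/4) := by
    refine le_trans hsegx (mul_le_mul_of_nonneg_left ?_ hDpos)
    linarith
  have habs : |v' x| ≤ |v' ξ| + |v' x - v' ξ| := by
    calc |v' x| = |v' ξ + (v' x - v' ξ)| := by congr 1; ring
    _ ≤ _ := abs_add_le _ _
  have hlamvx : lam * v x ≤ lam * V := mul_le_mul_of_nonneg_left (hVb x hxI3) hlam.le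
  have hεR' : 2*(μ/lam)*E*P ≤ ε := by rw [hE_def, hP_def]; exact hN R hRN
  have hlamne : lam ≠ 0 := hlam.ne'
  have hRne : R ≠ 0 := hR0.ne'
  have key : V/(R/4) + (lam*V + μ*Mloc)*(5*R/4) + lam*V
      = (P*(μ/lam) + 5*R*μ/4)*Mloc + (2*(μ/lam)*E*P)*M := by
    rw [hV_def, hA_def, hB_def, hP_def]
    field_simp
    ring
  have h1 : (P*(μ/lam) + 5*R*μ/4)*Mloc ≤ C*Mloc := by
    apply mul_le_mul_of_nonneg_right _ hMloc0
    rw [hC_def]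
    linarith
  have h2 : (2*(μ/lam)*E*P)*M ≤ ε*M := mul_le_mul_of_nonneg_right hεR' hM0
  linarith [habs, hξabs, hstep, hlamvx, key, h1, h2]
end
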